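/- arXiv:2412.09837 — 4 statements merged into one kernel-verified Lean document; each statement's English description precedes it below -/
import Mathlib

section
/- Let G and H be finite connected graphs. If u, u′ ∈ V(G) are such that u′ does not belong to the closed neighbourhood of u (i.e. u′ ≠ u and u′ is not adjacent to u), and v, v′ ∈ V(H) are such that v′ does not belong to the closed neighbourhood of v, then the set {(u,v),(u′,v′)} is a maximal monophonic position set of the Cartesian product G □ H (it is a monophonic position set and no proper superset of it is a monophonic position set). -/
open SimpleGraph

/-- A walk is *monophonic* if it is an induced path: it is a path and the only
edges of the graph between vertices of the walk are the edges of the walk. -/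
def SimpleGraph.Walk.IsMonophonic {V : Type*} {G : SimpleGraph V} {u v : V}
    (p : G.Walk u v) : Prop :=
  p.IsPath ∧ ∀ a b : V, a ∈ p.support → b ∈ p.support → G.Adj a b → p.toSubgraph.Adj a b

/-- A set `S` is a *monophonic position set* if no monophonic path contains
more than two vertices of `S`. -/
def SimpleGraph.IsMPSet {V : Type*} (G : SimpleGraph V) (S : Set V) : Prop :=
  ∀ ⦃u v : V⦄ (p : G.Walk u v), p.IsMonophonic → ({x ∈ S | x ∈ p.support}).ncard ≤ 2

/-- The *monophonic position number*: the largest cardinality of a monophonic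
position set. -/
noncomputable def SimpleGraph.mpNum {V : Type*} (G : SimpleGraph V) : ℕ :=
  sSup {n | ∃ S : Set V, G.IsMPSet S ∧ S.ncard = n}

section Aux

variable {V : Type*} {G : SimpleGraph V}

lemma aux_isMono_iff {a b : V} (p : G.Walk a b) :
    p.IsMonophonic ↔ p.IsPath ∧ ∀ c d : V, c ∈ p.support → d ∈ p.support → G.Adj c d →
      s(c, d) ∈ p.edges := by
  unfold SimpleGraph.Walk.IsMonophonic
  refine and_congr_right fun _ => ?_
  refine forall₂_congr fun c d => ?_
  refine imp_congr_right fun _ => imp_congr_right fun _ => imp_congr_right fun _ => ?_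
  rw [← SimpleGraph.Subgraph.mem_edgeSet, Walk.mem_edges_toSubgraph]

lemma aux_edge_of_len1 {a b : V} (p : G.Walk a b) (h : p.length = 1) : s(a, b) ∈ p.edges := by
  cases p with
  | nil => simp at h
  | cons hadj q =>
    have hq : q.length = 0 := by simp only [Walk.length_cons] at h; omega
    have := Walk.eq_of_length_eq_zero hq
    subst this
    simp

lemma aux_mono_of_geodesic {a b : V} (p : G.Walk a b) (hpath : p.IsPath)
    (hlen : p.length = G.dist a b) : p.IsMonophonic := by
  have aux : ∀ (c d : V) (q : G.Walk a c) (r : G.Walk c b),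
      (q.append r).length = G.dist a b → G.Adj c d → d ∈ r.support →
      s(c, d) ∈ (q.append r).edges := by
    intro c d q r hlen' hcd hd
    obtain ⟨r₁, r₂, rfl⟩ := Walk.mem_support_iff_exists_append.mp hd
    have h1 : G.dist a b ≤ (q.append (Walk.cons hcd r₂)).length := SimpleGraph.dist_le _
    have hr1 : r₁.length = 1 := by
      have hge : 1 ≤ r₁.length := by
        rcases Nat.eq_zero_or_pos r₁.length with h0 | h0
        · exact absurd (Walk.eq_of_length_eq_zero h0) hcd.ne
        · exact h0
      simp only [Walk.length_append, Walk.length_cons] at h1 hlen'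
      omega
    have hmem : s(c, d) ∈ r₁.edges := aux_edge_of_len1 r₁ hr1
    simp only [Walk.edges_append, List.mem_append]
    tauto
  rw [aux_isMono_iff]
  refine ⟨hpath, fun c d hc hd hcd => ?_⟩
  obtain ⟨q, r, hp⟩ := Walk.mem_support_iff_exists_append.mp hc
  subst hp
  rcases (Walk.mem_support_append_iff q r).mp hd with hdq | hdr
  · obtain ⟨q₁, q₂, hq⟩ := Walk.mem_support_iff_exists_append.mp hdq
    subst hq
    rw [← Walk.append_assoc] at hlen ⊢
    have h := aux d c q₁ (q₂.append r) hlen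
      hcd.symm ((Walk.mem_support_append_iff q₂ r).mpr (Or.inl q₂.end_mem_support))
    rw [Sym2.eq_swap]
    exact h
  · exact aux c d q r hlen hcd hdr

lemma aux_exists_mono (hG : G.Connected) (a b : V) : ∃ p : G.Walk a b, p.IsMonophonic := by
  classical
  obtain ⟨p₀, hp₀⟩ := hG.exists_walk_length_eq_dist a b
  refine ⟨p₀.bypass, aux_mono_of_geodesic _ p₀.bypass_isPath ?_⟩
  exact le_antisymm (hp₀ ▸ p₀.length_bypass_le) (SimpleGraph.dist_le _)

lemma aux_mono_reverse {a b : V} {p : G.Walk a b} (h : p.IsMonophonic) :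
    p.reverse.IsMonophonic := by
  rw [aux_isMono_iff] at h ⊢
  refine ⟨h.1.reverse, fun c d hc hd hcd => ?_⟩
  rw [Walk.support_reverse, List.mem_reverse] at hc hd
  rw [Walk.edges_reverse, List.mem_reverse]
  exact h.2 c d hc hd hcd

lemma aux_mono_append_left {a b c : V} {q : G.Walk a b} {r : G.Walk b c}
    (h : (q.append r).IsMonophonic) :
    q.IsMonophonic ∧ ∀ z, z ∈ q.support → z ∈ r.support → z = b := by
  rw [aux_isMono_iff] at h
  have hnd := h.1.support_nodup
  rw [Walk.support_append, List.nodup_append'] at hnd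
  obtain ⟨hnd1, hnd2, hdisj⟩ := hnd
  have hmid : ∀ z, z ∈ q.support → z ∈ r.support → z = b := by
    intro z hzq hzr
    by_contra hne
    have hz : z ∈ r.support.tail := by
      rw [r.support_eq_cons, List.mem_cons] at hzr
      exact hzr.resolve_left hne
    exact hdisj hzq hz
  refine ⟨?_, hmid⟩
  rw [aux_isMono_iff]
  refine ⟨Walk.IsPath.mk' hnd1, fun c' d' hc hd hcd => ?_⟩
  have h2 := h.2 c' d' ((Walk.mem_support_append_iff _ _).mpr (Or.inl hc))
      ((Walk.mem_support_append_iff _ _).mpr (Or.inl hd)) hcd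
  rw [Walk.edges_append, List.mem_append] at h2
  rcases h2 with h2 | h2
  · exact h2
  · have hc2 := hmid c' hc (r.fst_mem_support_of_mem_edges h2)
    have hd2 := hmid d' hd (r.snd_mem_support_of_mem_edges h2)
    subst hc2; subst hd2
    exact absurd hcd G.irrefl

lemma aux_mono_edgeWalk {a b : V} (h : G.Adj a b) :
    (Walk.cons h Walk.nil : G.Walk a b).IsMonophonic := by
  rw [aux_isMono_iff]
  constructor
  · simp [Walk.isPath_def, h.ne]
  · intro c d hc hd hcd
    simp only [Walk.support_cons, Walk.support_nil, List.mem_cons, List.mem_singleton,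
      List.not_mem_nil, or_false] at hc hd
    simp only [Walk.edges_cons, Walk.edges_nil, List.mem_singleton, List.mem_cons,
      List.not_mem_nil, or_false]
    rcases hc with rfl | rfl <;> rcases hd with rfl | rfl
    · exact absurd hcd G.irrefl
    · rfl
    · exact Sym2.eq_swap
    · exact absurd hcd G.irrefl

lemma aux_mono_map_iso {V' : Type*} {G' : SimpleGraph V'} (φ : G ≃g G') {a b : V}
    {p : G.Walk a b} (h : p.IsMonophonic) : (p.map φ.toHom).IsMonophonic := by
  rw [aux_isMono_iff] at h ⊢
  refine ⟨Walk.map_isPath_of_injective φ.toEquiv.injective h.1, fun c d hc hd hcd => ?_⟩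
  rw [Walk.support_map, List.mem_map] at hc hd
  obtain ⟨c₀, hc₀, rfl⟩ := hc
  obtain ⟨d₀, hd₀, rfl⟩ := hd
  have hadj0 : G.Adj c₀ d₀ := φ.map_adj_iff.mp hcd
  have := h.2 c₀ d₀ hc₀ hd₀ hadj0
  rw [Walk.edges_map, List.mem_map]
  exact ⟨s(c₀, d₀), this, Sym2.map_pair_eq _ _ _⟩

end Aux

section Gen

variable {α β : Type*} {G : SimpleGraph α} {H : SimpleGraph β}

/-- The graph homomorphism `H →g G □ H` given by a fixed column. -/
@[reducible] def colHom (G : SimpleGraph α) (H : SimpleGraph β) (c : α) : H →g G □ H where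
  toFun q := (c, q)
  map_rel' h := by simp [SimpleGraph.boxProd_adj, h]

/-- The graph homomorphism `G →g G □ H` given by a fixed row. -/
@[reducible] def rowHom (G : SimpleGraph α) (H : SimpleGraph β) (r : β) : G →g G □ H where
  toFun p := (p, r)
  map_rel' h := by simp [SimpleGraph.boxProd_adj, h]

@[simp] lemma colHom_apply (c : α) (q : β) : (colHom G H c) q = (c, q) := rfl
@[simp] lemma rowHom_apply (r : β) (p : α) : (rowHom G H r) p = (p, r) := rfl

lemma mem_edges_map_col {c : α} {s t : β} (W : H.Walk s t) {q q' : β}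
    (h : s(q, q') ∈ W.edges) :
    s(((c, q) : α × β), (c, q')) ∈ (W.map (colHom G H c)).edges := by
  rw [Walk.edges_map, List.mem_map]
  exact ⟨s(q, q'), h, by rw [Sym2.map_pair_eq]; rfl⟩

lemma mem_edges_map_row {r : β} {s t : α} (W : G.Walk s t) {p p' : α}
    (h : s(p, p') ∈ W.edges) :
    s(((p, r) : α × β), (p', r)) ∈ (W.map (rowHom G H r)).edges := by
  rw [Walk.edges_map, List.mem_map]
  exact ⟨s(p, p'), h, by rw [Sym2.map_pair_eq]; rfl⟩

lemma col_injective (c : α) : Function.Injective (colHom G H c) :=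
  fun a b h => congrArg Prod.snd h

lemma row_injective (r : β) : Function.Injective (rowHom G H r) :=
  fun a b h => congrArg Prod.fst h

lemma head_not_mem_tail_support {V' : Type*} {a b : V'} {G' : SimpleGraph V'} {p : G'.Walk a b}
    (hp : p.IsPath) : a ∉ p.support.tail := by
  have := hp.support_nodup
  rw [p.support_eq_cons] at this
  exact (List.nodup_cons.mp this).1

lemma gen3 {c₁ c₂ : α} {s₁ r₁ r₂ : β}
    (W1 : H.Walk s₁ r₁) (W2 : G.Walk c₁ c₂) (W3 : H.Walk r₁ r₂)
    (h1 : W1.IsMonophonic) (h2 : W2.IsMonophonic) (h3 : W3.IsMonophonic)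
    (hc : c₁ ≠ c₂)
    (h13 : G.Adj c₁ c₂ → ∀ q, q ∈ W1.support → q ∈ W3.support → q = r₁) :
    ∃ W : (G □ H).Walk (c₁, s₁) (c₂, r₂), W.IsMonophonic ∧
      ∀ p ∈ W2.support, (p, r₁) ∈ W.support := by
  obtain ⟨hp1, he1⟩ := (aux_isMono_iff W1).mp h1
  obtain ⟨hp2, he2⟩ := (aux_isMono_iff W2).mp h2
  obtain ⟨hp3, he3⟩ := (aux_isMono_iff W3).mp h3
  have hnodup : ((W1.map (colHom G H c₁)).append
      ((W2.map (rowHom G H r₁)).append (W3.map (colHom G H c₂)))).support.Nodup := by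
    rw [Walk.support_append, Walk.tail_support_append]
    have e1 : (W1.map (colHom G H c₁)).support
        = W1.support.map (fun q => ((c₁, q) : α × β)) := by
      rw [Walk.support_map]; rfl
    have e2 : (W2.map (rowHom G H r₁)).support.tail
        = W2.support.tail.map (fun p => ((p, r₁) : α × β)) := by
      rw [Walk.support_map, ← List.map_tail]; rfl
    have e3 : (W3.map (colHom G H c₂)).support.tail
        = W3.support.tail.map (fun q => ((c₂, q) : α × β)) := by
      rw [Walk.support_map, ← List.map_tail]; rfl
    rw [e1, e2, e3, List.nodup_append', List.nodup_append']
    refine ⟨?_, ⟨?_, ?_, ?_⟩, ?_⟩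
    · exact hp1.support_nodup.map (fun a b h => congrArg Prod.snd h)
    · exact (hp2.support_nodup.sublist (List.tail_sublist _)).map
        (fun a b h => congrArg Prod.fst h)
    · exact (hp3.support_nodup.sublist (List.tail_sublist _)).map
        (fun a b h => congrArg Prod.snd h)
    · intro A hA hB
      simp only [List.mem_map] at hA hB
      obtain ⟨p, hp, rfl⟩ := hA
      obtain ⟨q, hq, hEq⟩ := hB
      have h2' : q = r₁ := congrArg Prod.snd hEq
      subst h2'
      exact head_not_mem_tail_support hp3 hq
    · intro A hA hB
      simp only [List.mem_map] at hA
      obtain ⟨q, hq, rfl⟩ := hA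
      rw [List.mem_append] at hB
      rcases hB with hB | hB <;> simp only [List.mem_map] at hB
      · obtain ⟨p, hp, hEq⟩ := hB
        have h1' : p = c₁ := congrArg Prod.fst hEq
        subst h1'
        exact head_not_mem_tail_support hp2 hp
      · obtain ⟨q', hq', hEq⟩ := hB
        exact hc (congrArg Prod.fst hEq).symm
  have hchord : ∀ A B : α × β,
      A ∈ ((W1.map (colHom G H c₁)).append
        ((W2.map (rowHom G H r₁)).append (W3.map (colHom G H c₂)))).support →
      B ∈ ((W1.map (colHom G H c₁)).append
        ((W2.map (rowHom G H r₁)).append (W3.map (colHom G H c₂)))).support →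
      (G □ H).Adj A B →
      s(A, B) ∈ ((W1.map (colHom G H c₁)).append
        ((W2.map (rowHom G H r₁)).append (W3.map (colHom G H c₂)))).edges := by
    intro A B hA hB hadj
    have hmem : ∀ {e : Sym2 (α × β)},
        (e ∈ (W1.map (colHom G H c₁)).edges ∨ e ∈ (W2.map (rowHom G H r₁)).edges ∨
          e ∈ (W3.map (colHom G H c₂)).edges) →
        e ∈ ((W1.map (colHom G H c₁)).append
          ((W2.map (rowHom G H r₁)).append (W3.map (colHom G H c₂)))).edges := by
      intro e he
      simp only [Walk.edges_append, List.mem_append]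
      tauto
    rw [SimpleGraph.boxProd_adj] at hadj
    simp only [Walk.mem_support_append_iff, Walk.support_map, List.mem_map,
      colHom_apply, rowHom_apply] at hA hB
    rcases hA with ⟨q, hq, rfl⟩ | ⟨p, hp, rfl⟩ | ⟨q, hq, rfl⟩ <;>
      rcases hB with ⟨q', hq', rfl⟩ | ⟨p', hp', rfl⟩ | ⟨q', hq', rfl⟩
    · rcases hadj with ⟨h, _⟩ | ⟨h, _⟩
      · exact absurd h G.irrefl
      · exact hmem (Or.inl (mem_edges_map_col W1 (he1 q q' hq hq' h)))
    · rcases hadj with ⟨h, hy⟩ | ⟨h, hx⟩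
      · have : q = r₁ := hy
        subst this
        exact hmem (Or.inr (Or.inl (mem_edges_map_row W2
          (he2 c₁ p' W2.start_mem_support hp' h))))
      · have : c₁ = p' := hx
        subst this
        exact hmem (Or.inl (mem_edges_map_col W1
          (he1 q r₁ hq W1.end_mem_support h)))
    · rcases hadj with ⟨h, hy⟩ | ⟨h, hx⟩
      · have hq2 : q = q' := hy
        subst hq2
        have := h13 h q hq hq'
        subst this
        exact hmem (Or.inr (Or.inl (mem_edges_map_row W2
          (he2 c₁ c₂ W2.start_mem_support W2.end_mem_support h))))
      · exact absurd hx hc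
    · rcases hadj with ⟨h, hy⟩ | ⟨h, hx⟩
      · have : r₁ = q' := hy
        subst this
        exact hmem (Or.inr (Or.inl (mem_edges_map_row W2
          (he2 p c₁ hp W2.start_mem_support h))))
      · have : p = c₁ := hx
        subst this
        exact hmem (Or.inl (mem_edges_map_col W1
          (he1 r₁ q' W1.end_mem_support hq' h)))
    · rcases hadj with ⟨h, _⟩ | ⟨h, _⟩
      · exact hmem (Or.inr (Or.inl (mem_edges_map_row W2 (he2 p p' hp hp' h))))
      · exact absurd h H.irrefl
    · rcases hadj with ⟨h, hy⟩ | ⟨h, hx⟩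
      · have : r₁ = q' := hy
        subst this
        exact hmem (Or.inr (Or.inl (mem_edges_map_row W2
          (he2 p c₂ hp W2.end_mem_support h))))
      · have : p = c₂ := hx
        subst this
        exact hmem (Or.inr (Or.inr (mem_edges_map_col W3
          (he3 r₁ q' W3.start_mem_support hq' h))))
    · rcases hadj with ⟨h, hy⟩ | ⟨h, hx⟩
      · have hq2 : q = q' := hy
        subst hq2
        have := h13 h.symm q hq' hq
        subst this
        exact hmem (Or.inr (Or.inl (mem_edges_map_row W2
          (he2 c₂ c₁ W2.end_mem_support W2.start_mem_support h))))
      · exact absurd hx.symm hc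
    · rcases hadj with ⟨h, hy⟩ | ⟨h, hx⟩
      · have : q = r₁ := hy
        subst this
        exact hmem (Or.inr (Or.inl (mem_edges_map_row W2
          (he2 c₂ p' W2.end_mem_support hp' h))))
      · have : c₂ = p' := hx
        subst this
        exact hmem (Or.inr (Or.inr (mem_edges_map_col W3
          (he3 q r₁ hq W3.start_mem_support h))))
    · rcases hadj with ⟨h, _⟩ | ⟨h, _⟩
      · exact absurd h G.irrefl
      · exact hmem (Or.inr (Or.inr (mem_edges_map_col W3 (he3 q q' hq hq' h))))
  refine ⟨(W1.map (colHom G H c₁)).append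
      ((W2.map (rowHom G H r₁)).append (W3.map (colHom G H c₂))),
    (aux_isMono_iff _).mpr ⟨Walk.IsPath.mk' hnodup, hchord⟩, ?_⟩
  intro p hp
  rw [Walk.mem_support_append_iff, Walk.mem_support_append_iff]
  refine Or.inr (Or.inl ?_)
  rw [Walk.support_map, List.mem_map]
  exact ⟨p, hp, rfl⟩


lemma gen4 {c₁ c₂ c₃ : α} {s₁ r₁ r₂ : β}
    (W1 : H.Walk s₁ r₁) (W2 : G.Walk c₁ c₂) (W3 : H.Walk r₁ r₂) (W4 : G.Walk c₂ c₃)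
    (h1 : W1.IsMonophonic) (h2 : W2.IsMonophonic) (h3 : W3.IsMonophonic)
    (h4 : W4.IsMonophonic)
    (hc : c₁ ≠ c₂) (hr : r₁ ≠ r₂)
    (h13 : G.Adj c₁ c₂ → ∀ q, q ∈ W1.support → q ∈ W3.support → q = r₁)
    (h14a : r₂ ∉ W1.support) (h14b : c₁ ∉ W4.support)
    (h24 : H.Adj r₁ r₂ → ∀ p, p ∈ W2.support → p ∈ W4.support → p = c₂) :
    ∃ W : (G □ H).Walk (c₁, s₁) (c₃, r₂), W.IsMonophonic ∧ (c₂, r₁) ∈ W.support := by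
  obtain ⟨hp1, he1⟩ := (aux_isMono_iff W1).mp h1
  obtain ⟨hp2, he2⟩ := (aux_isMono_iff W2).mp h2
  obtain ⟨hp3, he3⟩ := (aux_isMono_iff W3).mp h3
  obtain ⟨hp4, he4⟩ := (aux_isMono_iff W4).mp h4
  have hnodup : ((W1.map (colHom G H c₁)).append ((W2.map (rowHom G H r₁)).append
      ((W3.map (colHom G H c₂)).append (W4.map (rowHom G H r₂))))).support.Nodup := by
    rw [Walk.support_append, Walk.tail_support_append, Walk.tail_support_append]
    have e1 : (W1.map (colHom G H c₁)).support
        = W1.support.map (fun q => ((c₁, q) : α × β)) := by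
      rw [Walk.support_map]; rfl
    have e2 : (W2.map (rowHom G H r₁)).support.tail
        = W2.support.tail.map (fun p => ((p, r₁) : α × β)) := by
      rw [Walk.support_map, ← List.map_tail]; rfl
    have e3 : (W3.map (colHom G H c₂)).support.tail
        = W3.support.tail.map (fun q => ((c₂, q) : α × β)) := by
      rw [Walk.support_map, ← List.map_tail]; rfl
    have e4 : (W4.map (rowHom G H r₂)).support.tail
        = W4.support.tail.map (fun p => ((p, r₂) : α × β)) := by
      rw [Walk.support_map, ← List.map_tail]; rfl
    rw [e1, e2, e3, e4, List.nodup_append', List.nodup_append', List.nodup_append']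
    refine ⟨?_, ⟨?_, ⟨?_, ?_, ?_⟩, ?_⟩, ?_⟩
    · exact hp1.support_nodup.map (fun a b h => congrArg Prod.snd h)
    · exact (hp2.support_nodup.sublist (List.tail_sublist _)).map
        (fun a b h => congrArg Prod.fst h)
    · exact (hp3.support_nodup.sublist (List.tail_sublist _)).map
        (fun a b h => congrArg Prod.snd h)
    · exact (hp4.support_nodup.sublist (List.tail_sublist _)).map
        (fun a b h => congrArg Prod.fst h)
    · -- L3.tail vs L4.tail
      intro A hA hB
      simp only [List.mem_map] at hA hB
      obtain ⟨q, hq, rfl⟩ := hA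
      obtain ⟨p, hp, hEq⟩ := hB
      have h1' : p = c₂ := congrArg Prod.fst hEq
      subst h1'
      exact head_not_mem_tail_support hp4 hp
    · -- L2.tail vs (L3.tail ++ L4.tail)
      intro A hA hB
      simp only [List.mem_map] at hA
      obtain ⟨p, hp, rfl⟩ := hA
      rw [List.mem_append] at hB
      rcases hB with hB | hB <;> simp only [List.mem_map] at hB
      · obtain ⟨q, hq, hEq⟩ := hB
        have h2' : q = r₁ := congrArg Prod.snd hEq
        subst h2'
        exact head_not_mem_tail_support hp3 hq
      · obtain ⟨p', hp', hEq⟩ := hB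
        have h2' : r₂ = r₁ := congrArg Prod.snd hEq
        exact hr h2'.symm
    · -- L1 vs rest
      intro A hA hB
      simp only [List.mem_map] at hA
      obtain ⟨q, hq, rfl⟩ := hA
      rw [List.mem_append] at hB
      rcases hB with hB | hB
      · simp only [List.mem_map] at hB
        obtain ⟨p, hp, hEq⟩ := hB
        have h1' : p = c₁ := congrArg Prod.fst hEq
        subst h1'
        exact head_not_mem_tail_support hp2 hp
      · rw [List.mem_append] at hB
        rcases hB with hB | hB <;> simp only [List.mem_map] at hB
        · obtain ⟨q', hq', hEq⟩ := hB
          exact hc (congrArg Prod.fst hEq).symm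
        · obtain ⟨p', hp', hEq⟩ := hB
          have h1' : p' = c₁ := congrArg Prod.fst hEq
          subst h1'
          exact h14b (List.mem_of_mem_tail hp')
  have hchord : ∀ A B : α × β,
      A ∈ ((W1.map (colHom G H c₁)).append ((W2.map (rowHom G H r₁)).append
        ((W3.map (colHom G H c₂)).append (W4.map (rowHom G H r₂))))).support →
      B ∈ ((W1.map (colHom G H c₁)).append ((W2.map (rowHom G H r₁)).append
        ((W3.map (colHom G H c₂)).append (W4.map (rowHom G H r₂))))).support →
      (G □ H).Adj A B →
      s(A, B) ∈ ((W1.map (colHom G H c₁)).append ((W2.map (rowHom G H r₁)).append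
        ((W3.map (colHom G H c₂)).append (W4.map (rowHom G H r₂))))).edges := by
    intro A B hA hB hadj
    have hmem : ∀ {e : Sym2 (α × β)},
        (e ∈ (W1.map (colHom G H c₁)).edges ∨ e ∈ (W2.map (rowHom G H r₁)).edges ∨
          e ∈ (W3.map (colHom G H c₂)).edges ∨ e ∈ (W4.map (rowHom G H r₂)).edges) →
        e ∈ ((W1.map (colHom G H c₁)).append ((W2.map (rowHom G H r₁)).append
          ((W3.map (colHom G H c₂)).append (W4.map (rowHom G H r₂))))).edges := by
      intro e he
      simp only [Walk.edges_append, List.mem_append]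
      tauto
    rw [SimpleGraph.boxProd_adj] at hadj
    simp only [Walk.mem_support_append_iff, Walk.support_map, List.mem_map,
      colHom_apply, rowHom_apply] at hA hB
    rcases hA with ⟨q, hq, rfl⟩ | ⟨p, hp, rfl⟩ | ⟨q, hq, rfl⟩ | ⟨p, hp, rfl⟩ <;>
      rcases hB with ⟨q', hq', rfl⟩ | ⟨p', hp', rfl⟩ | ⟨q', hq', rfl⟩ | ⟨p', hp', rfl⟩
    -- (1,1)
    · rcases hadj with ⟨h, _⟩ | ⟨h, _⟩
      · exact absurd h G.irrefl
      · exact hmem (Or.inl (mem_edges_map_col W1 (he1 q q' hq hq' h)))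
    -- (1,2)
    · rcases hadj with ⟨h, hy⟩ | ⟨h, hx⟩
      · have : q = r₁ := hy
        subst this
        exact hmem (Or.inr (Or.inl (mem_edges_map_row W2
          (he2 c₁ p' W2.start_mem_support hp' h))))
      · have : c₁ = p' := hx
        subst this
        exact hmem (Or.inl (mem_edges_map_col W1 (he1 q r₁ hq W1.end_mem_support h)))
    -- (1,3)
    · rcases hadj with ⟨h, hy⟩ | ⟨h, hx⟩
      · have hq2 : q = q' := hy
        subst hq2
        have := h13 h q hq hq'
        subst this
        exact hmem (Or.inr (Or.inl (mem_edges_map_row W2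
          (he2 c₁ c₂ W2.start_mem_support W2.end_mem_support h))))
      · exact absurd hx hc
    -- (1,4)
    · rcases hadj with ⟨h, hy⟩ | ⟨h, hx⟩
      · have : q = r₂ := hy
        subst this
        exact absurd hq h14a
      · have : c₁ = p' := hx
        subst this
        exact absurd hp' h14b
    -- (2,1)
    · rcases hadj with ⟨h, hy⟩ | ⟨h, hx⟩
      · have : r₁ = q' := hy
        subst this
        exact hmem (Or.inr (Or.inl (mem_edges_map_row W2
          (he2 p c₁ hp W2.start_mem_support h))))
      · have : p = c₁ := hx
        subst this
        exact hmem (Or.inl (mem_edges_map_col W1 (he1 r₁ q' W1.end_mem_support hq' h)))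
    -- (2,2)
    · rcases hadj with ⟨h, _⟩ | ⟨h, _⟩
      · exact hmem (Or.inr (Or.inl (mem_edges_map_row W2 (he2 p p' hp hp' h))))
      · exact absurd h H.irrefl
    -- (2,3)
    · rcases hadj with ⟨h, hy⟩ | ⟨h, hx⟩
      · have : r₁ = q' := hy
        subst this
        exact hmem (Or.inr (Or.inl (mem_edges_map_row W2
          (he2 p c₂ hp W2.end_mem_support h))))
      · have : p = c₂ := hx
        subst this
        exact hmem (Or.inr (Or.inr (Or.inl (mem_edges_map_col W3
          (he3 r₁ q' W3.start_mem_support hq' h)))))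
    -- (2,4)
    · rcases hadj with ⟨h, hy⟩ | ⟨h, hx⟩
      · have : r₁ = r₂ := hy
        exact absurd this hr
      · have hpp : p = p' := hx
        subst hpp
        have := h24 h p hp hp'
        subst this
        exact hmem (Or.inr (Or.inr (Or.inl (mem_edges_map_col W3
          (he3 r₁ r₂ W3.start_mem_support W3.end_mem_support h)))))
    -- (3,1)
    · rcases hadj with ⟨h, hy⟩ | ⟨h, hx⟩
      · have hq2 : q = q' := hy
        subst hq2
        have := h13 h.symm q hq' hq
        subst this
        exact hmem (Or.inr (Or.inl (mem_edges_map_row W2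
          (he2 c₂ c₁ W2.end_mem_support W2.start_mem_support h))))
      · exact absurd hx.symm hc
    -- (3,2)
    · rcases hadj with ⟨h, hy⟩ | ⟨h, hx⟩
      · have : q = r₁ := hy
        subst this
        exact hmem (Or.inr (Or.inl (mem_edges_map_row W2
          (he2 c₂ p' W2.end_mem_support hp' h))))
      · have : c₂ = p' := hx
        subst this
        exact hmem (Or.inr (Or.inr (Or.inl (mem_edges_map_col W3
          (he3 q r₁ hq W3.start_mem_support h)))))
    -- (3,3)
    · rcases hadj with ⟨h, _⟩ | ⟨h, _⟩
      · exact absurd h G.irrefl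
      · exact hmem (Or.inr (Or.inr (Or.inl (mem_edges_map_col W3 (he3 q q' hq hq' h)))))
    -- (3,4)
    · rcases hadj with ⟨h, hy⟩ | ⟨h, hx⟩
      · have : q = r₂ := hy
        subst this
        exact hmem (Or.inr (Or.inr (Or.inr (mem_edges_map_row W4
          (he4 c₂ p' W4.start_mem_support hp' h)))))
      · have : c₂ = p' := hx
        subst this
        exact hmem (Or.inr (Or.inr (Or.inl (mem_edges_map_col W3
          (he3 q r₂ hq W3.end_mem_support h)))))
    -- (4,1)
    · rcases hadj with ⟨h, hy⟩ | ⟨h, hx⟩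
      · have : r₂ = q' := hy
        rw [← this] at hq'
        exact absurd hq' h14a
      · have : p = c₁ := hx
        subst this
        exact absurd hp h14b
    -- (4,2)
    · rcases hadj with ⟨h, hy⟩ | ⟨h, hx⟩
      · have : r₂ = r₁ := hy
        exact absurd this.symm hr
      · have hpp : p = p' := hx
        subst hpp
        have := h24 h.symm p hp' hp
        subst this
        exact hmem (Or.inr (Or.inr (Or.inl (mem_edges_map_col W3
          (he3 r₂ r₁ W3.end_mem_support W3.start_mem_support h)))))
    -- (4,3)
    · rcases hadj with ⟨h, hy⟩ | ⟨h, hx⟩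
      · have : r₂ = q' := hy
        subst this
        exact hmem (Or.inr (Or.inr (Or.inr (mem_edges_map_row W4
          (he4 p c₂ hp W4.start_mem_support h)))))
      · have : p = c₂ := hx
        subst this
        exact hmem (Or.inr (Or.inr (Or.inl (mem_edges_map_col W3
          (he3 r₂ q' W3.end_mem_support hq' h)))))
    -- (4,4)
    · rcases hadj with ⟨h, _⟩ | ⟨h, _⟩
      · exact hmem (Or.inr (Or.inr (Or.inr (mem_edges_map_row W4 (he4 p p' hp hp' h)))))
      · exact absurd h H.irrefl
  refine ⟨(W1.map (colHom G H c₁)).append ((W2.map (rowHom G H r₁)).append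
      ((W3.map (colHom G H c₂)).append (W4.map (rowHom G H r₂)))),
    (aux_isMono_iff _).mpr ⟨Walk.IsPath.mk' hnodup, hchord⟩, ?_⟩
  rw [Walk.mem_support_append_iff, Walk.mem_support_append_iff,
    Walk.mem_support_append_iff]
  exact Or.inr (Or.inr (Or.inl (Walk.start_mem_support _)))

end Gen

section Key

variable {α β : Type*}

lemma aux_transfer {G : SimpleGraph α} {H : SimpleGraph β} {s t : β × α}
    (W : (H □ G).Walk s t) (h : W.IsMonophonic) :
    ∃ (s' t' : α × β) (W' : (G □ H).Walk s' t'), W'.IsMonophonic ∧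
      ∀ z : β × α, z ∈ W.support → (z.2, z.1) ∈ W'.support := by
  refine ⟨_, _, W.map (SimpleGraph.boxProdComm H G).toHom,
    aux_mono_map_iso (SimpleGraph.boxProdComm H G) h, ?_⟩
  intro z hz
  rw [Walk.support_map, List.mem_map]
  exact ⟨z, hz, rfl⟩

lemma key (G : SimpleGraph α) (H : SimpleGraph β)
    (hG : G.Connected) (hH : H.Connected)
    (u u' : α) (v v' : β) (hune : u' ≠ u) (huadj : ¬ G.Adj u u')
    (hvne : v' ≠ v) (hvadj : ¬ H.Adj v v') (x : α) (y : β) :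
    ∃ (s t : α × β) (W : (G □ H).Walk s t), W.IsMonophonic ∧
      (u, v) ∈ W.support ∧ (u', v') ∈ W.support ∧ (x, y) ∈ W.support := by
  by_cases hx : ∃ P : G.Walk u u', P.IsMonophonic ∧ x ∈ P.support
  · obtain ⟨P, hP, hxP⟩ := hx
    obtain ⟨Q1, hQ1⟩ := aux_exists_mono hH v y
    obtain ⟨Q2, hQ2⟩ := aux_exists_mono hH y v'
    obtain ⟨W, hW, hWsup⟩ := gen3 Q1 P Q2 hQ1 hP hQ2 (Ne.symm hune)
      (fun hadj => absurd hadj huadj)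
    exact ⟨_, _, W, hW, W.start_mem_support, W.end_mem_support, hWsup x hxP⟩
  by_cases hy : ∃ Q : H.Walk v v', Q.IsMonophonic ∧ y ∈ Q.support
  · obtain ⟨Q, hQ, hyQ⟩ := hy
    obtain ⟨P1, hP1⟩ := aux_exists_mono hG u x
    obtain ⟨P2, hP2⟩ := aux_exists_mono hG x u'
    obtain ⟨W0, hW0, hWsup⟩ := gen3 (G := H) (H := G) P1 Q P2 hP1 hQ hP2
      (Ne.symm hvne) (fun hadj => absurd hadj hvadj)
    obtain ⟨s', t', W, hW, htr⟩ := aux_transfer W0 hW0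
    exact ⟨_, _, W, hW, htr _ W0.start_mem_support, htr _ W0.end_mem_support,
      htr _ (hWsup y hyQ)⟩
  push_neg at hx hy
  obtain ⟨P2, hP2⟩ := aux_exists_mono hG u u'
  obtain ⟨Q2, hQ2⟩ := aux_exists_mono hH v v'
  have hxP2 : x ∉ P2.support := hx P2 hP2
  have hyQ2 : y ∉ Q2.support := hy Q2 hQ2
  have hxu : x ≠ u := fun h => hxP2 (h ▸ P2.start_mem_support)
  have hxu' : x ≠ u' := fun h => hxP2 (h ▸ P2.end_mem_support)
  have hyv : y ≠ v := fun h => hyQ2 (h ▸ Q2.start_mem_support)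
  have hyv' : y ≠ v' := fun h => hyQ2 (h ▸ Q2.end_mem_support)
  by_cases hadjxu : G.Adj x u
  · obtain ⟨Q1, hQ1⟩ := aux_exists_mono hH y v
    obtain ⟨W0, hW0, hmid⟩ := gen4 (G := H) (H := G)
      (Walk.cons hadjxu Walk.nil) Q1 P2 Q2
      (aux_mono_edgeWalk hadjxu) hQ1 hP2 hQ2
      hyv (Ne.symm hune)
      (by
        intro _ q hq hq3
        simp only [Walk.support_cons, Walk.support_nil, List.mem_cons,
          List.not_mem_nil, or_false] at hq
        rcases hq with rfl | rfl
        · exact absurd hq3 hxP2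
        · rfl)
      (by
        simp only [Walk.support_cons, Walk.support_nil, List.mem_cons,
          List.not_mem_nil, or_false, not_or]
        exact ⟨Ne.symm hxu', hune⟩)
      hyQ2
      (fun hadj => absurd hadj huadj)
    obtain ⟨s', t', W, hW, htr⟩ := aux_transfer W0 hW0
    exact ⟨_, _, W, hW, htr _ hmid, htr _ W0.end_mem_support,
      htr _ W0.start_mem_support⟩
  by_cases hadjxu' : G.Adj x u'
  · obtain ⟨Q1, hQ1⟩ := aux_exists_mono hH y v'
    obtain ⟨W0, hW0, hmid⟩ := gen4 (G := H) (H := G)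
      (Walk.cons hadjxu' Walk.nil) Q1 P2.reverse Q2.reverse
      (aux_mono_edgeWalk hadjxu') hQ1 (aux_mono_reverse hP2) (aux_mono_reverse hQ2)
      hyv' hune
      (by
        intro _ q hq hq3
        simp only [Walk.support_cons, Walk.support_nil, List.mem_cons,
          List.not_mem_nil, or_false] at hq
        rw [Walk.support_reverse, List.mem_reverse] at hq3
        rcases hq with rfl | rfl
        · exact absurd hq3 hxP2
        · rfl)
      (by
        simp only [Walk.support_cons, Walk.support_nil, List.mem_cons,
          List.not_mem_nil, or_false, not_or]
        exact ⟨Ne.symm hxu, fun h => hune h.symm⟩)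
      (by rw [Walk.support_reverse, List.mem_reverse]; exact hyQ2)
      (fun hadj => absurd hadj.symm huadj)
    obtain ⟨s', t', W, hW, htr⟩ := aux_transfer W0 hW0
    exact ⟨_, _, W, hW, htr _ W0.end_mem_support, htr _ hmid,
      htr _ W0.start_mem_support⟩
  by_cases hadjyv : H.Adj y v
  · obtain ⟨P1, hP1⟩ := aux_exists_mono hG x u
    obtain ⟨W, hW, hmid⟩ := gen4 (Walk.cons hadjyv Walk.nil) P1 Q2 P2
      (aux_mono_edgeWalk hadjyv) hP1 hQ2 hP2
      hxu (Ne.symm hvne)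
      (fun hadj => absurd hadj hadjxu)
      (by
        simp only [Walk.support_cons, Walk.support_nil, List.mem_cons,
          List.not_mem_nil, or_false, not_or]
        exact ⟨Ne.symm hyv', hvne⟩)
      hxP2
      (fun hadj => absurd hadj hvadj)
    exact ⟨_, _, W, hW, hmid, W.end_mem_support, W.start_mem_support⟩
  by_cases hadjyv' : H.Adj y v'
  · obtain ⟨P1, hP1⟩ := aux_exists_mono hG x u'
    obtain ⟨W, hW, hmid⟩ := gen4 (Walk.cons hadjyv' Walk.nil) P1 Q2.reverse P2.reverse
      (aux_mono_edgeWalk hadjyv') hP1 (aux_mono_reverse hQ2) (aux_mono_reverse hP2)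
      hxu' hvne
      (fun hadj => absurd hadj hadjxu')
      (by
        simp only [Walk.support_cons, Walk.support_nil, List.mem_cons,
          List.not_mem_nil, or_false, not_or]
        exact ⟨Ne.symm hyv, fun h => hvne h.symm⟩)
      (by rw [Walk.support_reverse, List.mem_reverse]; exact hxP2)
      (fun hadj => absurd hadj.symm hvadj)
    exact ⟨_, _, W, hW, W.end_mem_support, hmid, W.start_mem_support⟩
  obtain ⟨Q1₀, hQ1₀⟩ := aux_exists_mono hH y v
  by_cases hv'Q : v' ∈ Q1₀.support
  · obtain ⟨Qa, Qb, hQdec⟩ := Walk.mem_support_iff_exists_append.mp hv'Q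
    subst hQdec
    obtain ⟨hQa, hmidQ⟩ := aux_mono_append_left hQ1₀
    have hvQa : v ∉ Qa.support := by
      intro hv
      exact hvne (hmidQ v hv Qb.end_mem_support).symm
    obtain ⟨P1, hP1⟩ := aux_exists_mono hG x u'
    obtain ⟨W, hW, hmid⟩ := gen4 Qa P1 Q2.reverse P2.reverse
      hQa hP1 (aux_mono_reverse hQ2) (aux_mono_reverse hP2)
      hxu' hvne
      (fun hadj => absurd hadj hadjxu')
      hvQa
      (by rw [Walk.support_reverse, List.mem_reverse]; exact hxP2)
      (fun hadj => absurd hadj.symm hvadj)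
    exact ⟨_, _, W, hW, W.end_mem_support, hmid, W.start_mem_support⟩
  · obtain ⟨P1, hP1⟩ := aux_exists_mono hG x u
    obtain ⟨W, hW, hmid⟩ := gen4 Q1₀ P1 Q2 P2
      hQ1₀ hP1 hQ2 hP2
      hxu (Ne.symm hvne)
      (fun hadj => absurd hadj hadjxu)
      hv'Q
      hxP2
      (fun hadj => absurd hadj hvadj)
    exact ⟨_, _, W, hW, hmid, W.end_mem_support, W.start_mem_support⟩

end Key

/-- If `u' ∉ N_G[u]` and `v' ∉ N_H[v]`, then `{(u,v),(u',v')}` is a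
maximal monophonic position set of `G □ H`. -/
theorem maximal_mpSet_of_not_mem_closedNeighborhoods {α β : Type*} [Fintype α] [Fintype β]
    (G : SimpleGraph α) (H : SimpleGraph β) (hG : G.Connected) (hH : H.Connected)
    (u u' : α) (v v' : β) (hune : u' ≠ u) (huadj : ¬ G.Adj u u')
    (hvne : v' ≠ v) (hvadj : ¬ H.Adj v v') :
    (G □ H).IsMPSet {(u, v), (u', v')} ∧
      ∀ T : Set (α × β), (G □ H).IsMPSet T → {(u, v), (u', v')} ⊆ T →
        T = {(u, v), (u', v')} := by
  constructor
  · intro a b p hp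
    refine le_trans (Set.ncard_le_ncard (Set.sep_subset _ _) (Set.toFinite _)) ?_
    refine le_trans (Set.ncard_insert_le _ _) ?_
    simp
  · intro T hT hST
    refine Set.Subset.antisymm (fun w hwT => ?_) hST
    by_contra hwS
    obtain ⟨x, y⟩ := w
    obtain ⟨s, t, W, hW, hm1, hm2, hm3⟩ :=
      key G H hG hH u u' v v' hune huadj hvne hvadj x y
    have hb := hT W hW
    have hsub : ({(u, v), (u', v'), (x, y)} : Set (α × β)) ⊆ {z ∈ T | z ∈ W.support} := by
      rintro z (rfl | rfl | rfl)
      · exact ⟨hST (Set.mem_insert _ _), hm1⟩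
      · exact ⟨hST (Set.mem_insert_of_mem _ rfl), hm2⟩
      · exact ⟨hwT, hm3⟩
    have hne1 : ((u, v) : α × β) ≠ (u', v') := fun h => hune (congrArg Prod.fst h).symm
    have hne2 : ((u, v) : α × β) ≠ (x, y) := fun h => hwS (by rw [← h]; exact Set.mem_insert _ _)
    have hne3 : ((u', v') : α × β) ≠ (x, y) :=
      fun h => hwS (by rw [← h]; exact Set.mem_insert_of_mem _ rfl)
    have h3 : ({(u, v), (u', v'), (x, y)} : Set (α × β)).ncard = 3 := by
      rw [Set.ncard_insert_of_notMem (by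
          simp only [Set.mem_insert_iff, Set.mem_singleton_iff, not_or]
          exact ⟨hne1, hne2⟩) (Set.toFinite _),
        Set.ncard_insert_of_notMem (by
          simp only [Set.mem_singleton_iff]
          exact hne3) (Set.toFinite _),
        Set.ncard_singleton]
    have hle := Set.ncard_le_ncard hsub (Set.toFinite _)
    omega
end

section
/- If G and H are finite connected graphs, each with at least two vertices, then the lower monophonic position number of the Cartesian product satisfies mp⁻(G □ H) = 2, i.e. the smallest maximal monophonic position set of G □ H has exactly two vertices. -/
open SimpleGraph

/-- The *lower monophonic position number*: the smallest cardinality of a maximal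
monophonic position set. -/
noncomputable def SimpleGraph.lowerMpNum {V : Type*} (G : SimpleGraph V) : ℕ :=
  sInf {n | ∃ S : Set V,
    (G.IsMPSet S ∧ ∀ T : Set V, G.IsMPSet T → S ⊆ T → T = S) ∧ S.ncard = n}


section Helpers

variable {V : Type*}

/-- chord-free path predicate -/
def GoodWalk {G : SimpleGraph V} {u v : V} (p : G.Walk u v) : Prop :=
  p.IsPath ∧ ∀ x y : V, x ∈ p.support → y ∈ p.support → G.Adj x y → s(x, y) ∈ p.edges

lemma toSubgraph_adj_of_mem_edges {G : SimpleGraph V} {u v c d : V} (p : G.Walk u v)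
    (h : s(c, d) ∈ p.edges) : p.toSubgraph.Adj c d := by
  rw [← SimpleGraph.Subgraph.mem_edgeSet, p.mem_edges_toSubgraph]
  exact h

lemma GoodWalk.isMonophonic {G : SimpleGraph V} {u v : V} {p : G.Walk u v}
    (h : GoodWalk p) : p.IsMonophonic :=
  ⟨h.1, fun a b ha hb hab => toSubgraph_adj_of_mem_edges p (h.2 a b ha hb hab)⟩

/-- the graph with a vertex's edges removed -/
def del (G : SimpleGraph V) (x : V) : SimpleGraph V where
  Adj c d := G.Adj c d ∧ c ≠ x ∧ d ≠ x
  symm := ⟨fun c d h => ⟨h.1.symm, h.2.2, h.2.1⟩⟩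
  loopless := ⟨fun c h => G.loopless.irrefl c h.1⟩

lemma del_le (G : SimpleGraph V) (x : V) : del G x ≤ G := fun _ _ h => h.1

lemma not_reachable_del {G : SimpleGraph V} {x w : V} (hxw : x ≠ w) :
    ¬ (del G x).Reachable x w := by
  intro ⟨p⟩
  cases p with
  | nil => exact hxw rfl
  | cons h q => exact h.2.1 rfl

/-- induced path realization by induction on distance -/
lemma ind_path {G : SimpleGraph V} (g1 : V) :
    ∀ n a, G.Reachable a g1 → G.dist a g1 = n →
    ∃ p : G.Walk a g1, GoodWalk p ∧
      ∀ w ∈ p.support, G.Reachable w g1 ∧ (w = a ∨ G.dist w g1 < n) := by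
  intro n
  induction n using Nat.strong_induction_on with
  | _ n IH =>
  intro a hr hd
  match n, hd with
  | 0, hd =>
    have : a = g1 := (hr.dist_eq_zero_iff).mp hd
    subst this
    refine ⟨Walk.nil, ⟨Walk.IsPath.nil, ?_⟩, ?_⟩
    · intro x y hx hy hxy
      simp only [Walk.support_nil, List.mem_singleton] at hx hy
      subst hx; subst hy; exact (hxy.ne rfl).elim
    · intro w hw
      simp only [Walk.support_nil, List.mem_singleton] at hw
      subst hw; exact ⟨hr, Or.inl rfl⟩
  | (n+1), hd =>
    obtain ⟨W, hW⟩ := hr.exists_walk_length_eq_dist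
    rw [hd] at hW
    cases W with
    | nil => simp at hW
    | @cons _ w _ hadj q =>
      have hq : q.length = n := by simpa using hW
      have hrw : G.Reachable w g1 := ⟨q⟩
      have hdw : G.dist w g1 = n := by
        have h1 : G.dist w g1 ≤ n := hq ▸ SimpleGraph.dist_le q
        obtain ⟨q0, hq0⟩ := hrw.exists_walk_length_eq_dist
        have h2 : G.dist a g1 ≤ (Walk.cons hadj q0).length := SimpleGraph.dist_le _
        simp only [Walk.length_cons, hq0] at h2
        omega
      obtain ⟨p, ⟨hpath, hchord⟩, hsupp⟩ := IH n (Nat.lt_succ_self n) w hrw hdw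
      have hanotin : a ∉ p.support := by
        intro ha
        rcases (hsupp a ha).2 with h | h
        · subst h; exact G.loopless.irrefl a hadj
        · rw [hd] at h; omega
      refine ⟨Walk.cons hadj p, ⟨hpath.cons hanotin, ?_⟩, ?_⟩
      · intro x y hx hy hxy
        rw [Walk.support_cons, List.mem_cons] at hx hy
        have key : ∀ z, z ∈ p.support → G.Adj a z → z = w := by
          intro z hz haz
          rcases (hsupp z hz).2 with h | h
          · exact h
          · exfalso
            obtain ⟨q1, hq1⟩ := (hsupp z hz).1.exists_walk_length_eq_dist
            have : G.dist a g1 ≤ (Walk.cons haz q1).length := SimpleGraph.dist_le _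
            simp only [Walk.length_cons, hq1] at this
            omega
        rcases hx with rfl | hx
        · rcases hy with rfl | hy
          · exact (hxy.ne rfl).elim
          · have := key y hy hxy
            subst this
            simp [Walk.edges_cons]
        · rcases hy with rfl | hy
          · have := key x hx hxy.symm
            subst this
            simp [Walk.edges_cons, Sym2.eq_swap]
          · rw [Walk.edges_cons, List.mem_cons]
            exact Or.inr (hchord x y hx hy hxy)
      · intro z hz
        rw [Walk.support_cons, List.mem_cons] at hz
        rcases hz with rfl | hz
        · exact ⟨hr, Or.inl rfl⟩
        · refine ⟨(hsupp z hz).1, Or.inr ?_⟩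
          rcases (hsupp z hz).2 with h | h
          · subst h; omega
          · omega

/-- Key graph-theoretic lemma: a non-cut vertex `g2` together with a neighbour `g1`,
such that every `a ≠ g2` has an induced path to `g1` avoiding `g2`. -/
lemma exists_good_pair (G : SimpleGraph V) [Fintype V] (hG : G.Connected)
    (hcard : 2 ≤ Fintype.card V) :
    ∃ g1 g2, G.Adj g1 g2 ∧ ∀ a, a ≠ g2 →
      ∃ p : G.Walk a g1, GoodWalk p ∧ g2 ∉ p.support := by
  haveI hne : Nonempty V := hG.nonempty
  obtain ⟨r⟩ := id hne
  obtain ⟨g2, hmax⟩ := Finite.exists_max (G.dist r)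
  -- g2 is at positive distance
  obtain ⟨v, hv⟩ := Fintype.exists_ne_of_one_lt_card (by omega) r
  have hvpos : 0 < G.dist r v := (hG.preconnected r v).pos_dist_of_ne (Ne.symm hv)
  have hg2pos : 0 < G.dist r g2 := lt_of_lt_of_le hvpos (hmax v)
  have hg2r : g2 ≠ r := by
    intro h; rw [h, SimpleGraph.dist_self] at hg2pos; omega
  -- a neighbour g1 of g2
  obtain ⟨W, hW⟩ := (hG.preconnected g2 r).exists_walk_length_eq_dist
  obtain ⟨g1, hadj, -⟩ : ∃ w, G.Adj g2 w ∧ True := by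
    cases W with
    | nil => exact absurd rfl hg2r
    | cons h q => exact ⟨_, h, trivial⟩
  have hg1g2 : g1 ≠ g2 := hadj.ne'
  -- reachability in the deleted graph
  have key : ∀ n a, G.dist r a = n → a ≠ g2 → (del G g2).Reachable a r := by
    intro n
    induction n using Nat.strong_induction_on with
    | _ n IH =>
    intro a hd ha
    by_cases har : a = r
    · subst har; exact Reachable.refl _
    · have hpos : 0 < G.dist r a := (hG.preconnected r a).pos_dist_of_ne (Ne.symm har)
      obtain ⟨P, hP⟩ := (hG.preconnected a r).exists_walk_length_eq_dist
      cases P with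
      | nil => exact absurd rfl har
      | @cons _ w _ h q =>
        have hdw : G.dist r w < G.dist r a := by
          have h1 : G.dist w r ≤ q.length := SimpleGraph.dist_le q
          have hP' : q.length + 1 = G.dist a r := by simpa using hP
          have e1 : G.dist r w = G.dist w r := SimpleGraph.dist_comm
          have e2 : G.dist r a = G.dist a r := SimpleGraph.dist_comm
          omega
        have hwg2 : w ≠ g2 := by
          intro hw; subst hw
          have := hmax a
          rw [hd] at *
          omega
        have hDadj : (del G g2).Adj a w := ⟨h, ha, hwg2⟩
        subst hd
        exact (hDadj.reachable).trans (IH _ hdw w rfl hwg2)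
  refine ⟨g1, g2, hadj.symm, ?_⟩
  intro a ha
  have hreach : (del G g2).Reachable a g1 :=
    (key _ a rfl ha).trans (key _ g1 rfl hg1g2).symm
  obtain ⟨p, ⟨hpath, hchord⟩, hsupp⟩ := ind_path g1 ((del G g2).dist a g1) a hreach rfl
  have hg2notin : g2 ∉ p.support := by
    intro h
    exact not_reachable_del hg1g2.symm ((hsupp g2 h).1)
  -- transfer to G
  refine ⟨p.mapLe (del_le G g2), ?_, ?_⟩
  · have hsupp_eq : (p.mapLe (del_le G g2)).support = p.support := by
      rw [Walk.mapLe, Walk.support_map]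
      have hid : ⇑(Hom.ofLE (del_le G g2)) = id := rfl
      rw [hid, List.map_id]
    have hedges_eq : (p.mapLe (del_le G g2)).edges = p.edges := by
      rw [Walk.mapLe, Walk.edges_map]
      have hid : ⇑(Hom.ofLE (del_le G g2)) = id := rfl
      rw [hid]
      simp [Sym2.map_id]
    refine ⟨hpath.mapLe _, ?_⟩
    intro x y hx hy hxy
    rw [hsupp_eq] at hx hy
    rw [hedges_eq]
    have hxg2 : x ≠ g2 := fun h => hg2notin (h ▸ hx)
    have hyg2 : y ≠ g2 := fun h => hg2notin (h ▸ hy)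
    exact hchord x y hx hy ⟨hxy, hxg2, hyg2⟩
  · intro h
    have hsupp_eq : (p.mapLe (del_le G g2)).support = p.support := by
      rw [Walk.mapLe, Walk.support_map]
      have hid : ⇑(Hom.ofLE (del_le G g2)) = id := rfl
      rw [hid, List.map_id]
    rw [hsupp_eq] at h
    exact hg2notin h

section Prod
variable {α β : Type*} {G : SimpleGraph α} {H : SimpleGraph β}

/-- Row walk: a `G`-walk at fixed height `b`. -/
abbrev rowWalk {a c : α} (b : β) (p : G.Walk a c) : (G □ H).Walk (a, b) (c, b) :=
  Walk.boxProdLeft (H := H) b p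

/-- Column walk: an `H`-walk at fixed column `a`. -/
abbrev colWalk {b c : β} (a : α) (q : H.Walk b c) : (G □ H).Walk (a, b) (a, c) :=
  Walk.boxProdRight G a q

lemma support_rowWalk {a c : α} (b : β) (p : G.Walk a c) :
    (rowWalk (H := H) b p).support = p.support.map (fun g => (g, b)) := by
  show (Walk.map _ p).support = _
  rw [Walk.support_map]
  rfl

lemma edges_rowWalk {a c : α} (b : β) (p : G.Walk a c) :
    (rowWalk (H := H) b p).edges = p.edges.map (Sym2.map (fun g => (g, b))) := by
  show (Walk.map _ p).edges = _
  rw [Walk.edges_map]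
  rfl

lemma support_colWalk {b c : β} (a : α) (q : H.Walk b c) :
    (colWalk (G := G) a q).support = q.support.map (fun h => (a, h)) := by
  show (Walk.map _ q).support = _
  rw [Walk.support_map]
  rfl

lemma edges_colWalk {b c : β} (a : α) (q : H.Walk b c) :
    (colWalk (G := G) a q).edges = q.edges.map (Sym2.map (fun h => (a, h))) := by
  show (Walk.map _ q).edges = _
  rw [Walk.edges_map]
  rfl

variable {g1 g2 : α} {h1 h2 : β}

/-- Construction for z = (g2, h1): the path x — u — y. -/
lemma con_u (hg : G.Adj g1 g2) (hh : H.Adj h1 h2) :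
    ∃ (s t : α × β) (W : (G □ H).Walk s t), GoodWalk W ∧
      (g1, h1) ∈ W.support ∧ (g2, h1) ∈ W.support ∧ (g2, h2) ∈ W.support := by
  have hgn : g1 ≠ g2 := hg.ne
  have hhn : h1 ≠ h2 := hh.ne
  have hgn' : g2 ≠ g1 := hg.ne'
  have hhn' : h2 ≠ h1 := hh.ne'
  have e1 : (G □ H).Adj (g1, h1) (g2, h1) := by simp [hg]
  have e2 : (G □ H).Adj (g2, h1) (g2, h2) := by simp [hh]
  refine ⟨_, _, Walk.cons e1 (Walk.cons e2 Walk.nil), ⟨?_, ?_⟩, ?_, ?_, ?_⟩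
  · simp [Walk.isPath_def, hgn, hhn]
  · rintro x y hx hy hxy
    simp only [Walk.support_cons, Walk.support_nil, List.mem_cons,
      List.mem_singleton, List.not_mem_nil, or_false] at hx hy
    rcases hx with rfl | rfl | rfl <;> rcases hy with rfl | rfl | rfl <;>
      simp_all [Walk.edges_cons, boxProd_adj, Sym2.eq_swap]
  · simp
  · simp
  · simp

/-- Case a = g2, b ~ h1, b ≁ h2 : the path z — (g1,b) — x — v — y. -/
lemma con_3b {b : β} (hg : G.Adj g1 g2) (hh : H.Adj h1 h2)
    (hb1 : H.Adj b h1) (hnb2 : ¬ H.Adj b h2) (hbh2 : b ≠ h2) :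
    ∃ (s t : α × β) (W : (G □ H).Walk s t), GoodWalk W ∧
      (g1, h1) ∈ W.support ∧ (g2, b) ∈ W.support ∧ (g2, h2) ∈ W.support := by
  have hgn : g1 ≠ g2 := hg.ne
  have hhn : h1 ≠ h2 := hh.ne
  have hgn' : g2 ≠ g1 := hg.ne'
  have hhn' : h2 ≠ h1 := hh.ne'
  have hbh1 : b ≠ h1 := hb1.ne
  have hbh1' : h1 ≠ b := hb1.ne'
  have hbh2' : h2 ≠ b := hbh2.symm
  have hnb2' : ¬ H.Adj h2 b := fun h => hnb2 h.symm
  have e1 : (G □ H).Adj (g2, b) (g1, b) := by simp [hg.symm]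
  have e2 : (G □ H).Adj (g1, b) (g1, h1) := by simp [hb1]
  have e3 : (G □ H).Adj (g1, h1) (g1, h2) := by simp [hh]
  have e4 : (G □ H).Adj (g1, h2) (g2, h2) := by simp [hg]
  refine ⟨_, _, Walk.cons e1 (Walk.cons e2 (Walk.cons e3 (Walk.cons e4 Walk.nil))),
    ⟨?_, ?_⟩, ?_, ?_, ?_⟩
  · simp [Walk.isPath_def, hgn, hhn, hgn', hhn', hbh1, hbh2]
  · rintro x y hx hy hxy
    simp only [Walk.support_cons, Walk.support_nil, List.mem_cons,
      List.mem_singleton, List.not_mem_nil, or_false] at hx hy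
    rcases hx with rfl | rfl | rfl | rfl | rfl <;> rcases hy with rfl | rfl | rfl | rfl | rfl <;>
      simp_all [Walk.edges_cons, boxProd_adj, Sym2.eq_swap]
  · simp
  · simp
  · simp

/-- Case b = h1, a ∉ {g1, g2} : z=(a,h1) —row— x — v — y. -/
lemma con_C3T {a : α} (hg : G.Adj g1 g2) (hh : H.Adj h1 h2)
    (p : G.Walk a g1) (hp : GoodWalk p) (hg2p : g2 ∉ p.support) :
    ∃ (s t : α × β) (W : (G □ H).Walk s t), GoodWalk W ∧
      (g1, h1) ∈ W.support ∧ (a, h1) ∈ W.support ∧ (g2, h2) ∈ W.support := by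
  have hgn : g1 ≠ g2 := hg.ne
  have hhn : h1 ≠ h2 := hh.ne
  have e3 : (G □ H).Adj (g1, h1) (g1, h2) := by simp [hh]
  have e4 : (G □ H).Adj (g1, h2) (g2, h2) := by simp [hg]
  set W : (G □ H).Walk (a, h1) (g2, h2) :=
    (rowWalk h1 p).append (Walk.cons e3 (Walk.cons e4 Walk.nil)) with hW
  have hsupp : W.support = p.support.map (fun g => (g, h1)) ++ [(g1, h2), (g2, h2)] := by
    rw [hW, Walk.support_append, support_rowWalk]
    simp
  have hedges : W.edges
      = p.edges.map (Sym2.map (fun g => (g, h1))) ++ [s((g1,h1),(g1,h2)), s((g1,h2),(g2,h2))] := by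
    rw [hW, Walk.edges_append, edges_rowWalk]
    simp
  refine ⟨_, _, W, ⟨?_, ?_⟩, ?_, ?_, ?_⟩
  · rw [Walk.isPath_def, hsupp]
    rw [List.nodup_append]
    refine ⟨List.Nodup.map (fun u v huv => congrArg Prod.fst huv) hp.1.support_nodup, ?_, ?_⟩
    · simp [hgn]
    · intro w hw
      simp only [List.mem_map] at hw
      obtain ⟨c, hc, rfl⟩ := hw
      simp [hhn]
  · rintro x y hx hy hxy
    rw [hsupp] at hx hy
    simp only [List.mem_append, List.mem_map, List.mem_cons, List.mem_singleton,
      List.not_mem_nil, or_false] at hx hy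
    have hmem : ∀ c d, c ∈ p.support → d ∈ p.support → G.Adj c d →
        s((c, h1), (d, h1)) ∈ W.edges := by
      intro c d hc hd hcd
      rw [hedges, List.mem_append]
      left
      rw [List.mem_map]
      exact ⟨s(c, d), hp.2 c d hc hd hcd, Sym2.map_pair_eq ..⟩
    rcases hx with ⟨c, hc, rfl⟩ | rfl | rfl <;> rcases hy with ⟨d, hd, rfl⟩ | rfl | rfl
    · -- row/row
      rw [boxProd_adj] at hxy
      rcases hxy with ⟨hcd, -⟩ | ⟨hbad, -⟩
      · exact hmem c d hc hd hcd
      · exact absurd hbad (H.loopless.irrefl h1)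
    · -- row / v
      rw [boxProd_adj] at hxy
      rcases hxy with ⟨-, hbad⟩ | ⟨-, rfl⟩
      · exact absurd hbad hhn
      · rw [hedges]; simp
    · -- row / y
      rw [boxProd_adj] at hxy
      rcases hxy with ⟨-, hbad⟩ | ⟨-, rfl⟩
      · exact absurd hbad hhn
      · exact absurd hc hg2p
    · -- v / row
      rw [boxProd_adj] at hxy
      rcases hxy with ⟨-, hbad⟩ | ⟨hbad2, rfl⟩
      · exact absurd hbad hhn.symm
      · rw [hedges]; simp [Sym2.eq_swap]
    · exact absurd hxy ((G □ H).loopless.irrefl _)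
    · rw [hedges]; simp
    · -- y / row
      rw [boxProd_adj] at hxy
      rcases hxy with ⟨-, hbad⟩ | ⟨-, rfl⟩
      · exact absurd hbad hhn.symm
      · exact absurd hd hg2p
    · rw [hedges]; simp [Sym2.eq_swap]
    · exact absurd hxy ((G □ H).loopless.irrefl _)
  · rw [hsupp]
    simp only [List.mem_append, List.mem_map]
    exact Or.inl ⟨g1, p.end_mem_support, rfl⟩
  · rw [hsupp]
    simp only [List.mem_append, List.mem_map]
    exact Or.inl ⟨a, p.start_mem_support, rfl⟩
  · rw [hsupp]
    simp

/-- Case a ≠ g2, b ∉ {h1, h2} : z —row at b— (g1,b) —col at g1— x — u — y. -/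
lemma con_C3 {a : α} {b : β} (hg : G.Adj g1 g2) (hh : H.Adj h1 h2)
    (p : G.Walk a g1) (hp : GoodWalk p) (hg2p : g2 ∉ p.support)
    (q : H.Walk b h1) (hq : GoodWalk q) (hh2q : h2 ∉ q.support)
    (hb1 : b ≠ h1) (hb2 : b ≠ h2) :
    ∃ (s t : α × β) (W : (G □ H).Walk s t), GoodWalk W ∧
      (g1, h1) ∈ W.support ∧ (a, b) ∈ W.support ∧ (g2, h2) ∈ W.support := by
  have hgn : g1 ≠ g2 := hg.ne
  have hhn : h1 ≠ h2 := hh.ne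
  have e5 : (G □ H).Adj (g1, h1) (g2, h1) := by simp [hg]
  have e6 : (G □ H).Adj (g2, h1) (g2, h2) := by simp [hh]
  set inner : (G □ H).Walk (g1, b) (g2, h2) :=
    (colWalk g1 q).append (Walk.cons e5 (Walk.cons e6 Walk.nil)) with hinner
  set W : (G □ H).Walk (a, b) (g2, h2) := (rowWalk b p).append inner with hW
  have hbq : b ∉ q.support.tail := by
    have := hq.1.support_nodup
    rw [q.support_eq_cons] at this
    exact (List.nodup_cons.mp this).1
  have hsupp : W.support = p.support.map (fun g => (g, b))
      ++ (q.support.tail.map (fun h => (g1, h)) ++ [(g2, h1), (g2, h2)]) := by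
    rw [hW, Walk.support_append, hinner, Walk.tail_support_append, support_rowWalk,
      support_colWalk]
    conv_lhs => rw [q.support_eq_cons]
    simp
  have hedges : W.edges = p.edges.map (Sym2.map (fun g => (g, b)))
      ++ (q.edges.map (Sym2.map (fun h => (g1, h)))
        ++ [s((g1,h1),(g2,h1)), s((g2,h1),(g2,h2))]) := by
    rw [hW, Walk.edges_append, hinner, Walk.edges_append, edges_rowWalk, edges_colWalk]
    simp
  have hchar : ∀ x, x ∈ W.support → (∃ c ∈ p.support, x = (c, b)) ∨
      (∃ d ∈ q.support, x = (g1, d)) ∨ x = (g2, h1) ∨ x = (g2, h2) := by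
    intro x hx
    rw [hsupp] at hx
    simp only [List.mem_append, List.mem_map, List.mem_cons, List.mem_singleton,
      List.not_mem_nil, or_false] at hx
    rcases hx with ⟨c, hc, rfl⟩ | ⟨d, hd, rfl⟩ | rfl | rfl
    · exact Or.inl ⟨c, hc, rfl⟩
    · exact Or.inr (Or.inl ⟨d, List.mem_of_mem_tail hd, rfl⟩)
    · exact Or.inr (Or.inr (Or.inl rfl))
    · exact Or.inr (Or.inr (Or.inr rfl))
  have hmemR : ∀ c d, c ∈ p.support → d ∈ p.support → G.Adj c d →
      s((c, b), (d, b)) ∈ W.edges := by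
    intro c d hc hd hcd
    rw [hedges, List.mem_append]
    exact Or.inl (List.mem_map.mpr ⟨s(c, d), hp.2 c d hc hd hcd, Sym2.map_pair_eq ..⟩)
  have hmemC : ∀ c d, c ∈ q.support → d ∈ q.support → H.Adj c d →
      s((g1, c), (g1, d)) ∈ W.edges := by
    intro c d hc hd hcd
    rw [hedges, List.mem_append, List.mem_append]
    exact Or.inr (Or.inl (List.mem_map.mpr ⟨s(c, d), hq.2 c d hc hd hcd, Sym2.map_pair_eq ..⟩))
  have hpg2 : ∀ c, c ∈ p.support → c ≠ g2 := fun c hc h => hg2p (h ▸ hc)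
  have hqh2 : ∀ d, d ∈ q.support → d ≠ h2 := fun d hd h => hh2q (h ▸ hd)
  refine ⟨_, _, W, ⟨?_, ?_⟩, ?_, ?_, ?_⟩
  · -- IsPath
    rw [Walk.isPath_def, hsupp, List.nodup_append', List.nodup_append']
    refine ⟨List.Nodup.map (fun u v huv => congrArg Prod.fst huv) hp.1.support_nodup,
      ⟨List.Nodup.map (fun u v huv => congrArg Prod.snd huv)
        ((List.nodup_cons.mp (q.support_eq_cons ▸ hq.1.support_nodup)).2), ?_, ?_⟩, ?_⟩
    · simp [hgn, hhn]
    · intro w hw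
      simp only [List.mem_map] at hw
      obtain ⟨d, hd, rfl⟩ := hw
      have hd2 := hqh2 d (List.mem_of_mem_tail hd)
      intro hmem
      simp only [List.mem_cons, List.mem_singleton, List.not_mem_nil, or_false] at hmem
      rcases hmem with h | h
      · exact hgn (congrArg Prod.fst h)
      · exact hd2 (congrArg Prod.snd h)
    · intro w hw
      simp only [List.mem_map] at hw
      obtain ⟨c, hc, rfl⟩ := hw
      have hcg2 := hpg2 c hc
      intro hmem
      simp only [List.mem_append, List.mem_map, List.mem_cons, List.mem_singleton,
        List.not_mem_nil, or_false] at hmem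
      rcases hmem with ⟨d, hd, h⟩ | h | h
      · have hdb : d = b := congrArg Prod.snd h
        exact hbq (hdb ▸ hd)
      · exact hcg2 (congrArg Prod.fst h)
      · exact hcg2 (congrArg Prod.fst h)
  · -- chords
    rintro x y hx hy hxy
    rcases hchar x hx with ⟨c, hc, rfl⟩ | ⟨d, hd, rfl⟩ | rfl | rfl <;>
      rcases hchar y hy with ⟨c', hc', rfl⟩ | ⟨d', hd', rfl⟩ | rfl | rfl <;>
      rw [boxProd_adj] at hxy
    · rcases hxy with ⟨h', -⟩ | ⟨h', rfl⟩
      · exact hmemR _ _ hc hc' h'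
      · exact absurd h' (H.loopless.irrefl b)
    · rcases hxy with ⟨h', rfl⟩ | ⟨h', rfl⟩
      · exact hmemR _ _ hc p.end_mem_support h'
      · exact hmemC _ _ q.start_mem_support hd' h'
    · rcases hxy with ⟨-, h'⟩ | ⟨-, h'⟩
      · exact absurd h' hb1
      · exact absurd h' (hpg2 c hc)
    · rcases hxy with ⟨-, h'⟩ | ⟨-, h'⟩
      · exact absurd h' hb2
      · exact absurd h' (hpg2 c hc)
    · rcases hxy with ⟨h', rfl⟩ | ⟨h', rfl⟩
      · exact hmemR _ _ p.end_mem_support hc' h'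
      · exact hmemC _ _ hd q.start_mem_support h'
    · rcases hxy with ⟨h', -⟩ | ⟨h', -⟩
      · exact absurd h' (G.loopless.irrefl g1)
      · exact hmemC _ _ hd hd' h'
    · rcases hxy with ⟨-, h'⟩ | ⟨-, h'⟩
      · -- (g1,d) ~ (g2,h1) with d = h1 : consecutive edge
        subst h'
        rw [hedges]
        simp
      · exact absurd h' hgn
    · rcases hxy with ⟨-, h'⟩ | ⟨-, h'⟩
      · exact absurd h' (hqh2 d hd)
      · exact absurd h' hgn
    · rcases hxy with ⟨-, h'⟩ | ⟨-, h'⟩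
      · exact absurd h'.symm hb1
      · exact absurd h'.symm (hpg2 c' hc')
    · rcases hxy with ⟨-, h'⟩ | ⟨-, h'⟩
      · subst h'
        rw [hedges]
        simp [Sym2.eq_swap]
      · exact absurd h'.symm hgn
    · rcases hxy with ⟨h', -⟩ | ⟨h', -⟩
      · exact absurd h' (G.loopless.irrefl _)
      · exact absurd h' (H.loopless.irrefl _)
    · rw [hedges]; simp
    · rcases hxy with ⟨-, h'⟩ | ⟨-, h'⟩
      · exact absurd h'.symm hb2
      · exact absurd h'.symm (hpg2 c' hc')
    · rcases hxy with ⟨-, h'⟩ | ⟨-, h'⟩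
      · exact absurd h'.symm (hqh2 d' hd')
      · exact absurd h'.symm hgn
    · rw [hedges]; simp [Sym2.eq_swap]
    · rcases hxy with ⟨h', -⟩ | ⟨h', -⟩
      · exact absurd h' (G.loopless.irrefl _)
      · exact absurd h' (H.loopless.irrefl _)
  · -- x in support
    have : (g1, h1) ∈ inner.support := by
      apply Walk.subset_support_append_left
      rw [support_colWalk]
      exact List.mem_map.mpr ⟨h1, q.end_mem_support, rfl⟩
    rw [hW]
    exact Walk.subset_support_append_right _ _ this
  · exact Walk.start_mem_support W
  · exact Walk.end_mem_support W

/-- Case a = g2, b ~ h2, b ∉ {h1,h2} : y — z — (g1,b) —col— x. -/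
lemma con_3a {b : β} (hg : G.Adj g1 g2) (hh : H.Adj h1 h2) (hb2 : H.Adj b h2)
    (q : H.Walk b h1) (hq : GoodWalk q) (hh2q : h2 ∉ q.support) :
    ∃ (s t : α × β) (W : (G □ H).Walk s t), GoodWalk W ∧
      (g1, h1) ∈ W.support ∧ (g2, b) ∈ W.support ∧ (g2, h2) ∈ W.support := by
  have hgn : g1 ≠ g2 := hg.ne
  have hgn' : g2 ≠ g1 := hg.ne'
  have hbh2 : b ≠ h2 := hb2.ne
  have hqh2 : ∀ d, d ∈ q.support → d ≠ h2 := fun d hd h => hh2q (h ▸ hd)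
  have e0 : (G □ H).Adj (g2, h2) (g2, b) := by simp [hb2.symm]
  have e1 : (G □ H).Adj (g2, b) (g1, b) := by simp [hg.symm]
  set W : (G □ H).Walk (g2, h2) (g1, h1) :=
    Walk.cons e0 (Walk.cons e1 (colWalk g1 q)) with hW
  have hsupp : W.support = (g2, h2) :: (g2, b) :: q.support.map (fun h => (g1, h)) := by
    rw [hW, Walk.support_cons, Walk.support_cons, support_colWalk]
  have hedges : W.edges = s((g2,h2),(g2,b)) :: s((g2,b),(g1,b))
      :: q.edges.map (Sym2.map (fun h => (g1, h))) := by
    rw [hW, Walk.edges_cons, Walk.edges_cons, edges_colWalk]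
  have hmemC : ∀ c d, c ∈ q.support → d ∈ q.support → H.Adj c d →
      s((g1, c), (g1, d)) ∈ W.edges := by
    intro c d hc hd hcd
    rw [hedges]
    exact List.mem_cons_of_mem _ (List.mem_cons_of_mem _
      (List.mem_map.mpr ⟨s(c, d), hq.2 c d hc hd hcd, Sym2.map_pair_eq ..⟩))
  refine ⟨_, _, W, ⟨?_, ?_⟩, ?_, ?_, ?_⟩
  · rw [Walk.isPath_def, hsupp]
    refine List.nodup_cons.mpr ⟨?_, List.nodup_cons.mpr ⟨?_, ?_⟩⟩
    · intro hmem
      rcases List.mem_cons.mp hmem with h | h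
      · exact hbh2 (congrArg Prod.snd h).symm
      · obtain ⟨d, hd, h⟩ := List.mem_map.mp h
        exact hgn (congrArg Prod.fst h)
    · intro hmem
      obtain ⟨d, hd, h⟩ := List.mem_map.mp hmem
      exact hgn (congrArg Prod.fst h)
    · exact List.Nodup.map (fun u v huv => congrArg Prod.snd huv) hq.1.support_nodup
  · rintro x y hx hy hxy
    rw [hsupp] at hx hy
    simp only [List.mem_cons, List.mem_map] at hx hy
    rcases hx with rfl | rfl | ⟨c, hc, rfl⟩ <;> rcases hy with rfl | rfl | ⟨d, hd, rfl⟩ <;>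
      rw [boxProd_adj] at hxy
    · rcases hxy with ⟨h', -⟩ | ⟨h', -⟩
      · exact absurd h' (G.loopless.irrefl _)
      · exact absurd h' (H.loopless.irrefl _)
    · rw [hedges]; simp
    · rcases hxy with ⟨-, h'⟩ | ⟨-, h'⟩
      · exact absurd h'.symm (hqh2 d hd)
      · exact absurd h'.symm hgn
    · rw [hedges]; simp [Sym2.eq_swap]
    · rcases hxy with ⟨h', -⟩ | ⟨h', -⟩
      · exact absurd h' (G.loopless.irrefl _)
      · exact absurd h' (H.loopless.irrefl _)
    · rcases hxy with ⟨-, h'⟩ | ⟨-, h'⟩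
      · -- (g2,b) ~ (g1,d) with b = d
        subst h'
        rw [hedges]; simp
      · exact absurd h'.symm hgn
    · rcases hxy with ⟨-, h'⟩ | ⟨-, h'⟩
      · exact absurd h' (hqh2 c hc)
      · exact absurd h' hgn
    · rcases hxy with ⟨-, h'⟩ | ⟨-, h'⟩
      · subst h'
        rw [hedges]; simp [Sym2.eq_swap]
      · exact absurd h' hgn
    · rcases hxy with ⟨h', rfl⟩ | ⟨h', -⟩
      · exact absurd h' (G.loopless.irrefl _)
      · exact hmemC _ _ hc hd h'
  · rw [hsupp]
    exact List.mem_cons_of_mem _ (List.mem_cons_of_mem _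
      (List.mem_map.mpr ⟨h1, q.end_mem_support, rfl⟩))
  · rw [hsupp]; simp
  · rw [hsupp]; simp

/-- Case a = g2, b ≁ h1, b ≁ h2, b ∉ {h1,h2} : z — (g1,b) —col— x — u — y. -/
lemma con_3c {b : β} (hg : G.Adj g1 g2) (hh : H.Adj h1 h2)
    (hnb1 : ¬ H.Adj b h1) (hnb2 : ¬ H.Adj b h2) (hbh1 : b ≠ h1) (hbh2 : b ≠ h2)
    (q : H.Walk b h1) (hq : GoodWalk q) (hh2q : h2 ∉ q.support) :
    ∃ (s t : α × β) (W : (G □ H).Walk s t), GoodWalk W ∧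
      (g1, h1) ∈ W.support ∧ (g2, b) ∈ W.support ∧ (g2, h2) ∈ W.support := by
  have hgn : g1 ≠ g2 := hg.ne
  have hgn' : g2 ≠ g1 := hg.ne'
  have hhn : h1 ≠ h2 := hh.ne
  have hqh2 : ∀ d, d ∈ q.support → d ≠ h2 := fun d hd h => hh2q (h ▸ hd)
  have e1 : (G □ H).Adj (g2, b) (g1, b) := by simp [hg.symm]
  have e5 : (G □ H).Adj (g1, h1) (g2, h1) := by simp [hg]
  have e6 : (G □ H).Adj (g2, h1) (g2, h2) := by simp [hh]
  set W : (G □ H).Walk (g2, b) (g2, h2) :=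
    Walk.cons e1 ((colWalk g1 q).append (Walk.cons e5 (Walk.cons e6 Walk.nil))) with hW
  have hsupp : W.support
      = (g2, b) :: (q.support.map (fun h => (g1, h)) ++ [(g2, h1), (g2, h2)]) := by
    rw [hW, Walk.support_cons, Walk.support_append, support_colWalk]
    simp
  have hedges : W.edges = s((g2,b),(g1,b))
      :: (q.edges.map (Sym2.map (fun h => (g1, h))) ++ [s((g1,h1),(g2,h1)), s((g2,h1),(g2,h2))]) := by
    rw [hW, Walk.edges_cons, Walk.edges_append, edges_colWalk]
    simp
  have hmemC : ∀ c d, c ∈ q.support → d ∈ q.support → H.Adj c d →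
      s((g1, c), (g1, d)) ∈ W.edges := by
    intro c d hc hd hcd
    rw [hedges]
    exact List.mem_cons_of_mem _ (List.mem_append_left _
      (List.mem_map.mpr ⟨s(c, d), hq.2 c d hc hd hcd, Sym2.map_pair_eq ..⟩))
  refine ⟨_, _, W, ⟨?_, ?_⟩, ?_, ?_, ?_⟩
  · rw [Walk.isPath_def, hsupp]
    refine List.nodup_cons.mpr ⟨?_, ?_⟩
    · intro hmem
      rcases List.mem_append.mp hmem with h | h
      · obtain ⟨d, hd, h⟩ := List.mem_map.mp h
        exact hgn (congrArg Prod.fst h)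
      · rcases List.mem_cons.mp h with h | h
        · exact hbh1 (congrArg Prod.snd h)
        · rcases List.mem_singleton.mp h with h'
          exact hbh2 (congrArg Prod.snd h')
    · rw [List.nodup_append']
      refine ⟨List.Nodup.map (fun u v huv => congrArg Prod.snd huv) hq.1.support_nodup,
        by simp [hgn', hhn], ?_⟩
      intro w hw hmem
      obtain ⟨d, hd, rfl⟩ := List.mem_map.mp hw
      rcases List.mem_cons.mp hmem with h | h
      · exact hgn (congrArg Prod.fst h)
      · rcases List.mem_singleton.mp h with h'
        exact hgn (congrArg Prod.fst h')
  · rintro x y hx hy hxy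
    rw [hsupp] at hx hy
    simp only [List.mem_cons, List.mem_append, List.mem_map, List.mem_singleton,
      List.not_mem_nil, or_false] at hx hy
    rcases hx with rfl | ⟨c, hc, rfl⟩ | rfl | rfl <;>
      rcases hy with rfl | ⟨d, hd, rfl⟩ | rfl | rfl <;>
      rw [boxProd_adj] at hxy
    · rcases hxy with ⟨h', -⟩ | ⟨h', -⟩
      · exact absurd h' (G.loopless.irrefl _)
      · exact absurd h' (H.loopless.irrefl _)
    · rcases hxy with ⟨-, h'⟩ | ⟨-, h'⟩
      · subst h'; rw [hedges]; simp
      · exact absurd h'.symm hgn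
    · rcases hxy with ⟨h', -⟩ | ⟨h', -⟩
      · exact absurd h' (G.loopless.irrefl _)
      · exact absurd h' hnb1
    · rcases hxy with ⟨h', -⟩ | ⟨h', -⟩
      · exact absurd h' (G.loopless.irrefl _)
      · exact absurd h' hnb2
    · rcases hxy with ⟨-, h'⟩ | ⟨-, h'⟩
      · subst h'; rw [hedges]; simp [Sym2.eq_swap]
      · exact absurd h' hgn
    · rcases hxy with ⟨h', rfl⟩ | ⟨h', -⟩
      · exact absurd h' (G.loopless.irrefl _)
      · exact hmemC _ _ hc hd h'
    · rcases hxy with ⟨-, h'⟩ | ⟨-, h'⟩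
      · subst h'; rw [hedges]; simp
      · exact absurd h' hgn
    · rcases hxy with ⟨-, h'⟩ | ⟨-, h'⟩
      · exact absurd h' (hqh2 c hc)
      · exact absurd h' hgn
    · rcases hxy with ⟨h', -⟩ | ⟨h', -⟩
      · exact absurd h' (G.loopless.irrefl _)
      · exact absurd h'.symm hnb1
    · rcases hxy with ⟨-, h'⟩ | ⟨-, h'⟩
      · subst h'; rw [hedges]; simp [Sym2.eq_swap]
      · exact absurd h'.symm hgn
    · rcases hxy with ⟨h', -⟩ | ⟨h', -⟩
      · exact absurd h' (G.loopless.irrefl _)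
      · exact absurd h' (H.loopless.irrefl _)
    · rw [hedges]; simp
    · rcases hxy with ⟨h', -⟩ | ⟨h', -⟩
      · exact absurd h' (G.loopless.irrefl _)
      · exact absurd h'.symm hnb2
    · rcases hxy with ⟨-, h'⟩ | ⟨-, h'⟩
      · exact absurd h'.symm (hqh2 d hd)
      · exact absurd h'.symm hgn
    · rw [hedges]; simp [Sym2.eq_swap]
    · rcases hxy with ⟨h', -⟩ | ⟨h', -⟩
      · exact absurd h' (G.loopless.irrefl _)
      · exact absurd h' (H.loopless.irrefl _)
  · rw [hsupp]
    exact List.mem_cons_of_mem _ (List.mem_append_left _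
      (List.mem_map.mpr ⟨h1, q.end_mem_support, rfl⟩))
  · rw [hsupp]; simp
  · rw [hsupp]; simp

end Prod

lemma GoodWalk.map_iso {V V' : Type*} {G : SimpleGraph V} {G' : SimpleGraph V'}
    (φ : G ≃g G') {u v : V} {W : G.Walk u v} (h : GoodWalk W) :
    GoodWalk (W.map φ.toHom) := by
  constructor
  · exact Walk.map_isPath_of_injective (fun x y hxy => φ.toEquiv.injective hxy) h.1
  · intro x y hx hy hxy
    rw [Walk.support_map] at hx hy
    obtain ⟨x', hx', rfl⟩ := List.mem_map.mp hx
    obtain ⟨y', hy', rfl⟩ := List.mem_map.mp hy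
    rw [Walk.edges_map]
    have hadj : G.Adj x' y' := φ.map_adj_iff.mp hxy
    exact List.mem_map.mpr ⟨s(x', y'), h.2 x' y' hx' hy' hadj, Sym2.map_pair_eq ..⟩


section Key
variable {α β : Type*} {G : SimpleGraph α} {H : SimpleGraph β} {g1 g2 : α} {h1 h2 : β}

/-- Half of the case analysis. -/
lemma keyA (hg : G.Adj g1 g2) (hh : H.Adj h1 h2)
    (HG : ∀ a, a ≠ g2 → ∃ p : G.Walk a g1, GoodWalk p ∧ g2 ∉ p.support)
    (HH : ∀ b, b ≠ h2 → ∃ q : H.Walk b h1, GoodWalk q ∧ h2 ∉ q.support)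
    (a : α) (b : β) (hzx : (a, b) ≠ (g1, h1)) (hzy : (a, b) ≠ (g2, h2))
    (hcase : a = g2 ∨ b ≠ h2) :
    ∃ (s t : α × β) (W : (G □ H).Walk s t), GoodWalk W ∧
      (g1, h1) ∈ W.support ∧ (a, b) ∈ W.support ∧ (g2, h2) ∈ W.support := by
  by_cases hag2 : a = g2
  · subst hag2
    have hbh2 : b ≠ h2 := fun h => hzy (by rw [h])
    by_cases hb1 : b = h1
    · subst hb1
      exact con_u hg hh
    · by_cases hb2adj : H.Adj b h2
      · obtain ⟨q, hq, hh2q⟩ := HH b hbh2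
        exact con_3a hg hh hb2adj q hq hh2q
      · by_cases hb1adj : H.Adj b h1
        · exact con_3b hg hh hb1adj hb2adj hbh2
        · obtain ⟨q, hq, hh2q⟩ := HH b hbh2
          exact con_3c hg hh hb1adj hb2adj hb1 hbh2 q hq hh2q
  · have hbh2 : b ≠ h2 := hcase.resolve_left hag2
    obtain ⟨p, hp, hg2p⟩ := HG a hag2
    by_cases hb1 : b = h1
    · subst hb1
      exact con_C3T hg hh p hp hg2p
    · obtain ⟨q, hq, hh2q⟩ := HH b hbh2
      exact con_C3 hg hh p hp hg2p q hq hh2q hb1 hbh2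

/-- Full existence: every third vertex lies on an induced path through x and y. -/
lemma key_exists (hg : G.Adj g1 g2) (hh : H.Adj h1 h2)
    (HG : ∀ a, a ≠ g2 → ∃ p : G.Walk a g1, GoodWalk p ∧ g2 ∉ p.support)
    (HH : ∀ b, b ≠ h2 → ∃ q : H.Walk b h1, GoodWalk q ∧ h2 ∉ q.support)
    (a : α) (b : β) (hzx : (a, b) ≠ (g1, h1)) (hzy : (a, b) ≠ (g2, h2)) :
    ∃ (s t : α × β) (W : (G □ H).Walk s t), W.IsMonophonic ∧
      (g1, h1) ∈ W.support ∧ (a, b) ∈ W.support ∧ (g2, h2) ∈ W.support := by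
  by_cases hc : a = g2 ∨ b ≠ h2
  · obtain ⟨s, t, W, hW, m1, m2, m3⟩ := keyA hg hh HG HH a b hzx hzy hc
    exact ⟨s, t, W, hW.isMonophonic, m1, m2, m3⟩
  · push_neg at hc
    obtain ⟨hag2, hbh2⟩ := hc
    have hzx' : (b, a) ≠ (h1, g1) := fun h => by
      apply hzx
      have h1' : b = h1 := congrArg Prod.fst h
      have h2' : a = g1 := congrArg Prod.snd h
      rw [h1', h2']
    have hzy' : (b, a) ≠ (h2, g2) := fun h => by
      apply hzy
      have h1' : b = h2 := congrArg Prod.fst h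
      have h2' : a = g2 := congrArg Prod.snd h
      rw [h1', h2']
    obtain ⟨s, t, W, hW, m1, m2, m3⟩ :=
      keyA hh hg HH HG b a hzx' hzy' (Or.inl hbh2)
    let φ : (H □ G) ≃g (G □ H) := (boxProdComm G H).symm
    refine ⟨_, _, W.map φ.toHom, (hW.map_iso φ).isMonophonic, ?_, ?_, ?_⟩
    · rw [Walk.support_map]
      exact List.mem_map.mpr ⟨(h1, g1), m1, rfl⟩
    · rw [Walk.support_map]
      exact List.mem_map.mpr ⟨(b, a), m2, rfl⟩
    · rw [Walk.support_map]
      exact List.mem_map.mpr ⟨(h2, g2), m3, rfl⟩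

end Key

end Helpers

/-- If `G` and `H` are finite connected graphs with at least two vertices
each, then `mp⁻(G □ H) = 2`. -/
theorem lowerMpNum_boxProd {α β : Type*} [Fintype α] [Fintype β]
    (G : SimpleGraph α) (H : SimpleGraph β) (hG : G.Connected) (hH : H.Connected)
    (hcardG : 2 ≤ Fintype.card α) (hcardH : 2 ≤ Fintype.card β) :
    (G □ H).lowerMpNum = 2 := by
  classical
  obtain ⟨g1, g2, hg, HG⟩ := exists_good_pair G hG hcardG
  obtain ⟨h1, h2, hh, HH⟩ := exists_good_pair H hH hcardH
  set x : α × β := (g1, h1) with hx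
  set y : α × β := (g2, h2) with hy
  have hxy : x ≠ y := fun h => hg.ne (congrArg Prod.fst h)
  set S : Set (α × β) := {x, y} with hS
  have hSncard : S.ncard = 2 := Set.ncard_pair hxy
  -- any set of size ≤ 2 is an mp-set
  have small_mp : ∀ T : Set (α × β), T.ncard ≤ 2 → (G □ H).IsMPSet T := by
    intro T hT u v p hp
    exact le_trans (Set.ncard_le_ncard (Set.sep_subset _ _) T.toFinite) hT
  -- S is a maximal mp-set
  have hSmp : (G □ H).IsMPSet S := small_mp S (le_of_eq hSncard)
  have hSmax : ∀ T : Set (α × β), (G □ H).IsMPSet T → S ⊆ T → T = S := by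
    intro T hT hST
    refine Set.Subset.antisymm ?_ hST
    intro z hzT
    by_contra hzS
    rw [hS, Set.mem_insert_iff, Set.mem_singleton_iff] at hzS
    push_neg at hzS
    obtain ⟨hzx, hzy⟩ := hzS
    obtain ⟨s, t, W, hW, m1, m2, m3⟩ :=
      key_exists hg hh HG HH z.1 z.2 (by simpa using hzx) (by simpa using hzy)
    have h3 : ({x, y, z} : Set (α × β)).ncard = 3 := by
      rw [Set.ncard_eq_three]
      exact ⟨x, y, z, hxy, fun h => hzx (by simp [h.symm]), fun h => hzy (by simp [h.symm]), rfl⟩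
    have hsub : ({x, y, z} : Set (α × β)) ⊆ {w ∈ T | w ∈ W.support} := by
      intro w hw
      rcases hw with rfl | rfl | rfl
      · exact ⟨hST (by simp [hS]), m1⟩
      · exact ⟨hST (by simp [hS]), m3⟩
      · exact ⟨hzT, by simpa using m2⟩
    have := Set.ncard_le_ncard hsub (Set.toFinite _)
    rw [h3] at this
    have := hT W hW
    omega
  have h2mem : 2 ∈ {n | ∃ S : Set (α × β),
      ((G □ H).IsMPSet S ∧ ∀ T : Set (α × β), (G □ H).IsMPSet T → S ⊆ T → T = S) ∧
        S.ncard = n} := ⟨S, ⟨hSmp, hSmax⟩, hSncard⟩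
  have hinf_le : (G □ H).lowerMpNum ≤ 2 := Nat.sInf_le h2mem
  have hmem : (G □ H).lowerMpNum ∈ {n | ∃ S : Set (α × β),
      ((G □ H).IsMPSet S ∧ ∀ T : Set (α × β), (G □ H).IsMPSet T → S ⊆ T → T = S) ∧
        S.ncard = n} := Nat.sInf_mem ⟨2, h2mem⟩
  obtain ⟨S', ⟨hS'mp, hS'max⟩, hS'card⟩ := hmem
  -- S' has at least 2 elements
  have hge : 2 ≤ S'.ncard := by
    by_contra hlt
    push_neg at hlt
    have hcard4 : 4 ≤ Fintype.card (α × β) := by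
      rw [Fintype.card_prod]
      nlinarith
    obtain ⟨v, hv⟩ : ∃ v, v ∉ S' := by
      by_contra hall
      push_neg at hall
      have : S' = Set.univ := Set.eq_univ_of_forall hall
      rw [this, Set.ncard_univ, Nat.card_eq_fintype_card] at hlt
      omega
    have hTmp : (G □ H).IsMPSet (insert v S') := by
      apply small_mp
      have := Set.ncard_insert_le v S'
      omega
    have := hS'max (insert v S') hTmp (Set.subset_insert v S')
    rw [← this] at hv
    exact hv (Set.mem_insert v S')
  omega
end

section
/- Let G and H be finite connected graphs and let S be a monophonic position set of the Cartesian product G □ H such that the first coordinates of the elements of S are pairwise distinct, the second coordinates of the elements of S are pairwise distinct, and neither the projection π_G(S) induces a clique in G nor the projection π_H(S) induces a clique in H. Then |S| ≤ 2. -/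
open SimpleGraph

namespace SimpleGraph
namespace Walk
variable {V : Type*} {G : SimpleGraph V}

lemma toSubgraph_adj_iff_mem_edges {u v a b : V} (p : G.Walk u v) :
    p.toSubgraph.Adj a b ↔ s(a, b) ∈ p.edges := by
  rw [← Subgraph.mem_edgeSet, mem_edges_toSubgraph]

lemma isMonophonic_single {u v : V} (h : G.Adj u v) :
    (Walk.cons h Walk.nil).IsMonophonic := by
  constructor
  · simp [h.ne]
  · intro a b ha hb hab
    simp only [support_cons, support_nil, List.mem_cons, List.mem_singleton,
      List.not_mem_nil, or_false] at ha hb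
    rcases ha with rfl | rfl <;> rcases hb with rfl | rfl <;>
      simp_all [Walk.toSubgraph, Subgraph.sup_adj, hab]

lemma isMonophonic_double {u v w : V} (huv : G.Adj u v) (hvw : G.Adj v w)
    (huw : ¬ G.Adj u w) (hne : u ≠ w) :
    (Walk.cons huv (Walk.cons hvw Walk.nil)).IsMonophonic := by
  constructor
  · simp [huv.ne, hvw.ne, hne]
  · intro a b ha hb hab
    simp only [support_cons, support_nil, List.mem_cons, List.mem_singleton,
      List.not_mem_nil, or_false] at ha hb
    rcases ha with rfl | rfl | rfl <;> rcases hb with rfl | rfl | rfl <;>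
      simp_all [Walk.toSubgraph, Subgraph.sup_adj] <;>
      first
        | exact (G.irrefl hab).elim
        | exact (huw hab).elim
        | exact (huw hab.symm).elim

lemma IsPath.append_of_inter {u v w : V} {p : G.Walk u v} {q : G.Walk v w}
    (hp : p.IsPath) (hq : q.IsPath)
    (h : ∀ x, x ∈ p.support → x ∈ q.support → x = v) : (p.append q).IsPath := by
  rw [isPath_def, support_append]
  refine List.Nodup.append hp.support_nodup hq.support_nodup.tail ?_
  intro x hxp hxq
  have hx := h x hxp (List.mem_of_mem_tail hxq)
  subst hx
  have hnd := hq.support_nodup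
  rw [q.support_eq_cons] at hnd
  exact (List.nodup_cons.mp hnd).1 hxq


lemma length_one_toSubgraph_adj {a b : V} (p : G.Walk a b) (hp : p.length = 1) :
    p.toSubgraph.Adj a b := by
  have h := p.toSubgraph_adj_getVert (i := 0) (by omega)
  rw [p.getVert_zero] at h
  have h1 : p.getVert 1 = b := by
    conv_rhs => rw [← p.getVert_length, hp]
  rwa [h1] at h


end Walk

lemma Connected.exists_isMonophonic {V : Type*} {G : SimpleGraph V} (hG : G.Connected)
    (u v : V) : ∃ p : G.Walk u v, p.IsMonophonic := by
  classical
  have hne : {n | ∃ q : G.Walk u v, q.length = n}.Nonempty := ⟨_, (hG u v).some, rfl⟩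
  obtain ⟨q0, hq0⟩ := Nat.sInf_mem hne
  -- take the bypass of q0; it has minimal length and is a path
  set p : G.Walk u v := q0.bypass with hp
  have hmin : ∀ r : G.Walk u v, p.length ≤ r.length := by
    intro r
    calc p.length ≤ q0.length := q0.length_bypass_le
    _ = sInf {n | ∃ q : G.Walk u v, q.length = n} := hq0
    _ ≤ r.length := Nat.sInf_le ⟨r, rfl⟩
  refine ⟨p, q0.bypass_isPath, ?_⟩
  intro a b ha hb hab
  -- split p at a
  rw [← p.take_spec ha, Walk.mem_support_append_iff] at hb
  rcases hb with hb | hb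
  · -- b occurs before a
    set q1 := p.takeUntil a ha
    set q2 := p.dropUntil a ha
    set r := q1.takeUntil b hb with hr
    set s := q1.dropUntil b hb with hs
    have hslen : s.length = 1 := by
      have hcand := hmin (r.append (Walk.cons hab.symm q2))
      have hsplit : p.length = q1.length + q2.length := by
        conv_lhs => rw [← p.take_spec ha]
        rw [Walk.length_append]
      have hsplit2 : q1.length = r.length + s.length := by
        conv_lhs => rw [← q1.take_spec hb]
        rw [Walk.length_append]
      rw [Walk.length_append, Walk.length_cons] at hcand
      have hpos : s.length ≠ 0 := by
        intro h0
        exact hab.ne' (Walk.eq_of_length_eq_zero h0)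
      omega
    have hadj : s.toSubgraph.Adj b a := s.length_one_toSubgraph_adj hslen
    have : p.toSubgraph.Adj b a := by
      conv => rw [← p.take_spec ha]
      rw [Walk.toSubgraph_append, Subgraph.sup_adj]
      left
      show q1.toSubgraph.Adj b a
      conv => rw [← q1.take_spec hb]
      rw [Walk.toSubgraph_append, Subgraph.sup_adj]
      right
      exact hadj
    exact this.symm
  · -- b occurs after a
    set q1 := p.takeUntil a ha
    set q2 := p.dropUntil a ha
    set r := q2.takeUntil b hb with hr
    set s := q2.dropUntil b hb with hs
    have hrlen : r.length = 1 := by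
      have hcand := hmin (q1.append (Walk.cons hab s))
      have hsplit : p.length = q1.length + q2.length := by
        conv_lhs => rw [← p.take_spec ha]
        rw [Walk.length_append]
      have hsplit2 : q2.length = r.length + s.length := by
        conv_lhs => rw [← q2.take_spec hb]
        rw [Walk.length_append]
      rw [Walk.length_append, Walk.length_cons] at hcand
      have hpos : r.length ≠ 0 := by
        intro h0
        exact hab.ne (Walk.eq_of_length_eq_zero h0)
      omega
    have hadj : r.toSubgraph.Adj a b := r.length_one_toSubgraph_adj hrlen
    conv => rw [← p.take_spec ha]
    rw [Walk.toSubgraph_append, Subgraph.sup_adj]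
    right
    show q2.toSubgraph.Adj a b
    conv => rw [← q2.take_spec hb]
    rw [Walk.toSubgraph_append, Subgraph.sup_adj]
    left
    exact hadj


variable {α β : Type*} {G : SimpleGraph α} {H : SimpleGraph β}

lemma mem_support_boxProdLeft {a₁ a₂ : α} {b : β} (w : G.Walk a₁ a₂) (x : α × β) :
    x ∈ (w.boxProdLeft H b).support ↔ x.1 ∈ w.support ∧ x.2 = b := by
  show x ∈ (w.map (G.boxProdLeft H b).toHom).support ↔ _
  rw [Walk.support_map, List.mem_map]
  constructor
  · rintro ⟨g, hg, rfl⟩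
    exact ⟨hg, rfl⟩
  · rintro ⟨h1, h2⟩
    exact ⟨x.1, h1, by ext <;> simp [h2.symm]⟩

lemma mem_support_boxProdRight {b₁ b₂ : β} {a : α} (w : H.Walk b₁ b₂) (x : α × β) :
    x ∈ (w.boxProdRight G a).support ↔ x.2 ∈ w.support ∧ x.1 = a := by
  show x ∈ (w.map (G.boxProdRight H a).toHom).support ↔ _
  rw [Walk.support_map, List.mem_map]
  constructor
  · rintro ⟨g, hg, rfl⟩
    exact ⟨hg, rfl⟩
  · rintro ⟨h1, h2⟩
    exact ⟨x.2, h1, by ext <;> simp [h2.symm]⟩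

lemma toSubgraph_adj_boxProdLeft {a₁ a₂ : α} {b : β} (w : G.Walk a₁ a₂) {x y : α}
    (h : w.toSubgraph.Adj x y) : ((w.boxProdLeft H b).toSubgraph).Adj (x, b) (y, b) := by
  show (w.map (G.boxProdLeft H b).toHom).toSubgraph.Adj (x, b) (y, b)
  rw [Walk.toSubgraph_map]
  exact ⟨x, y, h, rfl, rfl⟩

lemma toSubgraph_adj_boxProdRight {b₁ b₂ : β} {a : α} (w : H.Walk b₁ b₂) {x y : β}
    (h : w.toSubgraph.Adj x y) : ((w.boxProdRight G a).toSubgraph).Adj (a, x) (a, y) := by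
  show (w.map (G.boxProdRight H a).toHom).toSubgraph.Adj (a, x) (a, y)
  rw [Walk.toSubgraph_map]
  exact ⟨x, y, h, rfl, rfl⟩

lemma isPath_boxProdLeft {a₁ a₂ : α} {b : β} {w : G.Walk a₁ a₂} (hw : w.IsPath) :
    (w.boxProdLeft H b).IsPath := by
  rw [Walk.boxProdLeft]
  exact Walk.map_isPath_of_injective (G.boxProdLeft H b).injective hw

lemma isPath_boxProdRight {b₁ b₂ : β} {a : α} {w : H.Walk b₁ b₂} (hw : w.IsPath) :
    (w.boxProdRight G a).IsPath := by
  rw [Walk.boxProdRight]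
  exact Walk.map_isPath_of_injective (G.boxProdRight H a).injective hw

lemma IsMPSet.not_three [Finite α] [Finite β] {S : Set (α × β)} (hS : (G □ H).IsMPSet S)
    {u v : α × β} {W : (G □ H).Walk u v} (hW : W.IsMonophonic)
    {p q r : α × β} (hp : p ∈ S) (hq : q ∈ S) (hr : r ∈ S)
    (hpW : p ∈ W.support) (hqW : q ∈ W.support) (hrW : r ∈ W.support)
    (hpq : p ≠ q) (hpr : p ≠ r) (hqr : q ≠ r) : False := by
  have h2 := hS W hW
  have hsub : ({p, q, r} : Set (α × β)) ⊆ {x ∈ S | x ∈ W.support} := by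
    rintro x (rfl | rfl | rfl) <;> exact ⟨by assumption, by assumption⟩
  have h3 : ({p, q, r} : Set (α × β)).ncard = 3 :=
    Set.ncard_eq_three.mpr ⟨p, q, r, hpq, hpr, hqr, rfl⟩
  have := Set.ncard_le_ncard hsub (Set.toFinite _)
  omega


set_option maxHeartbeats 1000000 in
lemma chain_false [Finite α] [Finite β] {S : Set (α × β)} (hS : (G □ H).IsMPSet S)
    {a1 a2 a3 : α} {b1 b2 b3 : β}
    (h1 : (a1, b1) ∈ S) (h2 : (a2, b2) ∈ S) (h3 : (a3, b3) ∈ S)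
    (ha12 : a1 ≠ a2) (ha13 : a1 ≠ a3) (ha23 : a2 ≠ a3)
    (hb12 : b1 ≠ b2) (hb13 : b1 ≠ b3) (hb23 : b2 ≠ b3)
    (hg12 : G.Adj a1 a2) (hg23 : G.Adj a2 a3) (hh12 : H.Adj b1 b2) (hh23 : H.Adj b2 b3) :
    False := by
  obtain ⟨W, hW, m1, m2, m3⟩ :
      ∃ W : (G □ H).Walk (a1, b1) (a3, b3), W.IsMonophonic ∧
      (a1, b1) ∈ W.support ∧ (a2, b2) ∈ W.support ∧ (a3, b3) ∈ W.support := by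
    have e1 : (G □ H).Adj (a1, b1) (a2, b1) := boxProd_adj.mpr (Or.inl ⟨hg12, rfl⟩)
    have e2 : (G □ H).Adj (a2, b1) (a2, b2) := boxProd_adj.mpr (Or.inr ⟨hh12, rfl⟩)
    have e3 : (G □ H).Adj (a2, b2) (a3, b2) := boxProd_adj.mpr (Or.inl ⟨hg23, rfl⟩)
    have e4 : (G □ H).Adj (a3, b2) (a3, b3) := boxProd_adj.mpr (Or.inr ⟨hh23, rfl⟩)
    refine ⟨Walk.cons e1 (Walk.cons e2 (Walk.cons e3 (Walk.cons e4 Walk.nil))), ⟨?_, ?_⟩, ?_, ?_, ?_⟩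
    · simp [Walk.isPath_def, Prod.ext_iff, ha12, ha13, ha23, hb12, hb13, hb23,
        ha12.symm, ha13.symm, ha23.symm, hb12.symm, hb13.symm, hb23.symm]
    · intro x y hx hy hxy
      simp only [Walk.support_cons, Walk.support_nil, List.mem_cons, List.not_mem_nil,
        or_false] at hx hy
      have hne := hxy.ne
      rw [boxProd_adj] at hxy
      rcases hx with rfl | rfl | rfl | rfl | rfl <;> rcases hy with rfl | rfl | rfl | rfl | rfl <;>
        simp_all [Walk.toSubgraph, Subgraph.sup_adj, Prod.ext_iff] <;>
        first
        | (exact absurd hxy.1 (G.irrefl))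
        | (exact absurd hxy.2 (H.irrefl))
        | tauto
    · simp
    · simp
    · simp
  refine hS.not_three hW h1 h2 h3 m1 m2 m3 ?_ ?_ ?_
  · simp [Prod.ext_iff, ha12]
  · simp [Prod.ext_iff, ha13]
  · simp [Prod.ext_iff, ha23]

/-- ST3: 3-leg staircase G-H-G.  If `¬H.Adj b1 b2` and some induced `b1→b2` path passes
through `b3`, the three points lie on a common monophonic path. -/
lemma st3 [Finite α] [Finite β] (hG : G.Connected) {S : Set (α × β)} (hS : (G □ H).IsMPSet S)
    {a1 a2 a3 : α} {b1 b2 b3 : β}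
    (h1 : (a1, b1) ∈ S) (h2 : (a2, b2) ∈ S) (h3 : (a3, b3) ∈ S)
    (ha12 : a1 ≠ a2) (ha13 : a1 ≠ a3) (ha23 : a2 ≠ a3)
    (hb12 : b1 ≠ b2) (hb13 : b1 ≠ b3) (hb23 : b2 ≠ b3)
    (hH12 : ¬ H.Adj b1 b2)
    (R : H.Walk b1 b2) (hR : R.IsMonophonic) (hb3R : b3 ∈ R.support) : False := by
  obtain ⟨Q1, hQ1⟩ := hG.exists_isMonophonic a1 a3
  obtain ⟨Q2, hQ2⟩ := hG.exists_isMonophonic a3 a2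
  set L1 := Q1.boxProdLeft H b1 with hL1
  set L2 := R.boxProdRight G a3 with hL2
  set L3 := Q2.boxProdLeft H b2 with hL3
  set W := L1.append (L2.append L3) with hWdef
  have hsub : W.toSubgraph = L1.toSubgraph ⊔ (L2.toSubgraph ⊔ L3.toSubgraph) := by
    rw [hWdef, Walk.toSubgraph_append, Walk.toSubgraph_append]
  have A1 : ∀ g g', g ∈ Q1.support → g' ∈ Q1.support → G.Adj g g' →
      W.toSubgraph.Adj (g, b1) (g', b1) := fun g g' hg hg' hadj => by
    rw [hsub]
    exact Subgraph.sup_adj.mpr (Or.inl (toSubgraph_adj_boxProdLeft _ (hQ1.2 _ _ hg hg' hadj)))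
  have A2 : ∀ h h', h ∈ R.support → h' ∈ R.support → H.Adj h h' →
      W.toSubgraph.Adj (a3, h) (a3, h') := fun h h' hh hh' hadj => by
    rw [hsub]
    exact Subgraph.sup_adj.mpr (Or.inr (Subgraph.sup_adj.mpr
      (Or.inl (toSubgraph_adj_boxProdRight _ (hR.2 _ _ hh hh' hadj)))))
  have A3 : ∀ g g', g ∈ Q2.support → g' ∈ Q2.support → G.Adj g g' →
      W.toSubgraph.Adj (g, b2) (g', b2) := fun g g' hg hg' hadj => by
    rw [hsub]
    exact Subgraph.sup_adj.mpr (Or.inr (Subgraph.sup_adj.mpr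
      (Or.inr (toSubgraph_adj_boxProdLeft _ (hQ2.2 _ _ hg hg' hadj)))))
  have hmemW : ∀ x : α × β, x ∈ W.support ↔
      (x.1 ∈ Q1.support ∧ x.2 = b1) ∨ (x.2 ∈ R.support ∧ x.1 = a3) ∨
      (x.1 ∈ Q2.support ∧ x.2 = b2) := by
    intro x
    rw [hWdef, Walk.mem_support_append_iff, Walk.mem_support_append_iff,
      hL1, hL2, hL3, mem_support_boxProdLeft, mem_support_boxProdRight,
      mem_support_boxProdLeft]
  have hpath : W.IsPath := by
    apply Walk.IsPath.append_of_inter (isPath_boxProdLeft hQ1.1)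
    · apply Walk.IsPath.append_of_inter (isPath_boxProdRight hR.1) (isPath_boxProdLeft hQ2.1)
      intro x hx2 hx3
      rw [mem_support_boxProdRight] at hx2
      rw [mem_support_boxProdLeft] at hx3
      exact Prod.ext hx2.2 hx3.2
    · intro x hx1 hx23
      rw [mem_support_boxProdLeft] at hx1
      rw [hL2, hL3] at hx23
      rw [Walk.mem_support_append_iff, mem_support_boxProdRight,
        mem_support_boxProdLeft] at hx23
      rcases hx23 with ⟨_, hxa⟩ | ⟨_, hxb⟩
      · exact Prod.ext hxa hx1.2
      · exact absurd (hx1.2.symm.trans hxb) hb12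
  have hmono : W.IsMonophonic := by
    refine ⟨hpath, ?_⟩
    rintro ⟨x1, x2⟩ ⟨y1, y2⟩ hx hy hxy
    rw [hmemW] at hx hy
    rw [boxProd_adj] at hxy
    simp only at hx hy hxy
    rcases hx with ⟨hxQ, rfl⟩ | ⟨hxR, rfl⟩ | ⟨hxQ, rfl⟩ <;>
      rcases hy with ⟨hyQ, rfl⟩ | ⟨hyR, rfl⟩ | ⟨hyQ, rfl⟩ <;>
      rcases hxy with ⟨hg, he⟩ | ⟨hh, he⟩
    -- (1,1)
    · exact A1 _ _ hxQ hyQ hg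
    · exact absurd hh (H.irrefl)
    -- (1,2)
    · subst he; exact A1 _ _ hxQ Q1.end_mem_support hg
    · subst he; exact A2 _ _ R.start_mem_support hyR hh
    -- (1,3)
    · exact absurd he hb12
    · exact absurd hh hH12
    -- (2,1)
    · subst he; exact A1 _ _ Q1.end_mem_support hyQ hg
    · subst he; exact A2 _ _ hxR R.start_mem_support hh
    -- (2,2)
    · subst he; exact absurd hg (G.irrefl)
    · exact A2 _ _ hxR hyR hh
    -- (2,3)
    · subst he; exact A3 _ _ Q2.start_mem_support hyQ hg
    · subst he; exact A2 _ _ hxR R.end_mem_support hh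
    -- (3,1)
    · exact absurd he hb12.symm
    · exact absurd hh (fun h => hH12 h.symm)
    -- (3,2)
    · subst he; exact A3 _ _ hxQ Q2.start_mem_support hg
    · subst he; exact A2 _ _ R.end_mem_support hyR hh
    -- (3,3)
    · exact A3 _ _ hxQ hyQ hg
    · exact absurd hh (H.irrefl)
  refine hS.not_three hmono h1 h2 h3 ?_ ?_ ?_ ?_ ?_ ?_
  · exact W.start_mem_support
  · exact W.end_mem_support
  · exact (hmemW _).mpr (Or.inr (Or.inl ⟨hb3R, rfl⟩))
  · simp [Prod.ext_iff, ha12]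
  · simp [Prod.ext_iff, ha13]
  · simp [Prod.ext_iff, ha23]

/-- ST3': 3-leg staircase H-G-H. -/
lemma st3' [Finite α] [Finite β] (hH : H.Connected) {S : Set (α × β)} (hS : (G □ H).IsMPSet S)
    {a1 a2 a3 : α} {b1 b2 b3 : β}
    (h1 : (a1, b1) ∈ S) (h2 : (a2, b2) ∈ S) (h3 : (a3, b3) ∈ S)
    (ha12 : a1 ≠ a2) (ha13 : a1 ≠ a3) (ha23 : a2 ≠ a3)
    (hb12 : b1 ≠ b2) (hb13 : b1 ≠ b3) (hb23 : b2 ≠ b3)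
    (hG12 : ¬ G.Adj a1 a2)
    (P : G.Walk a1 a2) (hP : P.IsMonophonic) (ha3P : a3 ∈ P.support) : False := by
  obtain ⟨R1, hR1⟩ := hH.exists_isMonophonic b1 b3
  obtain ⟨R2, hR2⟩ := hH.exists_isMonophonic b3 b2
  set L1 := R1.boxProdRight G a1 with hL1
  set L2 := P.boxProdLeft H b3 with hL2
  set L3 := R2.boxProdRight G a2 with hL3
  set W := L1.append (L2.append L3) with hWdef
  have hsub : W.toSubgraph = L1.toSubgraph ⊔ (L2.toSubgraph ⊔ L3.toSubgraph) := by
    rw [hWdef, Walk.toSubgraph_append, Walk.toSubgraph_append]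
  have A1 : ∀ h h', h ∈ R1.support → h' ∈ R1.support → H.Adj h h' →
      W.toSubgraph.Adj (a1, h) (a1, h') := fun h h' hh hh' hadj => by
    rw [hsub]
    exact Subgraph.sup_adj.mpr (Or.inl (toSubgraph_adj_boxProdRight _ (hR1.2 _ _ hh hh' hadj)))
  have A2 : ∀ g g', g ∈ P.support → g' ∈ P.support → G.Adj g g' →
      W.toSubgraph.Adj (g, b3) (g', b3) := fun g g' hg hg' hadj => by
    rw [hsub]
    exact Subgraph.sup_adj.mpr (Or.inr (Subgraph.sup_adj.mpr
      (Or.inl (toSubgraph_adj_boxProdLeft _ (hP.2 _ _ hg hg' hadj)))))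
  have A3 : ∀ h h', h ∈ R2.support → h' ∈ R2.support → H.Adj h h' →
      W.toSubgraph.Adj (a2, h) (a2, h') := fun h h' hh hh' hadj => by
    rw [hsub]
    exact Subgraph.sup_adj.mpr (Or.inr (Subgraph.sup_adj.mpr
      (Or.inr (toSubgraph_adj_boxProdRight _ (hR2.2 _ _ hh hh' hadj)))))
  have hmemW : ∀ x : α × β, x ∈ W.support ↔
      (x.2 ∈ R1.support ∧ x.1 = a1) ∨ (x.1 ∈ P.support ∧ x.2 = b3) ∨
      (x.2 ∈ R2.support ∧ x.1 = a2) := by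
    intro x
    rw [hWdef, Walk.mem_support_append_iff, Walk.mem_support_append_iff,
      hL1, hL2, hL3, mem_support_boxProdRight, mem_support_boxProdLeft,
      mem_support_boxProdRight]
  have hpath : W.IsPath := by
    apply Walk.IsPath.append_of_inter (isPath_boxProdRight hR1.1)
    · apply Walk.IsPath.append_of_inter (isPath_boxProdLeft hP.1) (isPath_boxProdRight hR2.1)
      intro x hx2 hx3
      rw [mem_support_boxProdLeft] at hx2
      rw [mem_support_boxProdRight] at hx3
      exact Prod.ext hx3.2 hx2.2
    · intro x hx1 hx23
      rw [mem_support_boxProdRight] at hx1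
      rw [hL2, hL3] at hx23
      rw [Walk.mem_support_append_iff, mem_support_boxProdLeft,
        mem_support_boxProdRight] at hx23
      rcases hx23 with ⟨_, hxa⟩ | ⟨_, hxb⟩
      · exact Prod.ext hx1.2 hxa
      · exact absurd (hx1.2.symm.trans hxb) ha12
  have hmono : W.IsMonophonic := by
    refine ⟨hpath, ?_⟩
    rintro ⟨x1, x2⟩ ⟨y1, y2⟩ hx hy hxy
    rw [hmemW] at hx hy
    rw [boxProd_adj] at hxy
    simp only at hx hy hxy
    rcases hx with ⟨hxR, rfl⟩ | ⟨hxP, rfl⟩ | ⟨hxR, rfl⟩ <;>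
      rcases hy with ⟨hyR, rfl⟩ | ⟨hyP, rfl⟩ | ⟨hyR, rfl⟩ <;>
      rcases hxy with ⟨hg, he⟩ | ⟨hh, he⟩
    -- (1,1)
    · exact absurd hg (G.irrefl)
    · exact A1 _ _ hxR hyR hh
    -- (1,2)
    · subst he; exact A2 _ _ P.start_mem_support hyP hg
    · subst he; exact A1 _ _ hxR R1.end_mem_support hh
    -- (1,3)
    · exact absurd hg hG12
    · exact absurd he ha12
    -- (2,1)
    · subst he; exact A2 _ _ hxP P.start_mem_support hg
    · subst he; exact A1 _ _ R1.end_mem_support hyR hh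
    -- (2,2)
    · exact A2 _ _ hxP hyP hg
    · exact absurd hh (H.irrefl)
    -- (2,3)
    · subst he; exact A2 _ _ hxP P.end_mem_support hg
    · subst he; exact A3 _ _ R2.start_mem_support hyR hh
    -- (3,1)
    · exact absurd hg (fun h => hG12 h.symm)
    · exact absurd he ha12.symm
    -- (3,2)
    · subst he; exact A2 _ _ P.end_mem_support hyP hg
    · subst he; exact A3 _ _ hxR R2.start_mem_support hh
    -- (3,3)
    · exact absurd hg (G.irrefl)
    · exact A3 _ _ hxR hyR hh
  refine hS.not_three hmono h1 h2 h3 ?_ ?_ ?_ ?_ ?_ ?_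
  · exact W.start_mem_support
  · exact W.end_mem_support
  · exact (hmemW _).mpr (Or.inr (Or.inl ⟨ha3P, rfl⟩))
  · simp [Prod.ext_iff, ha12]
  · simp [Prod.ext_iff, ha13]
  · simp [Prod.ext_iff, ha23]

/-- ST4: 4-leg staircase G-H-G-H. -/
lemma st4 [Finite α] [Finite β] (hG : G.Connected) (hH : H.Connected)
    {S : Set (α × β)} (hS : (G □ H).IsMPSet S)
    {a1 a2 a3 : α} {b1 b2 b3 : β}
    (h1 : (a1, b1) ∈ S) (h2 : (a2, b2) ∈ S) (h3 : (a3, b3) ∈ S)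
    (ha12 : a1 ≠ a2) (ha13 : a1 ≠ a3) (ha23 : a2 ≠ a3)
    (hb12 : b1 ≠ b2) (hb13 : b1 ≠ b3) (hb23 : b2 ≠ b3)
    (hH12 : ¬ H.Adj b1 b2) (hG23 : ¬ G.Adj a2 a3)
    (Q1 : G.Walk a1 a2) (hQ1 : Q1.IsMonophonic) (hQ1a : a3 ∉ Q1.support)
    (R2 : H.Walk b2 b3) (hR2 : R2.IsMonophonic) (hR2b : b1 ∉ R2.support) : False := by
  obtain ⟨R1, hR1⟩ := hH.exists_isMonophonic b1 b2
  obtain ⟨Q2, hQ2⟩ := hG.exists_isMonophonic a2 a3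
  set L1 := Q1.boxProdLeft H b1 with hL1
  set L2 := R1.boxProdRight G a2 with hL2
  set L3 := Q2.boxProdLeft H b2 with hL3
  set L4 := R2.boxProdRight G a3 with hL4
  set W := L1.append (L2.append (L3.append L4)) with hWdef
  have hsub : W.toSubgraph =
      L1.toSubgraph ⊔ (L2.toSubgraph ⊔ (L3.toSubgraph ⊔ L4.toSubgraph)) := by
    rw [hWdef, Walk.toSubgraph_append, Walk.toSubgraph_append, Walk.toSubgraph_append]
  have A1 : ∀ g g', g ∈ Q1.support → g' ∈ Q1.support → G.Adj g g' →
      W.toSubgraph.Adj (g, b1) (g', b1) := fun g g' hg hg' hadj => by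
    rw [hsub]
    exact Subgraph.sup_adj.mpr (Or.inl (toSubgraph_adj_boxProdLeft _ (hQ1.2 _ _ hg hg' hadj)))
  have A2 : ∀ h h', h ∈ R1.support → h' ∈ R1.support → H.Adj h h' →
      W.toSubgraph.Adj (a2, h) (a2, h') := fun h h' hh hh' hadj => by
    rw [hsub]
    exact Subgraph.sup_adj.mpr (Or.inr (Subgraph.sup_adj.mpr
      (Or.inl (toSubgraph_adj_boxProdRight _ (hR1.2 _ _ hh hh' hadj)))))
  have A3 : ∀ g g', g ∈ Q2.support → g' ∈ Q2.support → G.Adj g g' →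
      W.toSubgraph.Adj (g, b2) (g', b2) := fun g g' hg hg' hadj => by
    rw [hsub]
    exact Subgraph.sup_adj.mpr (Or.inr (Subgraph.sup_adj.mpr (Or.inr (Subgraph.sup_adj.mpr
      (Or.inl (toSubgraph_adj_boxProdLeft _ (hQ2.2 _ _ hg hg' hadj)))))))
  have A4 : ∀ h h', h ∈ R2.support → h' ∈ R2.support → H.Adj h h' →
      W.toSubgraph.Adj (a3, h) (a3, h') := fun h h' hh hh' hadj => by
    rw [hsub]
    exact Subgraph.sup_adj.mpr (Or.inr (Subgraph.sup_adj.mpr (Or.inr (Subgraph.sup_adj.mpr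
      (Or.inr (toSubgraph_adj_boxProdRight _ (hR2.2 _ _ hh hh' hadj)))))))
  have hmemW : ∀ x : α × β, x ∈ W.support ↔
      (x.1 ∈ Q1.support ∧ x.2 = b1) ∨ (x.2 ∈ R1.support ∧ x.1 = a2) ∨
      (x.1 ∈ Q2.support ∧ x.2 = b2) ∨ (x.2 ∈ R2.support ∧ x.1 = a3) := by
    intro x
    rw [hWdef, Walk.mem_support_append_iff, Walk.mem_support_append_iff,
      Walk.mem_support_append_iff, hL1, hL2, hL3, hL4, mem_support_boxProdLeft,
      mem_support_boxProdRight, mem_support_boxProdLeft, mem_support_boxProdRight]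
  have hpath : W.IsPath := by
    apply Walk.IsPath.append_of_inter (isPath_boxProdLeft hQ1.1)
    · apply Walk.IsPath.append_of_inter (isPath_boxProdRight hR1.1)
      · apply Walk.IsPath.append_of_inter (isPath_boxProdLeft hQ2.1)
          (isPath_boxProdRight hR2.1)
        intro x hx3 hx4
        rw [mem_support_boxProdLeft] at hx3
        rw [mem_support_boxProdRight] at hx4
        exact Prod.ext hx4.2 hx3.2
      · intro x hx2 hx34
        rw [mem_support_boxProdRight] at hx2
        rw [hL3, hL4] at hx34
        rw [Walk.mem_support_append_iff, mem_support_boxProdLeft,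
          mem_support_boxProdRight] at hx34
        rcases hx34 with ⟨_, hxa⟩ | ⟨_, hxb⟩
        · exact Prod.ext hx2.2 hxa
        · exact absurd (hx2.2.symm.trans hxb) ha23
    · intro x hx1 hx234
      rw [mem_support_boxProdLeft] at hx1
      rw [hL2, hL3, hL4] at hx234
      rw [Walk.mem_support_append_iff, Walk.mem_support_append_iff,
        mem_support_boxProdRight, mem_support_boxProdLeft,
        mem_support_boxProdRight] at hx234
      rcases hx234 with ⟨_, hxa⟩ | ⟨hxm, hxb⟩ | ⟨hxm, hxc⟩
      · exact Prod.ext hxa hx1.2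
      · exact absurd (hx1.2.symm.trans hxb) hb12
      · exact absurd (hxc ▸ hx1.1) hQ1a
  have hmono : W.IsMonophonic := by
    refine ⟨hpath, ?_⟩
    rintro ⟨x1, x2⟩ ⟨y1, y2⟩ hx hy hxy
    rw [hmemW] at hx hy
    rw [boxProd_adj] at hxy
    simp only at hx hy hxy
    rcases hx with ⟨hxQ, rfl⟩ | ⟨hxR, rfl⟩ | ⟨hxQ, rfl⟩ | ⟨hxR, rfl⟩ <;>
      rcases hy with ⟨hyQ, rfl⟩ | ⟨hyR, rfl⟩ | ⟨hyQ, rfl⟩ | ⟨hyR, rfl⟩ <;>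
      rcases hxy with ⟨hg, he⟩ | ⟨hh, he⟩
    -- (1,1)
    · exact A1 _ _ hxQ hyQ hg
    · exact absurd hh (H.irrefl)
    -- (1,2)
    · subst he; exact A1 _ _ hxQ Q1.end_mem_support hg
    · subst he; exact A2 _ _ R1.start_mem_support hyR hh
    -- (1,3)
    · exact absurd he hb12
    · exact absurd hh hH12
    -- (1,4)
    · subst he; exact absurd hyR hR2b
    · subst he; exact absurd hxQ hQ1a
    -- (2,1)
    · subst he; exact A1 _ _ Q1.end_mem_support hyQ hg
    · subst he; exact A2 _ _ hxR R1.start_mem_support hh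
    -- (2,2)
    · exact absurd hg (G.irrefl)
    · exact A2 _ _ hxR hyR hh
    -- (2,3)
    · subst he; exact A3 _ _ Q2.start_mem_support hyQ hg
    · subst he; exact A2 _ _ hxR R1.end_mem_support hh
    -- (2,4)
    · exact absurd hg hG23
    · exact absurd he ha23
    -- (3,1)
    · exact absurd he hb12.symm
    · exact absurd hh (fun h => hH12 h.symm)
    -- (3,2)
    · subst he; exact A3 _ _ hxQ Q2.start_mem_support hg
    · subst he; exact A2 _ _ R1.end_mem_support hyR hh
    -- (3,3)
    · exact A3 _ _ hxQ hyQ hg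
    · exact absurd hh (H.irrefl)
    -- (3,4)
    · subst he; exact A3 _ _ hxQ Q2.end_mem_support hg
    · subst he; exact A4 _ _ R2.start_mem_support hyR hh
    -- (4,1)
    · subst he; exact absurd hxR hR2b
    · subst he; exact absurd hyQ hQ1a
    -- (4,2)
    · exact absurd hg (fun h => hG23 h.symm)
    · exact absurd he ha23.symm
    -- (4,3)
    · subst he; exact A3 _ _ Q2.end_mem_support hyQ hg
    · subst he; exact A4 _ _ hxR R2.start_mem_support hh
    -- (4,4)
    · exact absurd hg (G.irrefl)
    · exact A4 _ _ hxR hyR hh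
  refine hS.not_three hmono h1 h2 h3 ?_ ?_ ?_ ?_ ?_ ?_
  · exact W.start_mem_support
  · exact (hmemW _).mpr (Or.inr (Or.inl ⟨R1.end_mem_support, rfl⟩))
  · exact W.end_mem_support
  · simp [Prod.ext_iff, ha12]
  · simp [Prod.ext_iff, ha13]
  · simp [Prod.ext_iff, ha23]

/-- CORE: a triple with `¬H.Adj b1 b2` and `¬G.Adj a2 a3` is impossible. -/
lemma core [Finite α] [Finite β] (hG : G.Connected) (hH : H.Connected)
    {S : Set (α × β)} (hS : (G □ H).IsMPSet S)
    {a1 a2 a3 : α} {b1 b2 b3 : β}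
    (h1 : (a1, b1) ∈ S) (h2 : (a2, b2) ∈ S) (h3 : (a3, b3) ∈ S)
    (ha12 : a1 ≠ a2) (ha13 : a1 ≠ a3) (ha23 : a2 ≠ a3)
    (hb12 : b1 ≠ b2) (hb13 : b1 ≠ b3) (hb23 : b2 ≠ b3)
    (hH12 : ¬ H.Adj b1 b2) (hG23 : ¬ G.Adj a2 a3) : False := by
  by_cases hQ : ∃ Q1 : G.Walk a1 a2, Q1.IsMonophonic ∧ a3 ∉ Q1.support
  · obtain ⟨Q1, hQ1, hQ1a⟩ := hQ
    by_cases hR : ∃ R2 : H.Walk b2 b3, R2.IsMonophonic ∧ b1 ∉ R2.support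
    · obtain ⟨R2, hR2, hR2b⟩ := hR
      exact st4 hG hH hS h1 h2 h3 ha12 ha13 ha23 hb12 hb13 hb23 hH12 hG23 Q1 hQ1 hQ1a
        R2 hR2 hR2b
    · push_neg at hR
      have hH23 : ¬ H.Adj b2 b3 := by
        intro hadj
        have hmem := hR (Walk.cons hadj Walk.nil) (Walk.isMonophonic_single hadj)
        simp only [Walk.support_cons, Walk.support_nil, List.mem_cons,
          List.mem_singleton, List.not_mem_nil, or_false] at hmem
        rcases hmem with h | h
        · exact hb12 h
        · exact hb13 h
      obtain ⟨R, hR0⟩ := hH.exists_isMonophonic b2 b3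
      exact st3 hG hS h2 h3 h1 ha23 ha12.symm ha13.symm hb23 hb12.symm hb13.symm hH23
        R hR0 (hR R hR0)
  · push_neg at hQ
    have hG12 : ¬ G.Adj a1 a2 := by
      intro hadj
      have hmem := hQ (Walk.cons hadj Walk.nil) (Walk.isMonophonic_single hadj)
      simp only [Walk.support_cons, Walk.support_nil, List.mem_cons,
        List.mem_singleton, List.not_mem_nil, or_false] at hmem
      rcases hmem with h | h
      · exact ha13 h.symm
      · exact ha23 h.symm
    obtain ⟨P, hP⟩ := hG.exists_isMonophonic a1 a2
    exact st3' hH hS h1 h2 h3 ha12 ha13 ha23 hb12 hb13 hb23 hG12 P hP (hQ P hP)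

/-- FINISH: a triple containing an `H`-nonadjacent pair and a `G`-nonadjacent pair. -/
lemma finish [Finite α] [Finite β] (hG : G.Connected) (hH : H.Connected)
    {S : Set (α × β)} (hS : (G □ H).IsMPSet S)
    (hfst : Set.InjOn Prod.fst S) (hsnd : Set.InjOn Prod.snd S)
    {u v w : α × β} (hu : u ∈ S) (hv : v ∈ S) (hw : w ∈ S)
    (huv : u ≠ v) (huw : u ≠ w) (hvw : v ≠ w)
    (hH' : ¬ H.Adj u.2 v.2)
    (hGd : ¬ G.Adj u.1 v.1 ∨ ¬ G.Adj u.1 w.1 ∨ ¬ G.Adj v.1 w.1) : False := by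
  have hu' : (u.1, u.2) ∈ S := by simpa using hu
  have hv' : (v.1, v.2) ∈ S := by simpa using hv
  have hw' : (w.1, w.2) ∈ S := by simpa using hw
  have auv : u.1 ≠ v.1 := fun h => huv (hfst hu hv h)
  have auw : u.1 ≠ w.1 := fun h => huw (hfst hu hw h)
  have avw : v.1 ≠ w.1 := fun h => hvw (hfst hv hw h)
  have buv : u.2 ≠ v.2 := fun h => huv (hsnd hu hv h)
  have buw : u.2 ≠ w.2 := fun h => huw (hsnd hu hw h)
  have bvw : v.2 ≠ w.2 := fun h => hvw (hsnd hv hw h)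
  rcases hGd with hg | hg | hg
  · by_cases hvwG : G.Adj v.1 w.1
    · by_cases huwG : G.Adj u.1 w.1
      · -- explicit induced path u.1 - w.1 - v.1 through w.1
        have hP := Walk.isMonophonic_double huwG hvwG.symm hg auv
        refine st3' hH hS hu' hv' hw' auv auw avw buv buw bvw hg _ hP ?_
        simp
      · exact core hG hH hS hv' hu' hw' auv.symm avw auw buv.symm bvw buw
          (fun h => hH' h.symm) huwG
    · exact core hG hH hS hu' hv' hw' auv auw avw buv buw bvw hH' hvwG
  · exact core hG hH hS hv' hu' hw' auv.symm avw auw buv.symm bvw buw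
      (fun h => hH' h.symm) hg
  · exact core hG hH hS hu' hv' hw' auv auw avw buv buw bvw hH' hg

theorem varied_mpSet_card_le_two' {α β : Type*} [Fintype α] [Fintype β]
    (G : SimpleGraph α) (H : SimpleGraph β) (hG : G.Connected) (hH : H.Connected)
    (S : Set (α × β)) (hS : (G □ H).IsMPSet S)
    (hfst : Set.InjOn Prod.fst S) (hsnd : Set.InjOn Prod.snd S)
    (hGclique : ¬ G.IsClique (Prod.fst '' S)) (hHclique : ¬ H.IsClique (Prod.snd '' S)) :
    S.ncard ≤ 2 := by
  by_contra hcard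
  push_neg at hcard
  -- extract the H-nonadjacent pair A, B
  rw [isClique_iff, Set.Pairwise] at hHclique hGclique
  push_neg at hHclique hGclique
  obtain ⟨x, hx, y, hy, hxy, hnH⟩ := hHclique
  obtain ⟨x', hx', y', hy', hxy', hnG⟩ := hGclique
  obtain ⟨A, hA, rfl⟩ := hx
  obtain ⟨B, hB, rfl⟩ := hy
  obtain ⟨C, hC, rfl⟩ := hx'
  obtain ⟨D, hD, rfl⟩ := hy'
  have hAB : A ≠ B := fun h => hxy (by rw [h])
  have hCD : C ≠ D := fun h => hxy' (by rw [h])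
  -- a third point distinct from any two given points
  have hthird : ∀ a b : α × β, ∃ t ∈ S, t ≠ a ∧ t ≠ b := by
    intro a b
    by_contra hcon
    push_neg at hcon
    have hsub : S ⊆ {a, b} := by
      intro t ht
      by_cases h : t = a
      · exact Or.inl h
      · exact Or.inr (hcon t ht h)
    have hle : S.ncard ≤ ({a, b} : Set (α × β)).ncard :=
      Set.ncard_le_ncard hsub (Set.toFinite _)
    have h2 : ({a, b} : Set (α × β)).ncard ≤ 2 := by
      refine le_trans (Set.ncard_insert_le _ _) ?_
      simp [Set.ncard_singleton]
    omega
  have finAB : ∀ t ∈ S, t ≠ A → t ≠ B →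
      (¬ G.Adj A.1 B.1 ∨ ¬ G.Adj A.1 t.1 ∨ ¬ G.Adj B.1 t.1) → False := by
    intro t ht h1 h2 hd
    exact finish hG hH hS hfst hsnd hA hB ht hAB h1.symm h2.symm hnH hd
  by_cases hCA : C = A
  · subst hCA
    by_cases hDB : D = B
    · subst hDB
      obtain ⟨t, ht, htA, htB⟩ := hthird C D
      exact finAB t ht htA htB (Or.inl hnG)
    · exact finAB D hD (Ne.symm hCD) hDB (Or.inr (Or.inl hnG))
  · by_cases hCB : C = B
    · subst hCB
      by_cases hDA : D = A
      · subst hDA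
        obtain ⟨t, ht, htA, htB⟩ := hthird D C
        exact finAB t ht htA htB (Or.inl (fun h => hnG h.symm))
      · exact finAB D hD hDA (Ne.symm hCD) (Or.inr (Or.inr hnG))
    · by_cases hDA : D = A
      · subst hDA
        exact finAB C hC hCA hCB (Or.inr (Or.inl (fun h => hnG h.symm)))
      · by_cases hDB : D = B
        · subst hDB
          exact finAB C hC hCA hCB (Or.inr (Or.inr (fun h => hnG h.symm)))
        · by_cases g2 : G.Adj A.1 C.1
          · by_cases g3 : G.Adj B.1 C.1
            · by_cases hh1 : H.Adj A.2 C.2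
              · by_cases hh2 : H.Adj B.2 C.2
                · -- chain A - C - B
                  have aAC : A.1 ≠ C.1 := fun h => hCA (hfst hC hA h.symm)
                  have aAB : A.1 ≠ B.1 := fun h => hAB (hfst hA hB h)
                  have aCB : C.1 ≠ B.1 := fun h => hCB (hfst hC hB h)
                  have bAC : A.2 ≠ C.2 := fun h => hCA (hsnd hC hA h.symm)
                  have bCB : C.2 ≠ B.2 := fun h => hCB (hsnd hC hB h)
                  exact chain_false hS (by simpa using hA) (by simpa using hC)
                    (by simpa using hB) aAC aAB aCB bAC hxy bCB g2 g3.symm hh1 hh2.symm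
                · exact finish hG hH hS hfst hsnd hB hC hD (Ne.symm hCB) (Ne.symm hDB) hCD
                    hh2 (Or.inr (Or.inr hnG))
              · exact finish hG hH hS hfst hsnd hA hC hD (Ne.symm hCA) (Ne.symm hDA) hCD
                  hh1 (Or.inr (Or.inr hnG))
            · exact finAB C hC hCA hCB (Or.inr (Or.inr g3))
          · exact finAB C hC hCA hCB (Or.inr (Or.inl g2))

end SimpleGraph

/-- A varied monophonic position set of `G □ H` (distinct first coordinates,
distinct second coordinates, neither projection a clique) has at most 2 vertices. -/
theorem varied_mpSet_card_le_two {α β : Type*} [Fintype α] [Fintype β]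
    (G : SimpleGraph α) (H : SimpleGraph β) (hG : G.Connected) (hH : H.Connected)
    (S : Set (α × β)) (hS : (G □ H).IsMPSet S)
    (hfst : Set.InjOn Prod.fst S) (hsnd : Set.InjOn Prod.snd S)
    (hGclique : ¬ G.IsClique (Prod.fst '' S)) (hHclique : ¬ H.IsClique (Prod.snd '' S)) :
    S.ncard ≤ 2 := by
  exact SimpleGraph.varied_mpSet_card_le_two' G H hG hH S hS hfst hsnd hGclique hHclique
end

section
/- Let G and H be finite connected graphs and let S be a monophonic position set of the Cartesian product G □ H with |S| > max{ω(G), ω(H)} such that π_G(S) induces a clique in G (this covers both the layered case, where |π_G(S)| = 1, and the cliquey case). Then every vertex of π_G(S) is a simplicial vertex of G. -/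
open SimpleGraph

namespace MpAux

variable {V : Type*}

/-- `a` immediately followed by `b` somewhere in `l`. -/
def Step (l : List V) (a b : V) : Prop := ∃ p s, l = p ++ a :: b :: s

/-- `l` is the support of an induced (monophonic) path. -/
def IndL (K : SimpleGraph V) (l : List V) : Prop :=
  l.Chain' K.Adj ∧ l.Nodup ∧
    ∀ a ∈ l, ∀ b ∈ l, K.Adj a b → Step l a b ∨ Step l b a

theorem Step.mem₁ {l : List V} {a b : V} (h : Step l a b) : a ∈ l := by
  obtain ⟨p, s, rfl⟩ := h; simp

theorem Step.mem₂ {l : List V} {a b : V} (h : Step l a b) : b ∈ l := by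
  obtain ⟨p, s, rfl⟩ := h; simp

theorem Step.cons {l : List V} {a b x : V} (h : Step l a b) : Step (x :: l) a b := by
  obtain ⟨p, s, rfl⟩ := h; exact ⟨x :: p, s, rfl⟩

theorem Step.append_left {l₂ l : List V} {a b : V} (h : Step l a b) :
    Step (l₂ ++ l) a b := by
  obtain ⟨p, s, rfl⟩ := h; exact ⟨l₂ ++ p, s, by simp⟩

theorem Step.append_right {l l₂ : List V} {a b : V} (h : Step l a b) :
    Step (l ++ l₂) a b := by
  obtain ⟨p, s, rfl⟩ := h; exact ⟨p, s ++ l₂, by simp⟩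

theorem Step.map {W : Type*} {l : List V} {a b : V} (f : V → W) (h : Step l a b) :
    Step (l.map f) (f a) (f b) := by
  obtain ⟨p, s, rfl⟩ := h; exact ⟨p.map f, s.map f, by simp⟩

theorem Step.reverse' {l : List V} {a b : V} (h : Step l a b) :
    Step l.reverse b a := by
  obtain ⟨p, s, rfl⟩ := h
  refine ⟨s.reverse, p.reverse, ?_⟩
  simp

/-- In a nodup list, nothing follows the last element. -/
theorem Step.not_getLast {l : List V} {a b : V} (h : Step l a b)
    (hn : l.Nodup) (hl : l.getLast? = some a) : False := by
  obtain ⟨p, s, rfl⟩ := h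
  have h1 : (p ++ a :: b :: s).getLast? = (b :: s).getLast? := by
    rw [List.getLast?_append]
    cases hx : (b :: s).getLast? with
    | none => simp at hx
    | some x => simp [hx]
  rw [h1] at hl
  have : a ∈ b :: s := List.mem_of_mem_getLast? hl
  exact (List.nodup_cons.mp (List.nodup_append.mp hn).2.1).1 this

/-- If `b` is adjacent-in-list to the last element `q`, the list ends with `[b, q]`. -/
theorem Step.eq_last {l : List V} {b q : V} (h : Step l b q)
    (hn : l.Nodup) (hl : l.getLast? = some q) : ∃ p, l = p ++ [b, q] := by
  obtain ⟨p, s, rfl⟩ := h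
  rcases s with _ | ⟨x, s⟩
  · exact ⟨p, rfl⟩
  · exfalso
    have h1 : (p ++ b :: q :: x :: s).getLast? = (x :: s).getLast? := by
      rw [List.getLast?_append]
      cases hx : (x :: s).getLast? with
      | none => simp at hx
      | some z => simp [hx, List.getLast?_cons_cons]
    rw [h1] at hl
    have hq : q ∈ x :: s := List.mem_of_mem_getLast? hl
    have hn' : (q :: x :: s).Nodup := ((List.nodup_append.mp hn).2.1).of_cons
    exact (List.nodup_cons.mp hn').1 hq

theorem step_append_left {l₁ l₂ p s : List V} {a b : V}
    (he : l₁ ++ l₂ = p ++ a :: b :: s) (hb : b ∈ l₁) (hn : (l₁ ++ l₂).Nodup) :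
    Step l₁ a b := by
  induction l₁ generalizing p with
  | nil => simp at hb
  | cons x t ih =>
    have hn' : (t ++ l₂).Nodup := (List.nodup_cons.mp (by simpa using hn)).2
    have hxn : x ∉ t ++ l₂ := (List.nodup_cons.mp (by simpa using hn)).1
    rcases p with _ | ⟨y, p⟩
    · simp only [List.nil_append, List.cons_append, List.cons.injEq] at he
      obtain ⟨rfl, he2⟩ := he
      rcases List.mem_cons.mp hb with rfl | hbt
      · exfalso
        apply hxn
        rw [he2]
        simp
      · obtain ⟨z, t', rfl⟩ := List.exists_cons_of_ne_nil (List.ne_nil_of_mem hbt)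
        simp only [List.cons_append, List.cons.injEq] at he2
        obtain ⟨rfl, _⟩ := he2
        exact ⟨[], t', rfl⟩
    · simp only [List.cons_append, List.cons.injEq] at he
      obtain ⟨rfl, he2⟩ := he
      have hb' : b ∈ t := by
        rcases List.mem_cons.mp hb with rfl | h
        · exfalso
          apply hxn
          rw [he2]
          simp
        · exact h
      exact (ih he2 hb' hn').cons

theorem step_append_right {l₁ l₂ p s : List V} {a b : V}
    (he : l₁ ++ l₂ = p ++ a :: b :: s) (ha : a ∈ l₂) (hn : (l₁ ++ l₂).Nodup) :
    Step l₂ a b := by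
  induction l₁ generalizing p with
  | nil => exact ⟨p, s, by simpa using he⟩
  | cons x t ih =>
    have hn' : (t ++ l₂).Nodup := (List.nodup_cons.mp (by simpa using hn)).2
    have hxn : x ∉ t ++ l₂ := (List.nodup_cons.mp (by simpa using hn)).1
    rcases p with _ | ⟨y, p⟩
    · simp only [List.nil_append, List.cons_append, List.cons.injEq] at he
      obtain ⟨rfl, he2⟩ := he
      exact absurd (by simp [ha] : x ∈ t ++ l₂) hxn
    · simp only [List.cons_append, List.cons.injEq] at he
      obtain ⟨rfl, he2⟩ := he
      exact ih he2 hn'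

theorem IndL.nodup {K : SimpleGraph V} {l : List V} (h : IndL K l) : l.Nodup := h.2.1

theorem IndL.chain' {K : SimpleGraph V} {l : List V} (h : IndL K l) : l.Chain' K.Adj := h.1

theorem indL_append_left {K : SimpleGraph V} {l₁ l₂ : List V} (h : IndL K (l₁ ++ l₂)) :
    IndL K l₁ := by
  refine ⟨(List.isChain_append.mp h.1).1, (List.nodup_append'.mp h.2.1).1, ?_⟩
  intro a ha b hb hab
  rcases h.2.2 a (by simp [ha]) b (by simp [hb]) hab with ⟨p, s, he⟩ | ⟨p, s, he⟩
  · exact Or.inl (step_append_left he hb h.2.1)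
  · exact Or.inr (step_append_left he ha h.2.1)

theorem indL_append_right {K : SimpleGraph V} {l₁ l₂ : List V} (h : IndL K (l₁ ++ l₂)) :
    IndL K l₂ := by
  refine ⟨(List.isChain_append.mp h.1).2.1, (List.nodup_append'.mp h.2.1).2.1, ?_⟩
  intro a ha b hb hab
  rcases h.2.2 a (by simp [ha]) b (by simp [hb]) hab with ⟨p, s, he⟩ | ⟨p, s, he⟩
  · exact Or.inl (step_append_right he ha h.2.1)
  · exact Or.inr (step_append_right he hb h.2.1)

theorem IndL.reverse {K : SimpleGraph V} {l : List V} (h : IndL K l) : IndL K l.reverse := by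
  refine ⟨?_, List.nodup_reverse.mpr h.2.1, ?_⟩
  · rw [List.Chain', List.isChain_reverse]
    exact h.1.imp fun a b hab => hab.symm
  · intro a ha b hb hab
    rcases h.2.2 a (by simpa using ha) b (by simpa using hb) hab with ⟨p, s, he⟩ | ⟨p, s, he⟩
    · refine Or.inr ⟨s.reverse, p.reverse, ?_⟩
      rw [he]; simp
    · refine Or.inl ⟨s.reverse, p.reverse, ?_⟩
      rw [he]; simp

theorem indL_singleton {K : SimpleGraph V} (a : V) : IndL K [a] := by
  refine ⟨by simp [List.Chain'], by simp, ?_⟩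
  intro x hx y hy hxy
  simp only [List.mem_singleton] at hx hy
  subst hx; subst hy
  exact absurd hxy K.irrefl

theorem indL_pair {K : SimpleGraph V} {a b : V} (h : K.Adj a b) : IndL K [a, b] := by
  refine ⟨by simp [List.Chain', h], by simp [h.ne], ?_⟩
  intro x hx y hy hxy
  simp only [List.mem_cons, List.mem_singleton, List.not_mem_nil, or_false] at hx hy
  rcases hx with rfl | rfl <;> rcases hy with rfl | rfl
  · exact absurd hxy K.irrefl
  · exact Or.inl ⟨[], [], rfl⟩
  · exact Or.inr ⟨[], [], rfl⟩
  · exact absurd hxy K.irrefl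

section Geo

variable {K : SimpleGraph V}

theorem indL_support_of_length_eq_dist (hK : K.Connected) {a b : V} (p : K.Walk a b) :
    p.length = K.dist a b → IndL K p.support := by
  classical
  induction p with
  | nil => intro _; simpa using indL_singleton (K := K) _
  | @cons u v w h q ih =>
    intro hlen
    rw [Walk.length_cons] at hlen
    have hqd : K.dist v w ≤ q.length := dist_le q
    have htri : K.dist u w ≤ 1 + K.dist v w := by
      have h1 : K.dist u v ≤ 1 := (dist_eq_one_iff_adj.mpr h).le
      have h2 := hK.dist_triangle (u := u) (v := v) (w := w)
      omega
    have hlen' : q.length = K.dist v w := by omega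
    have IH := ih hlen'
    have key : ∀ x, x ∈ q.support → K.Adj u x → x = v := by
      intro x hx hux
      have hsplit : (q.takeUntil x hx).length + (q.dropUntil x hx).length = q.length := by
        rw [← Walk.length_append, q.take_spec hx]
      have hd : K.dist x w ≤ (q.dropUntil x hx).length := dist_le _
      have htri2 : K.dist u w ≤ 1 + K.dist x w := by
        have h1 : K.dist u x ≤ 1 := (dist_eq_one_iff_adj.mpr hux).le
        have h2 := hK.dist_triangle (u := u) (v := x) (w := w)
        omega
      have h0 : (q.takeUntil x hx).length = 0 := by omega
      have := Walk.eq_of_length_eq_zero h0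
      exact this.symm
    have hu : u ∉ q.support := by
      intro hx
      have hsplit : (q.takeUntil u hx).length + (q.dropUntil u hx).length = q.length := by
        rw [← Walk.length_append, q.take_spec hx]
      have hd : K.dist u w ≤ (q.dropUntil u hx).length := dist_le _
      omega
    refine ⟨Walk.isChain_adj_support _, ?_, ?_⟩
    · rw [Walk.support_cons]
      exact List.nodup_cons.mpr ⟨hu, IH.nodup⟩
    · rw [Walk.support_cons]
      intro x hx y hy hxy
      rcases List.mem_cons.mp hx with rfl | hx' <;> rcases List.mem_cons.mp hy with rfl | hy'
      · exact absurd hxy K.irrefl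
      · have : y = v := key y hy' hxy
        subst this
        exact Or.inl ⟨[], q.support.tail, by
          conv_lhs => rw [q.support_eq_cons]
          simp⟩
      · have : x = v := key x hx' hxy.symm
        subst this
        exact Or.inr ⟨[], q.support.tail, by
          conv_lhs => rw [q.support_eq_cons]
          simp⟩
      · rcases IH.2.2 x hx' y hy' hxy with hs | hs
        · exact Or.inl hs.cons
        · exact Or.inr hs.cons

theorem exists_geo (hK : K.Connected) (a b : V) :
    ∃ l : List V, IndL K l ∧ l.head? = some a ∧ l.getLast? = some b := by
  obtain ⟨p, hp⟩ := hK.exists_walk_length_eq_dist a b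
  refine ⟨p.support, indL_support_of_length_eq_dist hK p hp, ?_, ?_⟩
  · rw [p.support_eq_cons]; rfl
  · rw [List.getLast?_eq_getLast_of_ne_nil p.support_ne_nil]
    rw [p.getLast_support]

theorem toSubgraph_adj_of_step {u v : V} (p : K.Walk u v) {x y : V}
    (h : Step p.support x y) : p.toSubgraph.Adj x y := by
  induction p with
  | nil =>
    obtain ⟨pre, suf, he⟩ := h
    have := congrArg List.length he
    simp at this
    omega
  | @cons u' v' w' hadj q ih =>
    obtain ⟨pre, suf, he⟩ := h
    rw [Walk.support_cons] at he
    rcases pre with _ | ⟨z, pre⟩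
    · simp only [List.nil_append, List.cons.injEq] at he
      obtain ⟨rfl, he2⟩ := he
      have hyv : y = v' := by
        have := congrArg List.head? he2.symm
        rw [q.support_eq_cons] at this
        exact Option.some.inj this
      subst hyv
      exact Subgraph.sup_adj.mpr (Or.inl (by simp))
    · simp only [List.cons_append, List.cons.injEq] at he
      obtain ⟨rfl, he2⟩ := he
      exact Subgraph.sup_adj.mpr (Or.inr (ih ⟨pre, suf, he2⟩))

theorem exists_mono_walk :
    ∀ (l : List V), IndL K l → ∀ a, l.head? = some a →
      ∃ (b : V) (p : K.Walk a b), p.support = l ∧ p.IsMonophonic := by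
  intro l
  induction l with
  | nil => intro _ a ha; simp at ha
  | cons x t ih =>
    intro hind a ha
    have hax : x = a := by simpa using ha
    subst hax
    rcases t with _ | ⟨c, t'⟩
    · refine ⟨x, Walk.nil, by simp, Walk.IsPath.nil, ?_⟩
      intro p q hp hq hadj
      simp only [Walk.support_nil, List.mem_singleton] at hp hq
      subst hp; subst hq
      exact absurd hadj K.irrefl
    · have hadj : K.Adj x c := by
        have := hind.chain'
        exact (List.isChain_cons_cons.mp (by exact this)).1
      have hind' : IndL K (c :: t') := indL_append_right (l₁ := [x]) (by simpa using hind)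
      obtain ⟨b, q, hqsup, hq'⟩ := ih hind' c rfl
      refine ⟨b, Walk.cons hadj q, by simp [hqsup], ?_, ?_⟩
      · rw [Walk.isPath_def, Walk.support_cons, hqsup]
        exact hind.nodup
      · intro p r hp hr hpr
        have hsup : (Walk.cons hadj q).support = x :: c :: t' := by simp [hqsup]
        rw [hsup] at hp hr
        rcases hind.2.2 p hp r hr hpr with hs | hs
        · exact toSubgraph_adj_of_step _ (by rwa [hsup])
        · exact (toSubgraph_adj_of_step (Walk.cons hadj q) (x := r) (y := p) (by rwa [hsup])).symm

end Geo

theorem indL_nil {K : SimpleGraph V} : IndL K ([] : List V) := by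
  refine ⟨by simp [List.Chain'], by simp, ?_⟩
  intro a ha
  simp at ha

section Stair

variable {α' β' : Type*} {G : SimpleGraph α'} {H : SimpleGraph β'}

theorem indL_map (c : α') {l : List β'} (h : IndL H l) :
    IndL (G □ H) (l.map (fun x => (c, x))) := by
  refine ⟨?_, ?_, ?_⟩
  · rw [List.Chain', List.isChain_map]
    exact h.chain'.imp fun a b hab => by
      rw [boxProd_adj]; exact Or.inr ⟨hab, rfl⟩
  · exact h.nodup.map (fun a b hab => by simpa using hab)
  · intro x hx y hy hxy
    obtain ⟨xs, hxs, rfl⟩ := List.mem_map.mp hx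
    obtain ⟨ys, hys, rfl⟩ := List.mem_map.mp hy
    rw [boxProd_adj] at hxy
    rcases hxy with ⟨h1, h2⟩ | ⟨h1, h2⟩
    · exact absurd h1 G.irrefl
    · rcases h.2.2 xs hxs ys hys h1 with hs | hs
      · exact Or.inl (hs.map _)
      · exact Or.inr (hs.map _)

/-- Consecutive-segment condition: columns adjacent, cross at a common height. -/
def SegOK (G : SimpleGraph α') (s t : α' × List β') : Prop :=
  G.Adj s.1 t.1 ∧ ∃ z, s.2.getLast? = some z ∧ t.2.head? = some z ∧
    ∀ w ∈ s.2, w ∈ t.2 → w = z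

/-- Far-segment condition. -/
def SegFar (G : SimpleGraph α') (H : SimpleGraph β') (s t : α' × List β') : Prop :=
  (s.1 = t.1 → (∀ w ∈ s.2, w ∉ t.2) ∧ ∀ w ∈ s.2, ∀ v ∈ t.2, ¬H.Adj w v) ∧
    (G.Adj s.1 t.1 → ∀ w ∈ s.2, w ∉ t.2)

def Stair (G : SimpleGraph α') (H : SimpleGraph β') : List (α' × List β') → Prop
  | [] => True
  | [_] => True
  | s :: t :: r => SegOK G s t ∧ (∀ w ∈ r, SegFar G H s w) ∧ Stair G H (t :: r)

def flat (ss : List (α' × List β')) : List (α' × β') :=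
  ss.flatMap fun s => s.2.map (fun x => (s.1, x))

theorem mem_flat {ss : List (α' × List β')} {x : α' × β'} :
    x ∈ flat ss ↔ ∃ s ∈ ss, s.1 = x.1 ∧ x.2 ∈ s.2 := by
  simp only [flat, List.mem_flatMap, List.mem_map]
  constructor
  · rintro ⟨s, hs, w, hw, rfl⟩
    exact ⟨s, hs, rfl, hw⟩
  · rintro ⟨s, hs, h1, h2⟩
    exact ⟨s, hs, x.2, h2, by rw [h1]⟩

theorem flat_cons {s : α' × List β'} {r : List (α' × List β')} :
    flat (s :: r) = s.2.map (fun x => (s.1, x)) ++ flat r := by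
  simp [flat]

theorem head?_flat_cons {s : α' × List β'} {r : List (α' × List β')} {z : β'}
    (h : s.2.head? = some z) : (flat (s :: r)).head? = some (s.1, z) := by
  rw [flat_cons]
  obtain ⟨u, h2⟩ : ∃ u, s.2 = z :: u := by
    cases hs2 : s.2 with
    | nil => rw [hs2] at h; simp at h
    | cons a u =>
      rw [hs2] at h
      simp only [List.head?_cons, Option.some.injEq] at h
      exact ⟨u, by rw [h]⟩
  rw [h2]
  simp

theorem stair_indL : ∀ (ss : List (α' × List β')), Stair G H ss →
    (∀ s ∈ ss, s.2 ≠ [] ∧ IndL H s.2) → IndL (G □ H) (flat ss)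
  | [] => fun _ _ => by rw [flat]; exact indL_nil
  | [s] => fun _ hne => by
      rw [flat_cons, flat, List.flatMap_nil, List.append_nil]
      exact indL_map s.1 (hne s (by simp)).2
  | s :: t :: r => fun hst hne => by
      obtain ⟨hOK, hFar, hst'⟩ := hst
      obtain ⟨hGadj, z, hzl, hzh, hzint⟩ := hOK
      have IH : IndL (G □ H) (flat (t :: r)) :=
        stair_indL (t :: r) hst' (fun m hm => hne m (by simp [hm]))
      have hsInd : IndL H s.2 := (hne s (by simp)).2
      set f : β' → α' × β' := fun x => (s.1, x) with hf
      set A := s.2.map f with hAdef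
      have hA : IndL (G □ H) A := indL_map s.1 hsInd
      have hL : flat (s :: t :: r) = A ++ flat (t :: r) := flat_cons
      obtain ⟨s2i, hs2i⟩ := List.getLast?_eq_some_iff.mp hzl
      have hAdec : A = s2i.map f ++ [(s.1, z)] := by rw [hAdef, hs2i]; simp [hf]
      obtain ⟨R', hR'⟩ : ∃ R', flat (t :: r) = (t.1, z) :: R' := by
        refine ⟨(flat (t :: r)).tail, ?_⟩
        have h1 := head?_flat_cons (r := r) hzh
        rcases hflat : flat (t :: r) with _ | ⟨w, R'⟩
        · rw [hflat] at h1; simp at h1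
        · rw [hflat] at h1
          simp only [List.head?_cons, Option.some.injEq] at h1
          rw [h1]
          rfl
      have key : ∀ x ∈ A, ∀ y ∈ flat (t :: r),
          (G □ H).Adj x y → Step (flat (s :: t :: r)) x y := by
        intro x hx y hy hxy
        obtain ⟨w, hw, rfl⟩ := List.mem_map.mp hx
        obtain ⟨m, hm, hm1, hm2⟩ := mem_flat.mp hy
        rw [boxProd_adj] at hxy
        rcases hxy with ⟨h1, h2⟩ | ⟨h1, h2⟩
        · -- G-adjacent columns, same height
          rcases List.mem_cons.mp hm with rfl | hmr
          · -- crossing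
            have h2' : w = y.2 := h2
            have hwz : w = z := hzint w hw (by rw [h2']; exact hm2)
            have hy2 : y = (m.1, z) := Prod.ext hm1.symm (by rw [← h2', hwz])
            refine ⟨s2i.map f, R', ?_⟩
            rw [hL, hAdec, hR', hy2, hwz]
            simp [hf]
          · exfalso
            have hGsm : G.Adj s.1 m.1 := by rw [hm1]; exact h1
            have h2' : w = y.2 := h2
            exact ((hFar m hmr).2 hGsm) w hw (by rw [h2']; exact hm2)
        · -- same column
          exfalso
          have h2' : s.1 = y.1 := h2
          have h1' : H.Adj w y.2 := h1
          rcases List.mem_cons.mp hm with rfl | hmr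
          · exact hGadj.ne (h2'.trans hm1.symm)
          · exact ((hFar m hmr).1 (h2'.trans hm1.symm)).2 w hw y.2 hm2 h1'
      have hdisj : ∀ x ∈ A, x ∉ flat (t :: r) := by
        intro x hx hx2
        obtain ⟨w, hw, rfl⟩ := List.mem_map.mp hx
        obtain ⟨m, hm, hm1, hm2⟩ := mem_flat.mp hx2
        rcases List.mem_cons.mp hm with rfl | hmr
        · exact hGadj.ne hm1.symm
        · exact ((hFar m hmr).1 hm1.symm).1 w hw hm2
      rw [hL]
      refine ⟨?_, ?_, ?_⟩
      · refine List.isChain_append.mpr ⟨hA.chain', IH.chain', ?_⟩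
        intro x hx y hy
        have hx' : x = (s.1, z) := by
          rw [hAdec] at hx
          simp at hx
          exact hx.symm
        have hy' : y = (t.1, z) := by
          rw [hR'] at hy
          exact (by simpa using hy : _ = y).symm
        rw [hx', hy', boxProd_adj]
        exact Or.inl ⟨hGadj, rfl⟩
      · exact List.nodup_append'.mpr ⟨hA.nodup, IH.nodup, fun x hx => hdisj x hx⟩
      · intro x hx y hy hxy
        rcases List.mem_append.mp hx with hxA | hxR <;>
          rcases List.mem_append.mp hy with hyA | hyR
        · rcases hA.2.2 x hxA y hyA hxy with hs | hs
          · exact Or.inl hs.append_right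
          · exact Or.inr hs.append_right
        · exact Or.inl (by rw [← hL]; exact key x hxA y hyR hxy)
        · exact Or.inr (by rw [← hL]; exact key y hyA x hxR hxy.symm)
        · rcases IH.2.2 x hxR y hyR hxy with hs | hs
          · exact Or.inl hs.append_left
          · exact Or.inr hs.append_left

end Stair

section Helpers

variable {K : SimpleGraph V}

theorem head?_append_left {l₁ l₂ : List V} {a : V} (h : l₁.head? = some a) :
    (l₁ ++ l₂).head? = some a := by
  rcases l₁ with _ | ⟨x, t⟩
  · simp at h
  · simpa using h

theorem getLast?_append_right {l₁ l₂ : List V} {a : V} (h : l₂.getLast? = some a) :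
    (l₁ ++ l₂).getLast? = some a := by
  rw [List.getLast?_append, h]
  rfl

theorem head?_of_append {l₁ l₂ : List V} {a : V} (h : (l₁ ++ l₂).head? = some a)
    (hne : l₁ ≠ []) : l₁.head? = some a := by
  rcases l₁ with _ | ⟨x, t⟩
  · exact absurd rfl hne
  · simpa using h

theorem getLast?_of_append {l₁ l₂ : List V} {a : V} (h : (l₁ ++ l₂).getLast? = some a)
    (hne : l₂ ≠ []) : l₂.getLast? = some a := by
  rw [List.getLast?_append] at h
  rcases hx : l₂.getLast? with _ | z
  · exact absurd (List.getLast?_eq_none_iff.mp hx) hne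
  · rw [hx] at h
    simpa using h

theorem mem_of_head? {l : List V} {a : V} (h : l.head? = some a) : a ∈ l := by
  rcases l with _ | ⟨x, t⟩
  · simp at h
  · simp at h; simp [h]

theorem mem_of_getLast? {l : List V} {a : V} (h : l.getLast? = some a) : a ∈ l :=
  List.mem_of_mem_getLast? h

theorem ne_nil_of_head? {l : List V} {a : V} (h : l.head? = some a) : l ≠ [] := by
  rintro rfl; simp at h

/-- Mirror of `Step.eq_last`. -/
theorem step_eq_head {l : List V} {a b : V} (h : Step l a b)
    (hn : l.Nodup) (hl : l.head? = some a) : ∃ s, l = a :: b :: s := by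
  obtain ⟨p, s, rfl⟩ := h
  rcases p with _ | ⟨x, p⟩
  · exact ⟨s, rfl⟩
  · exfalso
    simp only [List.cons_append, List.head?_cons, Option.some.injEq] at hl
    rw [← hl] at hn
    have hn' : (x :: (p ++ x :: b :: s)).Nodup := by
      rw [List.cons_append] at hn; exact hn
    exact (List.nodup_cons.mp hn').1 (by simp)

/-- In an induced path list, a vertex adjacent to the last element is the
penultimate one; useful corollary: nothing in a strict "earlier part" is
adjacent to the last element. -/
theorem indL_not_adj_last {Q l₁ l₂ : List V} (hQ : IndL K Q) (hdec : Q = l₁ ++ l₂)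
    {q : V} (hlast : Q.getLast? = some q) (h2 : 2 ≤ l₂.length) {w : V} (hw : w ∈ l₁) :
    ¬K.Adj w q := by
  intro hadj
  have hl₂ne : l₂ ≠ [] := by rintro rfl; simp at h2
  have hql₂ : l₂.getLast? = some q := by
    rw [hdec, List.getLast?_append] at hlast
    rcases hx : l₂.getLast? with _ | z
    · exact absurd (List.getLast?_eq_none_iff.mp hx) hl₂ne
    · rw [hx] at hlast; simpa using hlast
  have hqmem : q ∈ l₂ := mem_of_getLast? hql₂
  have hdisj : ∀ x ∈ l₁, x ∉ l₂ := by
    intro x hx1 hx2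
    have := hQ.nodup
    rw [hdec] at this
    exact (List.disjoint_of_nodup_append this) hx1 hx2
  have hwq : w ∈ Q := by rw [hdec]; simp [hw]
  have hqQ : q ∈ Q := mem_of_getLast? hlast
  rcases hQ.2.2 w hwq q hqQ hadj with hs | hs
  · -- w immediately before q : q is last so Q = pre ++ [w, q]
    obtain ⟨pre, hpre⟩ := hs.eq_last hQ.nodup hlast
    obtain ⟨l₂', hl₂'⟩ := List.getLast?_eq_some_iff.mp hql₂
    have hl₂'ne : l₂' ≠ [] := by
      rintro rfl
      rw [hl₂'] at h2
      simp at h2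
    have hcancel : pre ++ [w] = l₁ ++ l₂' := by
      have he : (l₁ ++ l₂') ++ [q] = (pre ++ [w]) ++ [q] := by
        rw [List.append_assoc, ← hl₂', ← hdec, hpre]
        simp
      exact (List.append_cancel_right he).symm
    have hwlast : (l₁ ++ l₂').getLast? = some w := by
      rw [← hcancel]
      simp
    have hwl₂' : w ∈ l₂' := by
      have := hwlast
      rw [List.getLast?_append] at this
      rcases hx : l₂'.getLast? with _ | z
      · exact absurd (List.getLast?_eq_none_iff.mp hx) hl₂'ne
      · rw [hx] at this
        simp only [Option.some_or, Option.some.injEq] at this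
        subst this
        exact mem_of_getLast? hx
    exact hdisj w hw (by rw [hl₂']; simp [hwl₂'])
  · exact hs.not_getLast hQ.nodup hlast

theorem segOK_singleton_left {G : SimpleGraph α'} {c d : α'} {x : β'} {l : List β'}
    (h : G.Adj c d) (hl : l.head? = some x) : SegOK G (c, [x]) (d, l) := by
  refine ⟨h, x, rfl, hl, ?_⟩
  intro w hw _
  simpa using hw

theorem segOK_singleton_right {G : SimpleGraph α'} {c d : α'} {x : β'} {l : List β'}
    (h : G.Adj c d) (hl : l.getLast? = some x) : SegOK G (c, l) (d, [x]) := by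
  refine ⟨h, x, hl, rfl, ?_⟩
  intro w _ hw
  simpa using hw

theorem segFar_free {G : SimpleGraph α'} {H : SimpleGraph β'} {c d : α'}
    {l m : List β'} (hne : c ≠ d) (hnadj : ¬G.Adj c d) : SegFar G H (c, l) (d, m) :=
  ⟨fun h => absurd h hne, fun h => absurd h hnadj⟩

theorem segFar_same_col {G : SimpleGraph α'} {H : SimpleGraph β'} {c : α'}
    {l m : List β'} (hdisj : ∀ w ∈ l, w ∉ m) (hnoH : ∀ w ∈ l, ∀ v ∈ m, ¬H.Adj w v) :
    SegFar G H (c, l) (c, m) :=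
  ⟨fun _ => ⟨hdisj, hnoH⟩, fun h => absurd h G.irrefl⟩

theorem segFar_adj_col {G : SimpleGraph α'} {H : SimpleGraph β'} {c d : α'}
    {l m : List β'} (hne : c ≠ d) (hdisj : ∀ w ∈ l, w ∉ m) : SegFar G H (c, l) (d, m) :=
  ⟨fun h => absurd h hne, fun _ => hdisj⟩

theorem indL_triple {t₁ t₂ t₃ : V} (h13 : K.Adj t₁ t₃) (h32 : K.Adj t₃ t₂)
    (hn12 : ¬K.Adj t₁ t₂) (h12 : t₁ ≠ t₂) : IndL K [t₁, t₃, t₂] := by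
  refine ⟨by simp [List.Chain', h13, h32], by simp [h13.ne, h32.ne, h12], ?_⟩
  intro a ha b hb hab
  simp only [List.mem_cons, List.mem_singleton, List.not_mem_nil, or_false] at ha hb
  rcases ha with rfl | rfl | rfl <;> rcases hb with rfl | rfl | rfl
  · exact absurd hab K.irrefl
  · exact Or.inl ⟨[], [t₂], rfl⟩
  · exact absurd hab hn12
  · exact Or.inr ⟨[], [t₂], rfl⟩
  · exact absurd hab K.irrefl
  · exact Or.inl ⟨[t₁], [], rfl⟩
  · exact absurd (hab.symm) hn12
  · exact Or.inr ⟨[t₁], [], rfl⟩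
  · exact absurd hab K.irrefl

end Helpers

section Kill

variable {α' β' : Type*} {G : SimpleGraph α'} {H : SimpleGraph β'} {S : Set (α' × β')}

theorem kill (hS : (G □ H).IsMPSet S) {ss : List (α' × List β')}
    (hst : Stair G H ss) (hne : ∀ s ∈ ss, s.2 ≠ [] ∧ IndL H s.2)
    {a b c : α' × β'} (haS : a ∈ S) (hbS : b ∈ S) (hcS : c ∈ S)
    (hab : a ≠ b) (hac : a ≠ c) (hbc : b ≠ c)
    (haf : a ∈ flat ss) (hbf : b ∈ flat ss) (hcf : c ∈ flat ss) : False := by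
  have hind := stair_indL ss hst hne
  obtain ⟨x0, L', hL'⟩ : ∃ x0 L', flat ss = x0 :: L' := by
    cases h : flat ss with
    | nil => rw [h] at haf; simp at haf
    | cons x0 L' => exact ⟨x0, L', rfl⟩
  obtain ⟨e, p, hsup, hmono⟩ := exists_mono_walk (flat ss) hind x0 (by rw [hL']; rfl)
  have h2 := hS p hmono
  set T : Set (α' × β') := {x ∈ S | x ∈ p.support} with hT
  have h3 : ({a, b, c} : Set (α' × β')) ⊆ T := by
    intro x hx
    rcases hx with rfl | rfl | rfl
    · exact ⟨haS, by rw [hsup]; exact haf⟩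
    · exact ⟨hbS, by rw [hsup]; exact hbf⟩
    · exact ⟨hcS, by rw [hsup]; exact hcf⟩
  have hfin : T.Finite :=
    (p.support.finite_toSet).subset (fun x hx => hx.2)
  have habc : ({a, b, c} : Set (α' × β')).ncard = 3 := by
    rw [Set.ncard_insert_of_notMem (by simp [hab, hac])
      ((Set.finite_singleton c).insert b), Set.ncard_pair hbc]
  have h4 : 3 ≤ T.ncard := by
    rw [← habc]
    exact Set.ncard_le_ncard h3 hfin
  omega

end Kill

theorem mem_flat_of {α' β' : Type*} {ss : List (α' × List β')} {s : α' × List β'}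
    (hs : s ∈ ss) {h : β'} (hh : h ∈ s.2) : (s.1, h) ∈ flat ss :=
  mem_flat.mpr ⟨s, hs, rfl, hh⟩

section Shapes

variable {α β : Type*} {G : SimpleGraph α} {H : SimpleGraph β} {S : Set (α × β)}

/-- An induced-path list from `p` to `q`. -/
def GeoL (H : SimpleGraph β) (p q : β) (l : List β) : Prop :=
  IndL H l ∧ l.head? = some p ∧ l.getLast? = some q

theorem GeoL.memh {p q : β} {l : List β} (h : GeoL H p q l) : p ∈ l :=
  mem_of_head? h.2.1

theorem GeoL.meml {p q : β} {l : List β} (h : GeoL H p q l) : q ∈ l :=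
  mem_of_getLast? h.2.2

theorem exists_geoL (hH : H.Connected) (p q : β) : ∃ l, GeoL H p q l := by
  obtain ⟨l, h1, h2, h3⟩ := exists_geo hH p q
  exact ⟨l, h1, h2, h3⟩

/-- Shape P1 : `(g',h₁) – (g,h₁) – … – (g,h₂)` along a geodesic in column `g`. -/
theorem shapeP1 (hS : (G □ H).IsMPSet S) {g g' : α} {h₁ h₂ : β} {Q : List β}
    (hgg' : G.Adj g' g) (hQ : GeoL H h₁ h₂ Q) (h12 : h₁ ≠ h₂)
    (haS : (g, h₁) ∈ S) (hbS : (g, h₂) ∈ S) (hcS : (g', h₁) ∈ S) : False := by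
  refine kill hS (ss := [(g', [h₁]), (g, Q)]) ?_ ?_ haS hbS hcS
    (by simp [h12]) (by simp [hgg'.ne.symm]) (by simp [hgg'.ne.symm]) ?_ ?_ ?_
  · exact ⟨segOK_singleton_left hgg' hQ.2.1, by simp, trivial⟩
  · rintro s hs
    simp only [List.mem_cons, List.not_mem_nil, or_false] at hs
    rcases hs with rfl | rfl
    · exact ⟨by simp, indL_singleton _⟩
    · exact ⟨ne_nil_of_head? hQ.2.1, hQ.1⟩
  · exact mem_flat_of (s := (g, Q)) (by simp) hQ.memh
  · exact mem_flat_of (s := (g, Q)) (by simp) hQ.meml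
  · exact mem_flat_of (s := (g', [h₁])) (by simp) (by simp)

/-- Shape Z0 : `(g,h₂) – … – (g,h₁) – (g',h₁) – (g',h₃)` with `h₁ ~ h₃`. -/
theorem shapeZ0 (hS : (G □ H).IsMPSet S) {g g' : α} {h₁ h₂ h₃ : β} {Q : List β}
    (hgg' : G.Adj g g') (hQ : GeoL H h₂ h₁ Q) (h13 : H.Adj h₁ h₃) (h3Q : h₃ ∉ Q)
    (h12 : h₁ ≠ h₂) (h23 : h₂ ≠ h₃)
    (haS : (g, h₁) ∈ S) (hbS : (g, h₂) ∈ S) (hcS : (g', h₃) ∈ S) : False := by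
  refine kill hS (ss := [(g, Q), (g', [h₁, h₃])]) ?_ ?_ haS hbS hcS
    (by simp [h12]) (by simp [hgg'.ne]) (by simp [hgg'.ne]) ?_ ?_ ?_
  · refine ⟨⟨hgg', h₁, hQ.2.2, rfl, ?_⟩, by simp, trivial⟩
    intro w hw hw2
    simp only [List.mem_cons, List.mem_singleton, List.not_mem_nil, or_false] at hw2
    rcases hw2 with rfl | rfl
    · rfl
    · exact absurd hw h3Q
  · rintro s hs
    simp only [List.mem_cons, List.not_mem_nil, or_false] at hs
    rcases hs with rfl | rfl
    · exact ⟨ne_nil_of_head? hQ.2.1, hQ.1⟩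
    · exact ⟨by simp, indL_pair h13⟩
  · exact mem_flat_of (s := (g, Q)) (by simp) hQ.meml
  · exact mem_flat_of (s := (g, Q)) (by simp) hQ.memh
  · exact mem_flat_of (s := (g', [h₁, h₃])) (by simp) (by simp)

/-- Shape E2 : `(g',h₃) – … – (g',h₁) – (g,h₁) – (g,h₂)` with `h₁ ~ h₂`. -/
theorem shapeE2 (hS : (G □ H).IsMPSet S) {g g' : α} {h₁ h₂ h₃ : β} {R : List β}
    (hgg' : G.Adj g' g) (hR : GeoL H h₃ h₁ R) (h12 : H.Adj h₁ h₂) (h2R : h₂ ∉ R)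
    (h31 : h₃ ≠ h₁) (h32 : h₃ ≠ h₂)
    (haS : (g, h₁) ∈ S) (hbS : (g, h₂) ∈ S) (hcS : (g', h₃) ∈ S) : False := by
  refine kill hS (ss := [(g', R), (g, [h₁, h₂])]) ?_ ?_ haS hbS hcS
    (by simp [h12.ne]) (by simp [hgg'.ne.symm]) (by simp [hgg'.ne.symm]) ?_ ?_ ?_
  · refine ⟨⟨hgg', h₁, hR.2.2, rfl, ?_⟩, by simp, trivial⟩
    intro w hw hw2
    simp only [List.mem_cons, List.mem_singleton, List.not_mem_nil, or_false] at hw2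
    rcases hw2 with rfl | rfl
    · rfl
    · exact absurd hw h2R
  · rintro s hs
    simp only [List.mem_cons, List.not_mem_nil, or_false] at hs
    rcases hs with rfl | rfl
    · exact ⟨ne_nil_of_head? hR.2.1, hR.1⟩
    · exact ⟨by simp, indL_pair h12⟩
  · exact mem_flat_of (s := (g, [h₁, h₂])) (by simp) (by simp)
  · exact mem_flat_of (s := (g, [h₁, h₂])) (by simp) (by simp)
  · exact mem_flat_of (s := (g', R)) (by simp) hR.memh

/-- Shape E1 : `(g',h₃) – … – (g',h₂) – (g,h₂) – (g,h₁)`, used when the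
geodesic from `h₃` to `h₁` ends `…, h₂, h₁`. -/
theorem shapeE1 (hS : (G □ H).IsMPSet S) {g g' : α} {h₁ h₂ h₃ : β} {R : List β}
    (hgg' : G.Adj g' g) (hR : GeoL H h₃ h₁ R) (h12 : H.Adj h₁ h₂) (h2R : h₂ ∈ R)
    (h31 : h₃ ≠ h₁) (h32 : h₃ ≠ h₂)
    (haS : (g, h₁) ∈ S) (hbS : (g, h₂) ∈ S) (hcS : (g', h₃) ∈ S) : False := by
  -- R ends with [h₂, h₁]
  obtain ⟨pre, hpre⟩ : ∃ pre, R = pre ++ [h₂, h₁] := by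
    rcases hR.1.2.2 h₂ h2R h₁ hR.meml h12.symm with hs | hs
    · exact hs.eq_last hR.1.nodup hR.2.2
    · exact (hs.not_getLast hR.1.nodup hR.2.2).elim
  have hRe : pre ++ [h₂] ++ [h₁] = R := by rw [hpre]; simp
  have hIndpre : IndL H (pre ++ [h₂]) := by
    apply indL_append_left (l₂ := [h₁])
    rw [hRe]; exact hR.1
  have h1pre : h₁ ∉ pre ++ [h₂] := by
    have hnd : (pre ++ [h₂] ++ [h₁]).Nodup := by rw [hRe]; exact hR.1.nodup
    have hdj := List.disjoint_of_nodup_append hnd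
    intro hmem
    exact hdj hmem (by simp)
  refine kill hS (ss := [(g', pre ++ [h₂]), (g, [h₂, h₁])]) ?_ ?_ haS hbS hcS
    (by simp [h12.ne]) (by simp [hgg'.ne.symm]) (by simp [hgg'.ne.symm]) ?_ ?_ ?_
  · refine ⟨⟨hgg', h₂, by simp, rfl, ?_⟩, by simp, trivial⟩
    intro w hw hw2
    simp only [List.mem_cons, List.mem_singleton, List.not_mem_nil, or_false] at hw2
    rcases hw2 with rfl | rfl
    · rfl
    · exact absurd hw h1pre
  · rintro s hs
    simp only [List.mem_cons, List.not_mem_nil, or_false] at hs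
    rcases hs with rfl | rfl
    · exact ⟨by simp, hIndpre⟩
    · exact ⟨by simp, indL_pair h12.symm⟩
  · exact mem_flat_of (s := (g, [h₂, h₁])) (by simp) (by simp)
  · exact mem_flat_of (s := (g, [h₂, h₁])) (by simp) (by simp)
  · refine mem_flat_of (s := (g', pre ++ [h₂])) (by simp) ?_
    have h3R : h₃ ∈ R := hR.memh
    rw [hpre] at h3R
    rcases List.mem_append.mp h3R with h | h
    · simp [h]
    · simp only [List.mem_cons, List.mem_singleton, List.not_mem_nil, or_false] at h
      rcases h with rfl | rfl
      · simp
      · exact absurd rfl h31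

/-- SPLIT2 : pass from column `g` to `g'` just before `h₃` on a geodesic
`h₁ → h₂`, and hop back at the end. -/
theorem shapeSPLIT2 (hS : (G □ H).IsMPSet S) {g g' : α} {h₁ h₂ h₃ : β} {Q : List β}
    (hgg' : G.Adj g g') (hQ : GeoL H h₁ h₂ Q) (h3Q : h₃ ∈ Q)
    (h31 : h₃ ≠ h₁) (h32 : h₃ ≠ h₂) (h12 : h₁ ≠ h₂)
    (haS : (g, h₁) ∈ S) (hbS : (g, h₂) ∈ S) (hcS : (g', h₃) ∈ S) : False := by
  obtain ⟨Q₁, Q₂, hdec⟩ := List.append_of_mem h3Q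
  have hQ1ne : Q₁ ≠ [] := by
    rintro rfl
    have := hQ.2.1
    rw [hdec] at this
    simp at this
    exact h31 this
  obtain ⟨pp, hQ1l⟩ : ∃ pp, Q₁.getLast? = some pp := by
    rcases hq : Q₁.getLast? with _ | z
    · exact absurd (List.getLast?_eq_none_iff.mp hq) hQ1ne
    · exact ⟨z, rfl⟩
  obtain ⟨Q₁', hQ₁'⟩ := List.getLast?_eq_some_iff.mp hQ1l
  have hlast23 : (h₃ :: Q₂).getLast? = some h₂ :=
    getLast?_of_append (hdec ▸ hQ.2.2) (by simp)
  have h2mem : h₂ ∈ h₃ :: Q₂ := mem_of_getLast? hlast23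
  have hdisj : ∀ w ∈ Q₁, w ∉ h₃ :: Q₂ :=
    fun w hw => (List.disjoint_of_nodup_append (hdec ▸ hQ.1.nodup)) hw
  have hQ2ne : Q₂ ≠ [] := by
    rintro rfl
    simp only [List.mem_singleton, List.not_mem_nil, or_false, List.mem_cons] at h2mem
    exact h32 h2mem.symm
  have hnoH : ∀ w ∈ Q₁, ¬H.Adj w h₂ := by
    intro w hw
    refine indL_not_adj_last hQ.1 hdec hQ.2.2 ?_ hw
    rcases Q₂ with _ | ⟨z, t⟩
    · exact absurd rfl hQ2ne
    · simp
  have hIndQ1 : IndL H Q₁ := indL_append_left (hdec ▸ hQ.1)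
  have hIndsuf : IndL H (pp :: h₃ :: Q₂) := by
    have hd2 : Q = Q₁' ++ (pp :: h₃ :: Q₂) := by rw [hdec, hQ₁']; simp
    exact indL_append_right (hd2 ▸ hQ.1)
  have hh1Q1 : h₁ ∈ Q₁ := mem_of_head? (head?_of_append (hdec ▸ hQ.2.1) hQ1ne)
  refine kill hS (ss := [(g, Q₁), (g', pp :: h₃ :: Q₂), (g, [h₂])]) ?_ ?_ haS hbS hcS
    (by simp [h12]) (by simp [hgg'.ne]) (by simp [hgg'.ne]) ?_ ?_ ?_
  · refine ⟨⟨hgg', pp, hQ1l, rfl, ?_⟩, ?_, ⟨?_, by simp, trivial⟩⟩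
    · intro w hw hw2
      rcases List.mem_cons.mp hw2 with rfl | hw3
      · rfl
      · exact absurd hw3 (hdisj w hw)
    · rintro s hs
      simp only [List.mem_cons, List.not_mem_nil, or_false] at hs
      subst hs
      refine segFar_same_col ?_ ?_
      · intro v hv
        simp only [List.mem_singleton]
        rintro rfl
        exact hdisj v hv h2mem
      · intro v hv w hw
        simp only [List.mem_singleton] at hw
        subst hw
        exact hnoH v hv
    · refine segOK_singleton_right hgg'.symm ?_
      rw [List.getLast?_cons_cons]
      exact hlast23
  · rintro s hs
    simp only [List.mem_cons, List.not_mem_nil, or_false] at hs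
    rcases hs with rfl | rfl | rfl
    · exact ⟨hQ1ne, hIndQ1⟩
    · exact ⟨by simp, hIndsuf⟩
    · exact ⟨by simp, indL_singleton _⟩
  · exact mem_flat_of (s := (g, Q₁)) (by simp) hh1Q1
  · exact mem_flat_of (s := (g, [h₂])) (by simp) (by simp)
  · exact mem_flat_of (s := (g', pp :: h₃ :: Q₂)) (by simp) (by simp)

/-- SPLIT3 : geodesic from `h₂` to `h₃` through `h₁`; follow it in column `g`
until `h₁`, then cross to column `g'`. -/
theorem shapeSPLIT3 (hS : (G □ H).IsMPSet S) {g g' : α} {h₁ h₂ h₃ : β} {R : List β}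
    (hgg' : G.Adj g g') (hR : GeoL H h₂ h₃ R) (h1R : h₁ ∈ R)
    (h12 : h₁ ≠ h₂) (h13 : h₁ ≠ h₃)
    (haS : (g, h₁) ∈ S) (hbS : (g, h₂) ∈ S) (hcS : (g', h₃) ∈ S) : False := by
  obtain ⟨R₁, R₂, hdec⟩ := List.append_of_mem h1R
  have hR1ne : R₁ ≠ [] := by
    rintro rfl
    have := hR.2.1
    rw [hdec] at this
    simp at this
    exact h12 this
  have hdisj : ∀ w ∈ R₁, w ∉ h₁ :: R₂ :=
    fun w hw => (List.disjoint_of_nodup_append (hdec ▸ hR.1.nodup)) hw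
  have hIndL : IndL H (R₁ ++ [h₁]) := by
    have hd2 : R = (R₁ ++ [h₁]) ++ R₂ := by rw [hdec]; simp
    exact indL_append_left (hd2 ▸ hR.1)
  have hIndR : IndL H (h₁ :: R₂) := indL_append_right (hdec ▸ hR.1)
  have hh2R1 : h₂ ∈ R₁ := mem_of_head? (head?_of_append (hdec ▸ hR.2.1) hR1ne)
  have hh3R2 : h₃ ∈ h₁ :: R₂ := mem_of_getLast? (getLast?_of_append (hdec ▸ hR.2.2) (by simp))
  refine kill hS (ss := [(g, R₁ ++ [h₁]), (g', h₁ :: R₂)]) ?_ ?_ haS hbS hcS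
    (by simp [h12]) (by simp [hgg'.ne]) (by simp [hgg'.ne]) ?_ ?_ ?_
  · refine ⟨⟨hgg', h₁, by simp, rfl, ?_⟩, by simp, trivial⟩
    intro w hw hw2
    rcases List.mem_append.mp hw with hw1 | hw1
    · exact absurd hw2 (hdisj w hw1)
    · simpa using hw1
  · rintro s hs
    simp only [List.mem_cons, List.not_mem_nil, or_false] at hs
    rcases hs with rfl | rfl
    · exact ⟨by simp, hIndL⟩
    · exact ⟨by simp, hIndR⟩
  · exact mem_flat_of (s := (g, R₁ ++ [h₁])) (by simp) (by simp)
  · exact mem_flat_of (s := (g, R₁ ++ [h₁])) (by simp) (by simp [hh2R1])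
  · exact mem_flat_of (s := (g', h₁ :: R₂)) (by simp) hh3R2

/-- Shape D. -/
theorem shapeD (hS : (G □ H).IsMPSet S) {g g' w : α} {h₁ h₂ h₃ : β} {Q R : List β}
    (hwg : G.Adj w g) (hgg' : G.Adj g g') (hwg' : ¬G.Adj w g') (hwg'ne : w ≠ g')
    (hQ : GeoL H h₁ h₂ Q) (hR : GeoL H h₂ h₃ R)
    (h12a : ¬H.Adj h₁ h₂) (h12 : h₁ ≠ h₂) (h1R : h₁ ∉ R) (h13 : h₁ ≠ h₃)
    (h23 : h₂ ≠ h₃)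
    (haS : (g, h₁) ∈ S) (hbS : (g, h₂) ∈ S) (hcS : (g', h₃) ∈ S) : False := by
  refine kill hS (ss := [(g, [h₁]), (w, Q), (g, [h₂]), (g', R)]) ?_ ?_ haS hbS hcS
    (by simp [h12]) (by simp [hgg'.ne]) (by simp [hgg'.ne]) ?_ ?_ ?_
  · refine ⟨segOK_singleton_left hwg.symm hQ.2.1, ?_,
      segOK_singleton_right hwg hQ.2.2, ?_,
      segOK_singleton_left hgg' hR.2.1, by simp, trivial⟩
    · rintro s hs
      simp only [List.mem_cons, List.not_mem_nil, or_false] at hs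
      rcases hs with rfl | rfl
      · exact segFar_same_col (by simp [h12]) (by simpa using h12a)
      · exact segFar_adj_col hgg'.ne (by simpa using h1R)
    · rintro s hs
      simp only [List.mem_cons, List.not_mem_nil, or_false] at hs
      subst hs
      exact segFar_free hwg'ne hwg'
  · rintro s hs
    simp only [List.mem_cons, List.not_mem_nil, or_false] at hs
    rcases hs with rfl | rfl | rfl | rfl
    · exact ⟨by simp, indL_singleton _⟩
    · exact ⟨ne_nil_of_head? hQ.2.1, hQ.1⟩
    · exact ⟨by simp, indL_singleton _⟩
    · exact ⟨ne_nil_of_head? hR.2.1, hR.1⟩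
  · exact mem_flat_of (s := (g, [h₁])) (by simp) (by simp)
  · exact mem_flat_of (s := (g, [h₂])) (by simp) (by simp)
  · exact mem_flat_of (s := (g', R)) (by simp) hR.meml

/-- Shape D2. -/
theorem shapeD2 (hS : (G □ H).IsMPSet S) {g g' w₁ w₂ : α} {h₁ h₂ h₃ : β} {Q R : List β}
    (hw1g : G.Adj w₁ g) (hw2g : G.Adj w₂ g) (hw2g' : G.Adj w₂ g') (hgg' : G.Adj g g')
    (hw1w2 : ¬G.Adj w₁ w₂) (hw12 : w₁ ≠ w₂) (hw1g' : w₁ ≠ g')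
    (hQ : GeoL H h₁ h₂ Q) (hR : GeoL H h₂ h₃ R)
    (h12a : ¬H.Adj h₁ h₂) (h12 : h₁ ≠ h₂) (h13 : h₁ ≠ h₃) (h23 : h₂ ≠ h₃)
    (h1R : h₁ ∉ R) (h3Q : h₃ ∉ Q)
    (haS : (g, h₁) ∈ S) (hbS : (g, h₂) ∈ S) (hcS : (g', h₃) ∈ S) : False := by
  refine kill hS (ss := [(g, [h₁]), (w₁, Q), (g, [h₂]), (w₂, R), (g', [h₃])]) ?_ ?_
    haS hbS hcS (by simp [h12]) (by simp [hgg'.ne]) (by simp [hgg'.ne]) ?_ ?_ ?_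
  · refine ⟨segOK_singleton_left hw1g.symm hQ.2.1, ?_,
      segOK_singleton_right hw1g hQ.2.2, ?_,
      segOK_singleton_left hw2g.symm hR.2.1, ?_,
      segOK_singleton_right hw2g' hR.2.2, by simp, trivial⟩
    · rintro s hs
      simp only [List.mem_cons, List.not_mem_nil, or_false] at hs
      rcases hs with rfl | rfl | rfl
      · exact segFar_same_col (by simp [h12]) (by simpa using h12a)
      · exact segFar_adj_col hw2g.ne.symm (by simpa using h1R)
      · exact segFar_adj_col hgg'.ne (by simp [h13])
    · rintro s hs
      simp only [List.mem_cons, List.not_mem_nil, or_false] at hs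
      rcases hs with rfl | rfl
      · exact segFar_free hw12 hw1w2
      · refine segFar_adj_col hw1g' ?_
        intro v hv
        simp only [List.mem_singleton]
        rintro rfl
        exact h3Q hv
    · rintro s hs
      simp only [List.mem_cons, List.not_mem_nil, or_false] at hs
      subst hs
      exact segFar_adj_col hgg'.ne (by simp [h23])
  · rintro s hs
    simp only [List.mem_cons, List.not_mem_nil, or_false] at hs
    rcases hs with rfl | rfl | rfl | rfl | rfl
    · exact ⟨by simp, indL_singleton _⟩
    · exact ⟨ne_nil_of_head? hQ.2.1, hQ.1⟩
    · exact ⟨by simp, indL_singleton _⟩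
    · exact ⟨ne_nil_of_head? hR.2.1, hR.1⟩
    · exact ⟨by simp, indL_singleton _⟩
  · exact mem_flat_of (s := (g, [h₁])) (by simp) (by simp)
  · exact mem_flat_of (s := (g, [h₂])) (by simp) (by simp)
  · exact mem_flat_of (s := (g', [h₃])) (by simp) (by simp)

/-- Shape Z. -/
theorem shapeZ (hS : (G □ H).IsMPSet S) {g g' w : α} {h₁ h₂ h₃ : β} {Qr P : List β}
    (hgg' : G.Adj g g') (hwg' : G.Adj w g') (hwg : ¬G.Adj w g) (hwgne : w ≠ g)
    (hQr : GeoL H h₂ h₁ Qr) (hP : GeoL H h₁ h₃ P)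
    (h3Q : h₃ ∉ Qr) (h13a : ¬H.Adj h₁ h₃) (h13 : h₁ ≠ h₃) (h12 : h₁ ≠ h₂)
    (h23 : h₂ ≠ h₃)
    (haS : (g, h₁) ∈ S) (hbS : (g, h₂) ∈ S) (hcS : (g', h₃) ∈ S) : False := by
  refine kill hS (ss := [(g, Qr), (g', [h₁]), (w, P), (g', [h₃])]) ?_ ?_ haS hbS hcS
    (by simp [h12]) (by simp [hgg'.ne]) (by simp [hgg'.ne]) ?_ ?_ ?_
  · refine ⟨segOK_singleton_right hgg' hQr.2.2, ?_,
      segOK_singleton_left hwg'.symm hP.2.1, ?_,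
      segOK_singleton_right hwg' hP.2.2, by simp, trivial⟩
    · rintro s hs
      simp only [List.mem_cons, List.not_mem_nil, or_false] at hs
      rcases hs with rfl | rfl
      · exact segFar_free (Ne.symm hwgne) (fun h => hwg h.symm)
      · refine segFar_adj_col hgg'.ne ?_
        intro v hv
        simp only [List.mem_singleton]
        rintro rfl
        exact h3Q hv
    · rintro s hs
      simp only [List.mem_cons, List.not_mem_nil, or_false] at hs
      subst hs
      exact segFar_same_col (by simp [h13]) (by simpa using h13a)
  · rintro s hs
    simp only [List.mem_cons, List.not_mem_nil, or_false] at hs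
    rcases hs with rfl | rfl | rfl | rfl
    · exact ⟨ne_nil_of_head? hQr.2.1, hQr.1⟩
    · exact ⟨by simp, indL_singleton _⟩
    · exact ⟨ne_nil_of_head? hP.2.1, hP.1⟩
    · exact ⟨by simp, indL_singleton _⟩
  · exact mem_flat_of (s := (g, Qr)) (by simp) hQr.meml
  · exact mem_flat_of (s := (g, Qr)) (by simp) hQr.memh
  · exact mem_flat_of (s := (g', [h₃])) (by simp) (by simp)

/-- Shape A : induced path of length two inside one column. -/
theorem shapeA (hS : (G □ H).IsMPSet S) {u : α} {t₁ t₂ t₃ : β}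
    (h13 : H.Adj t₁ t₃) (h32 : H.Adj t₃ t₂) (h12a : ¬H.Adj t₁ t₂) (h12 : t₁ ≠ t₂)
    (haS : (u, t₁) ∈ S) (hbS : (u, t₂) ∈ S) (hcS : (u, t₃) ∈ S) : False := by
  refine kill hS (ss := [(u, [t₁, t₃, t₂])]) trivial ?_ haS hbS hcS
    (by simp [h12]) (by simp [h13.ne]) (by simp [h32.ne']) ?_ ?_ ?_
  · rintro s hs
    simp only [List.mem_cons, List.not_mem_nil, or_false] at hs
    subst hs
    exact ⟨by simp, indL_triple h13 h32 h12a h12⟩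
  · exact mem_flat_of (s := (u, [t₁, t₃, t₂])) (by simp) (by simp)
  · exact mem_flat_of (s := (u, [t₁, t₃, t₂])) (by simp) (by simp)
  · exact mem_flat_of (s := (u, [t₁, t₃, t₂])) (by simp) (by simp)

/-- Shape B. -/
theorem shapeB (hS : (G □ H).IsMPSet S) {u x : α} {t₁ t₂ t₃ : β} {Q : List β}
    (hux : G.Adj u x) (h23 : H.Adj t₂ t₃) (hn21 : ¬H.Adj t₂ t₁) (hn31 : ¬H.Adj t₃ t₁)
    (hQ : GeoL H t₃ t₁ Q) (h2Q : t₂ ∉ Q) (hne12 : t₁ ≠ t₂) (hne13 : t₁ ≠ t₃)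
    (haS : (u, t₁) ∈ S) (hbS : (u, t₂) ∈ S) (hcS : (u, t₃) ∈ S) : False := by
  refine kill hS (ss := [(u, [t₂, t₃]), (x, Q), (u, [t₁])]) ?_ ?_ haS hbS hcS
    (by simp [hne12]) (by simp [hne13]) (by simp [h23.ne]) ?_ ?_ ?_
  · refine ⟨⟨hux, t₃, by simp, hQ.2.1, ?_⟩, ?_,
      segOK_singleton_right hux.symm hQ.2.2, by simp, trivial⟩
    · intro w hw hw2
      simp only [List.mem_cons, List.mem_singleton, List.not_mem_nil, or_false] at hw
      rcases hw with rfl | rfl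
      · exact absurd hw2 h2Q
      · rfl
    · rintro s hs
      simp only [List.mem_cons, List.not_mem_nil, or_false] at hs
      subst hs
      refine segFar_same_col ?_ ?_
      · intro v hv
        simp only [List.mem_cons, List.mem_singleton, List.not_mem_nil, or_false] at hv
        rcases hv with rfl | rfl
        · simp [Ne.symm hne12]
        · simp [Ne.symm hne13]
      · intro v hv z hz
        simp only [List.mem_cons, List.mem_singleton, List.not_mem_nil, or_false] at hv hz
        subst hz
        rcases hv with rfl | rfl
        · exact hn21
        · exact hn31
  · rintro s hs
    simp only [List.mem_cons, List.not_mem_nil, or_false] at hs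
    rcases hs with rfl | rfl | rfl
    · exact ⟨by simp, indL_pair h23⟩
    · exact ⟨ne_nil_of_head? hQ.2.1, hQ.1⟩
    · exact ⟨by simp, indL_singleton _⟩
  · exact mem_flat_of (s := (u, [t₁])) (by simp) (by simp)
  · exact mem_flat_of (s := (u, [t₂, t₃])) (by simp) (by simp)
  · exact mem_flat_of (s := (u, [t₂, t₃])) (by simp) (by simp)

/-- Shape C5 : the generic five-segment double-corridor shape. -/
theorem shapeC5 (hS : (G □ H).IsMPSet S) {u x y : α} {pm mm qm : β} {L₁ L₂ : List β}
    (hux : G.Adj u x) (huy : G.Adj u y) (hxy : ¬G.Adj x y) (hxyne : x ≠ y)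
    (hL₁ : GeoL H pm mm L₁) (hL₂ : GeoL H mm qm L₂)
    (hpm : ¬H.Adj pm mm) (hpq : ¬H.Adj pm qm) (hmq : ¬H.Adj mm qm)
    (hne1 : pm ≠ mm) (hne2 : pm ≠ qm) (hne3 : mm ≠ qm)
    (hpL₂ : pm ∉ L₂) (hqL₁ : qm ∉ L₁)
    (haS : (u, pm) ∈ S) (hbS : (u, mm) ∈ S) (hcS : (u, qm) ∈ S) : False := by
  refine kill hS (ss := [(u, [pm]), (x, L₁), (u, [mm]), (y, L₂), (u, [qm])]) ?_ ?_
    haS hbS hcS (by simp [hne1]) (by simp [hne2]) (by simp [hne3]) ?_ ?_ ?_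
  · refine ⟨segOK_singleton_left hux hL₁.2.1, ?_,
      segOK_singleton_right hux.symm hL₁.2.2, ?_,
      segOK_singleton_left huy hL₂.2.1, ?_,
      segOK_singleton_right huy.symm hL₂.2.2, by simp, trivial⟩
    · rintro s hs
      simp only [List.mem_cons, List.not_mem_nil, or_false] at hs
      rcases hs with rfl | rfl | rfl
      · exact segFar_same_col (by simp [hne1]) (by simpa using hpm)
      · exact segFar_adj_col huy.ne (by simpa using hpL₂)
      · exact segFar_same_col (by simp [hne2]) (by simpa using hpq)
    · rintro s hs
      simp only [List.mem_cons, List.not_mem_nil, or_false] at hs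
      rcases hs with rfl | rfl
      · exact segFar_free hxyne hxy
      · refine segFar_adj_col (Ne.symm hux.ne) ?_
        intro v hv
        simp only [List.mem_singleton]
        rintro rfl
        exact hqL₁ hv
    · rintro s hs
      simp only [List.mem_cons, List.not_mem_nil, or_false] at hs
      subst hs
      exact segFar_same_col (by simp [hne3]) (by simpa using hmq)
  · rintro s hs
    simp only [List.mem_cons, List.not_mem_nil, or_false] at hs
    rcases hs with rfl | rfl | rfl | rfl | rfl
    · exact ⟨by simp, indL_singleton _⟩
    · exact ⟨ne_nil_of_head? hL₁.2.1, hL₁.1⟩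
    · exact ⟨by simp, indL_singleton _⟩
    · exact ⟨ne_nil_of_head? hL₂.2.1, hL₂.1⟩
    · exact ⟨by simp, indL_singleton _⟩
  · exact mem_flat_of (s := (u, [pm])) (by simp) (by simp)
  · exact mem_flat_of (s := (u, [mm])) (by simp) (by simp)
  · exact mem_flat_of (s := (u, [qm])) (by simp) (by simp)

theorem GeoL.rev {p q : β} {l : List β} (h : GeoL H p q l) : GeoL H q p l.reverse :=
  ⟨h.1.reverse, by rw [List.head?_reverse]; exact h.2.2,
    by rw [List.getLast?_reverse]; exact h.2.1⟩

/-- Case B of the one-column situation. -/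
theorem caseB (hS : (G □ H).IsMPSet S) (hH : H.Connected) {u x : α} {t₁ t₂ t₃ : β}
    (hux : G.Adj u x) (h23 : H.Adj t₂ t₃)
    (hn12 : ¬H.Adj t₁ t₂) (hn13 : ¬H.Adj t₁ t₃)
    (ne12 : t₁ ≠ t₂) (ne13 : t₁ ≠ t₃)
    (haS : (u, t₁) ∈ S) (hbS : (u, t₂) ∈ S) (hcS : (u, t₃) ∈ S) : False := by
  obtain ⟨Q, hQ⟩ := exists_geoL hH t₃ t₁
  by_cases h2Q : t₂ ∈ Q
  · obtain ⟨suf, hsuf⟩ : ∃ suf, Q = t₃ :: t₂ :: suf := by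
      rcases hQ.1.2.2 t₂ h2Q t₃ hQ.memh h23 with hs | hs
      · exact ((hs.reverse').not_getLast (List.nodup_reverse.mpr hQ.1.nodup)
          (by rw [List.getLast?_reverse]; exact hQ.2.1)).elim
      · exact step_eq_head hs hQ.1.nodup hQ.2.1
    have hQ' : GeoL H t₂ t₁ (t₂ :: suf) := by
      refine ⟨indL_append_right (l₁ := [t₃]) ?_, rfl, ?_⟩
      · have : Q = [t₃] ++ (t₂ :: suf) := by rw [hsuf]; rfl
        exact this ▸ hQ.1
      · have := hQ.2.2
        rw [hsuf, List.getLast?_cons_cons] at this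
        exact this
    have h3Q' : t₃ ∉ t₂ :: suf := by
      have := hQ.1.nodup
      rw [hsuf] at this
      exact (List.nodup_cons.mp this).1
    exact shapeB hS hux h23.symm (fun h => hn13 h.symm) (fun h => hn12 h.symm)
      hQ' h3Q' ne13 ne12 haS hcS hbS
  · exact shapeB hS hux h23 (fun h => hn12 h.symm) (fun h => hn13 h.symm)
      hQ h2Q ne12 ne13 haS hbS hcS

/-- Case C-split of the one-column situation. -/
theorem caseCsplit (hS : (G □ H).IsMPSet S) {u x y : α} {p q r : β} {Q : List β}
    (hux : G.Adj u x) (huy : G.Adj u y) (hxy : ¬G.Adj x y) (hxyne : x ≠ y)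
    (hQ : GeoL H p q Q) (hrQ : r ∈ Q)
    (hnpq : ¬H.Adj p q) (hnpr : ¬H.Adj p r) (hnrq : ¬H.Adj r q)
    (nepq : p ≠ q) (nepr : p ≠ r) (nerq : r ≠ q)
    (hpS : (u, p) ∈ S) (hqS : (u, q) ∈ S) (hrS : (u, r) ∈ S) : False := by
  obtain ⟨Q₁, Q₂, hdec⟩ := List.append_of_mem hrQ
  have hQ1ne : Q₁ ≠ [] := by
    rintro rfl
    have := hQ.2.1
    rw [hdec] at this
    simp at this
    exact nepr this.symm
  have hdisj : ∀ w ∈ Q₁, w ∉ r :: Q₂ :=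
    fun w hw => (List.disjoint_of_nodup_append (hdec ▸ hQ.1.nodup)) hw
  have hL₁ : GeoL H p r (Q₁ ++ [r]) := by
    refine ⟨?_, head?_append_left (head?_of_append (hdec ▸ hQ.2.1) hQ1ne), by simp⟩
    have hd2 : Q = (Q₁ ++ [r]) ++ Q₂ := by rw [hdec]; simp
    exact indL_append_left (hd2 ▸ hQ.1)
  have hL₂ : GeoL H r q (r :: Q₂) :=
    ⟨indL_append_right (hdec ▸ hQ.1), rfl, getLast?_of_append (hdec ▸ hQ.2.2) (by simp)⟩
  have hpmem : p ∈ Q₁ := mem_of_head? (head?_of_append (hdec ▸ hQ.2.1) hQ1ne)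
  have hqmem : q ∈ r :: Q₂ := mem_of_getLast? (getLast?_of_append (hdec ▸ hQ.2.2) (by simp))
  have hpL₂ : p ∉ r :: Q₂ := hdisj p hpmem
  have hqL₁ : q ∉ Q₁ ++ [r] := by
    intro hmem
    rcases List.mem_append.mp hmem with h | h
    · exact hdisj q h hqmem
    · simp only [List.mem_singleton] at h
      exact nerq.symm h
  exact shapeC5 hS hux huy hxy hxyne hL₁ hL₂ hnpr hnpq hnrq nepr nepq
    nerq hpL₂ hqL₁ hpS hrS hqS

/-- Case C of the one-column situation. -/
theorem caseC (hS : (G □ H).IsMPSet S) (hH : H.Connected) {u x y : α} {t₁ t₂ t₃ : β}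
    (hux : G.Adj u x) (huy : G.Adj u y) (hxy : ¬G.Adj x y) (hxyne : x ≠ y)
    (hn12 : ¬H.Adj t₁ t₂) (hn13 : ¬H.Adj t₁ t₃) (hn23 : ¬H.Adj t₂ t₃)
    (ne12 : t₁ ≠ t₂) (ne13 : t₁ ≠ t₃) (ne23 : t₂ ≠ t₃)
    (haS : (u, t₁) ∈ S) (hbS : (u, t₂) ∈ S) (hcS : (u, t₃) ∈ S) : False := by
  obtain ⟨Q, hQ⟩ := exists_geoL hH t₁ t₂
  by_cases h3Q : t₃ ∈ Q
  · exact caseCsplit hS hux huy hxy hxyne hQ h3Q hn12 hn13 (fun h => hn23 h.symm)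
      ne12 ne13 (Ne.symm ne23) haS hbS hcS
  obtain ⟨R, hR⟩ := exists_geoL hH t₂ t₃
  by_cases h1R : t₁ ∈ R
  · exact caseCsplit hS hux huy hxy hxyne hR h1R hn23 (fun h => hn12 h.symm)
      hn13 ne23 (Ne.symm ne12) ne13 hbS hcS haS
  · exact shapeC5 hS hux huy hxy hxyne hQ hR hn12 hn13 hn23 ne12 ne13 ne23 h1R h3Q
      haS hbS hcS

/-- The whole two-column case. -/
theorem caseC2 (hS : (G □ H).IsMPSet S) (hH : H.Connected) {g g' x y : α}
    {h₁ h₂ h₃ : β}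
    (hgg' : G.Adj g g') (hxy : ¬G.Adj x y) (hxyne : x ≠ y)
    (hwit : (G.Adj g x ∧ G.Adj g y) ∨ (G.Adj g' x ∧ G.Adj g' y))
    (h12 : h₁ ≠ h₂) (h13 : h₁ ≠ h₃) (h23 : h₂ ≠ h₃)
    (haS : (g, h₁) ∈ S) (hbS : (g, h₂) ∈ S) (hcS : (g', h₃) ∈ S) : False := by
  obtain ⟨Q, hQ⟩ := exists_geoL hH h₁ h₂
  by_cases h3Q : h₃ ∈ Q
  · exact shapeSPLIT2 hS hgg' hQ h3Q (Ne.symm h13) (Ne.symm h23) h12 haS hbS hcS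
  by_cases hA13 : H.Adj h₁ h₃
  · exact shapeZ0 hS hgg' hQ.rev hA13 (by simpa using h3Q) h12 h23 haS hbS hcS
  by_cases hA23 : H.Adj h₂ h₃
  · exact shapeZ0 hS hgg' hQ hA23 h3Q (Ne.symm h12) h13 hbS haS hcS
  by_cases hA12 : H.Adj h₁ h₂
  · obtain ⟨R', hR'⟩ := exists_geoL hH h₃ h₁
    by_cases h2R' : h₂ ∈ R'
    · exact shapeE1 hS hgg'.symm hR' hA12 h2R' (Ne.symm h13) (Ne.symm h23) haS hbS hcS
    · exact shapeE2 hS hgg'.symm hR' hA12 h2R' (Ne.symm h13) (Ne.symm h23) haS hbS hcS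
  obtain ⟨R, hR⟩ := exists_geoL hH h₂ h₃
  by_cases h1R : h₁ ∈ R
  · exact shapeSPLIT3 hS hgg' hR h1R h12 h13 haS hbS hcS
  rcases hwit with ⟨hgx, hgy⟩ | ⟨hg'x, hg'y⟩
  · -- x, y are non-adjacent neighbours of g
    by_cases hxg' : ¬G.Adj x g' ∧ x ≠ g'
    · exact shapeD hS hgx.symm hgg' hxg'.1 hxg'.2 hQ hR hA12 h12 h1R h13 h23
        haS hbS hcS
    by_cases hyg' : ¬G.Adj y g' ∧ y ≠ g'
    · exact shapeD hS hgy.symm hgg' hyg'.1 hyg'.2 hQ hR hA12 h12 h1R h13 h23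
        haS hbS hcS
    · push_neg at hxg' hyg'
      have hx' : G.Adj x g' := by
        by_contra hc
        have hxe : x = g' := hxg' hc
        by_cases h : G.Adj y g'
        · rw [← hxe] at h
          exact hxy h.symm
        · exact hxyne (hxe.trans (hyg' h).symm)
      have hy' : G.Adj y g' := by
        by_contra hc
        have hye : y = g' := hyg' hc
        rw [hye] at hxy
        exact hxy hx'
      exact shapeD2 hS hgx.symm hgy.symm hy' hgg' hxy hxyne hx'.ne hQ hR
        hA12 h12 h13 h23 h1R h3Q haS hbS hcS
  · -- x, y are non-adjacent neighbours of g'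
    by_cases hxg : ¬G.Adj x g ∧ x ≠ g
    · obtain ⟨P, hP⟩ := exists_geoL hH h₁ h₃
      exact shapeZ hS hgg' hg'x.symm hxg.1 hxg.2 hQ.rev hP (by simpa using h3Q)
        hA13 h13 h12 h23 haS hbS hcS
    by_cases hyg : ¬G.Adj y g ∧ y ≠ g
    · obtain ⟨P, hP⟩ := exists_geoL hH h₁ h₃
      exact shapeZ hS hgg' hg'y.symm hyg.1 hyg.2 hQ.rev hP (by simpa using h3Q)
        hA13 h13 h12 h23 haS hbS hcS
    · push_neg at hxg hyg
      have hx' : G.Adj x g := by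
        by_contra hc
        have hxe : x = g := hxg hc
        by_cases h : G.Adj y g
        · rw [← hxe] at h
          exact hxy h.symm
        · exact hxyne (hxe.trans (hyg h).symm)
      have hy' : G.Adj y g := by
        by_contra hc
        have hye : y = g := hyg hc
        rw [hye] at hxy
        exact hxy hx'
      exact shapeD2 hS hx' hy' hg'y.symm hgg' hxy hxyne hg'x.ne' hQ hR
        hA12 h12 h13 h23 h1R h3Q haS hbS hcS

end Shapes

end MpAux

open MpAux in
/-- If `S` is a monophonic position set of `G □ H` with
`|S| > max {ω(G), ω(H)}` such that `π_G(S)` induces a clique in `G`, then every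
vertex of `π_G(S)` is a simplicial vertex of `G`. -/
theorem mpSet_fst_clique_simplicial {α β : Type*} [Fintype α] [Fintype β]
    (G : SimpleGraph α) (H : SimpleGraph β) (hG : G.Connected) (hH : H.Connected)
    (S : Set (α × β)) (hS : (G □ H).IsMPSet S)
    (hbig : max G.cliqueNum H.cliqueNum < S.ncard)
    (hclique : G.IsClique (Prod.fst '' S)) :
    ∀ u ∈ Prod.fst '' S, G.IsClique (G.neighborSet u) := by
  classical
  intro u hu
  by_contra hns
  rw [SimpleGraph.isClique_iff, Set.Pairwise] at hns
  push_neg at hns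
  obtain ⟨x, hx, y, hy, hxyne, hxy⟩ := hns
  rw [SimpleGraph.mem_neighborSet] at hx hy
  -- `G` has an edge, so its clique number is at least 2, hence `|S| ≥ 3`.
  have hG2 : 2 ≤ G.cliqueNum := by
    have hcl : G.IsClique (↑({u, x} : Finset α) : Set α) := by
      rw [Finset.coe_insert, Finset.coe_singleton]
      intro a ha b hb hne
      simp only [Set.mem_insert_iff, Set.mem_singleton_iff] at ha hb
      rcases ha with rfl | rfl <;> rcases hb with rfl | rfl
      · exact absurd rfl hne
      · exact hx
      · exact hx.symm
      · exact absurd rfl hne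
    have hcard : ({u, x} : Finset α).card = 2 := Finset.card_pair hx.ne
    have h1 := SimpleGraph.IsClique.card_le_cliqueNum (tc := hcl)
    omega
  have hS3 : 3 ≤ S.ncard := by
    have := le_max_left G.cliqueNum H.cliqueNum
    omega
  have hSfin : S.Finite := Set.toFinite S
  -- pigeonhole: some column contains two points of `S`
  have hCle : (Prod.fst '' S).ncard ≤ G.cliqueNum := by
    have hfin : (Prod.fst '' S).Finite := hSfin.image _
    have hcl2 : G.IsClique (↑hfin.toFinset : Set α) := by
      rwa [Set.Finite.coe_toFinset]
    have h1 := SimpleGraph.IsClique.card_le_cliqueNum (tc := hcl2)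
    rwa [Set.ncard_eq_toFinset_card _ hfin]
  obtain ⟨g, h₁, h₂, haS, hbS, h12⟩ :
      ∃ g h₁ h₂, (g, h₁) ∈ S ∧ (g, h₂) ∈ S ∧ h₁ ≠ h₂ := by
    by_contra hc
    push_neg at hc
    have hinj : Set.InjOn Prod.fst S := by
      rintro ⟨a1, a2⟩ ha ⟨b1, b2⟩ hb hab
      simp only at hab
      subst hab
      have := hc a1 a2 b2 ha hb
      rw [this]
    have heq := Set.ncard_image_of_injOn hinj
    have := le_max_left G.cliqueNum H.cliqueNum
    omega
  have hgmem : g ∈ Prod.fst '' S := ⟨(g, h₁), haS, rfl⟩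
  by_cases hall : ∀ s ∈ S, s.1 = g
  · -- layered case: everything is in column `g` and `u = g`.
    have hug : u = g := by
      obtain ⟨s, hsS, hsu⟩ := hu
      rw [← hsu]
      exact hall s hsS
    subst hug
    have hsndinj : Set.InjOn Prod.snd S := by
      rintro ⟨a1, a2⟩ ha ⟨b1, b2⟩ hb hab
      simp only at hab
      subst hab
      have h1 := hall _ ha
      have h2 := hall _ hb
      simp only at h1 h2
      rw [Prod.ext_iff]
      exact ⟨h1.trans h2.symm, rfl⟩
    have hTcard : (Prod.snd '' S).ncard = S.ncard := Set.ncard_image_of_injOn hsndinj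
    have hTnc : ¬H.IsClique (Prod.snd '' S) := by
      intro hcl
      have hfin : (Prod.snd '' S).Finite := hSfin.image _
      have hcl2 : H.IsClique (↑hfin.toFinset : Set β) := by
        rwa [Set.Finite.coe_toFinset]
      have h1 := SimpleGraph.IsClique.card_le_cliqueNum (tc := hcl2)
      rw [← Set.ncard_eq_toFinset_card _ hfin] at h1
      have := le_max_right G.cliqueNum H.cliqueNum
      omega
    rw [SimpleGraph.isClique_iff, Set.Pairwise] at hTnc
    push_neg at hTnc
    obtain ⟨t₁, ht₁, t₂, ht₂, hne12, hnadj12⟩ := hTnc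
    have hmemT : ∀ t : β, t ∈ Prod.snd '' S → (u, t) ∈ S := by
      rintro t ⟨s, hsS, hs2⟩
      have h1 := hall s hsS
      have : s = (u, t) := Prod.ext h1 hs2
      rwa [← this]
    have hgt₁ : (u, t₁) ∈ S := hmemT t₁ ht₁
    have hgt₂ : (u, t₂) ∈ S := hmemT t₂ ht₂
    obtain ⟨s₃, hs₃S, hs₃1, hs₃2⟩ : ∃ s ∈ S, s ≠ (u, t₁) ∧ s ≠ (u, t₂) := by
      by_contra hc
      push_neg at hc
      have hsub : S ⊆ {(u, t₁), (u, t₂)} := by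
        intro s hs
        by_cases h : s = (u, t₁)
        · exact Or.inl h
        · exact Or.inr (hc s hs h)
      have h1 := Set.ncard_le_ncard hsub (by
        exact (Set.finite_singleton _).insert _)
      have h2 : ({(u, t₁), (u, t₂)} : Set (α × β)).ncard ≤ 2 := by
        have := Set.ncard_insert_le (u, t₁) ({(u, t₂)} : Set (α × β))
        simpa using this
      omega
    have hs₃col : s₃.1 = u := hall s₃ hs₃S
    set t₃ := s₃.2 with ht₃def
    have hgt₃ : (u, t₃) ∈ S := by
      have : s₃ = (u, t₃) := Prod.ext hs₃col rfl
      rwa [← this]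
    have hne13 : t₁ ≠ t₃ := by
      rintro rfl
      exact hs₃1 (Prod.ext hs₃col rfl)
    have hne23 : t₂ ≠ t₃ := by
      rintro rfl
      exact hs₃2 (Prod.ext hs₃col rfl)
    by_cases hA13 : H.Adj t₁ t₃ <;> by_cases hA23 : H.Adj t₂ t₃
    · exact shapeA hS hA13 hA23.symm hnadj12 hne12 hgt₁ hgt₂ hgt₃
    · exact caseB hS hH hx hA13 (fun h => hnadj12 h.symm) hA23 hne12.symm hne23
        hgt₂ hgt₁ hgt₃
    · exact caseB hS hH hx hA23 hnadj12 hA13 hne12 hne13 hgt₁ hgt₂ hgt₃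
    · exact caseC hS hH hx hy hxy hxyne hnadj12 hA13 hA23 hne12 hne13 hne23
        hgt₁ hgt₂ hgt₃
  · -- two-column case
    push_neg at hall
    obtain ⟨s₀, hs₀S, hs₀g⟩ := hall
    obtain ⟨su, hsuS, hsu1⟩ := hu
    -- choose the third point `c`
    have hchoice : ∃ c ∈ S, c.1 ≠ g ∧ (u = g ∨ u = c.1) := by
      by_cases hug : u = g
      · exact ⟨s₀, hs₀S, hs₀g, Or.inl hug⟩
      · exact ⟨su, hsuS, by rw [hsu1]; exact hug, Or.inr hsu1.symm⟩
    obtain ⟨c, hcS, hcg, huor⟩ := hchoice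
    set g' := c.1 with hg'def
    set h₃ := c.2 with h₃def
    have hcS' : (g', h₃) ∈ S := by
      have : c = (g', h₃) := rfl
      rwa [← this]
    have hg'mem : g' ∈ Prod.fst '' S := ⟨c, hcS, rfl⟩
    have hgg' : G.Adj g g' := hclique hgmem hg'mem (Ne.symm hcg)
    -- degenerate heights: P1
    by_cases h31 : h₃ = h₁
    · obtain ⟨Q, hQ⟩ := exists_geoL hH h₁ h₂
      exact shapeP1 hS hgg'.symm hQ h12 haS hbS (h31 ▸ hcS')
    by_cases h32 : h₃ = h₂
    · obtain ⟨Q, hQ⟩ := exists_geoL hH h₂ h₁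
      exact shapeP1 hS hgg'.symm hQ h12.symm hbS haS (h32 ▸ hcS')
    -- main two-column case
    have hwit : (G.Adj g x ∧ G.Adj g y) ∨ (G.Adj g' x ∧ G.Adj g' y) := by
      rcases huor with rfl | rfl
      · exact Or.inl ⟨hx, hy⟩
      · exact Or.inr ⟨hx, hy⟩
    exact caseC2 hS hH hgg' hxy hxyne hwit h12 (Ne.symm h31) (Ne.symm h32)
      haS hbS hcS'
end
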